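/- arXiv:0909.0887 — 6 statements merged into one kernel-verified Lean document; each statement's English description precedes it below -/
import Mathlib

section
/- Fix an integer r ≥ 2, a constant c > 0, and a sequence p_n ∈ (0,1) such that n·p_n^{(r−1)/2} → c as n → ∞. Set λ = c^r / r!. Then for every integer k ≥ 0, the probability under the Erdős–Rényi random graph G(n,p_n) that N_r(Γ) = k converges, as n → ∞, to e^{−λ}·λ^k / k!. That is, the number of r-element complete subgraphs of a random graph converges in distribution to a Poisson random variable with mean λ. -/
open Finset Filter

noncomputable section

/-- The type of potential edges: unordered pairs of distinct vertices of `{1,…,n}`. -/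
def EdgeType (n : ℕ) : Type := {e : Sym2 (Fin n) // ¬ e.IsDiag}

instance (n : ℕ) : DecidableEq (EdgeType n) := Subtype.instDecidableEq
instance (n : ℕ) : Fintype (EdgeType n) := Subtype.fintype _

/-- A (simple) graph on the vertex set `{1,…,n}`, given by its set of edges. -/
abbrev RGraph (n : ℕ) := Finset (EdgeType n)

/-- The probability of the graph `Γ` under the Erdős–Rényi measure `G(n,p)`:
`p^{e(Γ)} (1-p)^{C(n,2) - e(Γ)}`. -/
def wt (n : ℕ) (p : ℝ) (Γ : RGraph n) : ℝ :=
  p ^ Γ.card * (1 - p) ^ (n.choose 2 - Γ.card)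

/-- `S` induces a complete subgraph of `Γ`: every pair of distinct vertices of `S`
is joined by an edge of `Γ`. -/
def IsCliqueIn (n : ℕ) (Γ : RGraph n) (S : Finset (Fin n)) : Prop :=
  ∀ v ∈ S, ∀ w ∈ S, ∀ h : v ≠ w,
    (⟨s(v, w), by simpa [Sym2.mk_isDiag_iff] using h⟩ : EdgeType n) ∈ Γ

/-- Expectation of `f` under `G(n,p)`. -/
def EV (n : ℕ) (p : ℝ) (f : RGraph n → ℝ) : ℝ := ∑ Γ : RGraph n, wt n p Γ * f Γ

open Classical in
/-- Probability of the event `A` under `G(n,p)`. -/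
def Pr (n : ℕ) (p : ℝ) (A : RGraph n → Prop) : ℝ :=
  ∑ Γ ∈ Finset.univ.filter A, wt n p Γ

open Classical in
/-- `N_r(Γ)`: the number of `r`-element vertex subsets inducing a complete subgraph of `Γ`. -/
def Nr (n r : ℕ) (Γ : RGraph n) : ℕ :=
  ((Finset.univ : Finset (Finset (Fin n))).filter
    (fun S => S.card = r ∧ IsCliqueIn n Γ S)).card

namespace ER

lemma sum_pow_mass {α : Type*} [DecidableEq α] (q : ℝ) (s : Finset α) :
    ∑ t ∈ s.powerset, q ^ t.card * (1 - q) ^ (s.card - t.card) = 1 := by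
  have h := Finset.prod_add (fun _ : α => q) (fun _ : α => 1 - q) s
  have h1 : (∏ _i ∈ s, (q + (1 - q))) = 1 := by simp
  rw [h1] at h
  calc ∑ t ∈ s.powerset, q ^ t.card * (1 - q) ^ (s.card - t.card)
      = ∑ t ∈ s.powerset, (∏ _i ∈ t, q) * ∏ _i ∈ s \ t, (1 - q) := by
        refine Finset.sum_congr rfl fun t ht => ?_
        rw [Finset.prod_const, Finset.prod_const,
          Finset.card_sdiff_of_subset (Finset.mem_powerset.mp ht)]
    _ = 1 := h.symm

lemma sum_wt_subset {α : Type*} [DecidableEq α] [Fintype α] (q : ℝ) (E₀ : Finset α) :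
    ∑ Γ : Finset α, (q ^ Γ.card * (1 - q) ^ (Fintype.card α - Γ.card)) *
      (if E₀ ⊆ Γ then (1:ℝ) else 0) = q ^ E₀.card := by
  classical
  have hs : ∀ Γ : Finset α, (q ^ Γ.card * (1 - q) ^ (Fintype.card α - Γ.card)) *
      (if E₀ ⊆ Γ then (1:ℝ) else 0) =
      (if E₀ ⊆ Γ then q ^ Γ.card * (1 - q) ^ (Fintype.card α - Γ.card) else 0) := by
    intro Γ; by_cases h : E₀ ⊆ Γ <;> simp [h]
  rw [Finset.sum_congr rfl (fun Γ _ => hs Γ), ← Finset.sum_filter]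
  have key : ∑ Γ ∈ univ.filter (fun Γ : Finset α => E₀ ⊆ Γ),
      q ^ Γ.card * (1 - q) ^ (Fintype.card α - Γ.card)
      = ∑ Δ ∈ (univ \ E₀).powerset,
        q ^ E₀.card * (q ^ Δ.card * (1 - q) ^ ((Fintype.card α - E₀.card) - Δ.card)) := by
    refine Finset.sum_nbij' (fun Γ => Γ \ E₀) (fun Δ => E₀ ∪ Δ) ?_ ?_ ?_ ?_ ?_
    · intro Γ hΓ
      simp only [Finset.mem_filter] at hΓ
      simp only [Finset.mem_powerset]
      exact fun x hx => by
        simp only [Finset.mem_sdiff] at hx ⊢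
        exact ⟨Finset.mem_univ x, hx.2⟩
    · intro Δ _
      simp only [Finset.mem_filter]
      exact ⟨Finset.mem_univ _, Finset.subset_union_left⟩
    · intro Γ hΓ
      simp only [Finset.mem_filter] at hΓ
      exact Finset.union_sdiff_of_subset hΓ.2
    · intro Δ hΔ
      simp only [Finset.mem_powerset] at hΔ
      have hd : Disjoint E₀ Δ := by
        refine Finset.disjoint_left.mpr fun x hx hx' => ?_
        have := hΔ hx'
        simp only [Finset.mem_sdiff] at this
        exact this.2 hx
      show (E₀ ∪ Δ) \ E₀ = Δ
      rw [Finset.union_sdiff_cancel_left hd]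
    · intro Γ hΓ
      simp only [Finset.mem_filter] at hΓ
      have hsub := hΓ.2
      have h1 : E₀.card ≤ Γ.card := Finset.card_le_card hsub
      have hcard : Γ.card = E₀.card + (Γ \ E₀).card := by
        rw [Finset.card_sdiff_of_subset hsub]; omega
      have h2 : Fintype.card α - Γ.card
          = Fintype.card α - E₀.card - (Γ \ E₀).card := by omega
      show _ = _
      rw [h2, hcard, pow_add]
      ring
  rw [key, ← Finset.mul_sum]
  have hc : (univ \ E₀).card = Fintype.card α - E₀.card := by
    rw [Finset.card_sdiff_of_subset (Finset.subset_univ _), Finset.card_univ]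
  rw [← hc, sum_pow_mass, mul_one]



lemma card_edgeType (n : ℕ) : Fintype.card (EdgeType n) = n.choose 2 := by
  have := Sym2.card_subtype_not_diag (α := Fin n)
  simp only [Fintype.card_fin] at this
  convert this
  rfl

/-- Underlying `Sym2` of an edge. -/
def ev {n : ℕ} : EdgeType n → Sym2 (Fin n) := Subtype.val

lemma ev_nd {n : ℕ} (e : EdgeType n) : ¬ (ev e).IsDiag := e.2

/-- The edges within a vertex set `S`. -/
def edgeF (n : ℕ) (S : Finset (Fin n)) : Finset (EdgeType n) :=
  univ.filter (fun e => ev e ∈ S.sym2)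

lemma mem_edgeF {n : ℕ} {S : Finset (Fin n)} {e : EdgeType n} :
    e ∈ edgeF n S ↔ ∀ a ∈ ev e, a ∈ S := by
  simp [edgeF, Finset.mem_sym2_iff]

lemma edgeF_inter {n : ℕ} (S T : Finset (Fin n)) :
    edgeF n (S ∩ T) = edgeF n S ∩ edgeF n T := by
  ext e
  simp only [mem_edgeF, Finset.mem_inter]
  exact ⟨fun h => ⟨fun a ha => (h a ha).1, fun a ha => (h a ha).2⟩,
    fun h a ha => ⟨h.1 a ha, h.2 a ha⟩⟩

lemma edgeF_mono {n : ℕ} {S T : Finset (Fin n)} (h : S ⊆ T) :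
    edgeF n S ⊆ edgeF n T := fun e he =>
  mem_edgeF.mpr fun a ha => h (mem_edgeF.mp he a ha)

lemma card_edgeF {n : ℕ} (S : Finset (Fin n)) :
    (edgeF n S).card = S.card.choose 2 := by
  classical
  have hbij : (edgeF n S).card = (S.sym2.filter (fun z => ¬ z.IsDiag)).card := by
    refine Finset.card_bij (fun e _ => ev e) ?_ ?_ ?_
    · intro e he
      simp only [Finset.mem_filter]
      exact ⟨Finset.mem_sym2_iff.mpr (mem_edgeF.mp he), e.2⟩
    · intro e₁ _ e₂ _ h
      exact Subtype.ext h
    · intro z hz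
      simp only [Finset.mem_filter] at hz
      exact ⟨⟨z, hz.2⟩, mem_edgeF.mpr (Finset.mem_sym2_iff.mp hz.1), rfl⟩
  have hdiag : (S.sym2.filter (fun z => Sym2.IsDiag z)) = S.image (fun a => s(a, a)) := by
    ext z
    induction z using Sym2.ind with
    | _ a b =>
      simp only [Finset.mem_filter, Finset.mk_mem_sym2_iff, Sym2.mk_isDiag_iff,
        Finset.mem_image]
      constructor
      · rintro ⟨⟨ha, hb⟩, rfl⟩
        exact ⟨a, ha, rfl⟩
      · rintro ⟨x, hx, h⟩
        have h1 : x = a ∧ x = b := by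
          rw [Sym2.eq_iff] at h
          tauto
        rcases h1 with ⟨rfl, rfl⟩
        exact ⟨⟨hx, hx⟩, rfl⟩
  have hcard_diag : (S.sym2.filter (fun z => Sym2.IsDiag z)).card = S.card := by
    rw [hdiag]
    refine Finset.card_image_of_injective _ ?_
    intro a b h
    rw [Sym2.eq_iff] at h
    tauto
  have hsplit := Finset.card_filter_add_card_filter_not
    (s := S.sym2) (p := fun z => Sym2.IsDiag z)
  have hsym2 := Finset.card_sym2 S
  have hpascal : (S.card + 1).choose 2 = S.card.choose 1 + S.card.choose 2 :=
    Nat.choose_succ_succ _ _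
  have h1 : S.card.choose 1 = S.card := Nat.choose_one_right _
  omega

lemma isCliqueIn_iff {n : ℕ} {Γ : RGraph n} {S : Finset (Fin n)} :
    IsCliqueIn n Γ S ↔ edgeF n S ⊆ Γ := by
  constructor
  · intro h e he
    obtain ⟨z, hz⟩ := e
    induction z using Sym2.ind with
    | _ a b =>
      have hab : a ≠ b := by simpa [Sym2.mk_isDiag_iff] using hz
      have hmem := mem_edgeF.mp he
      have hev : ev (⟨s(a, b), hz⟩ : EdgeType n) = s(a, b) := rfl
      rw [hev] at hmem
      have ha : a ∈ S := hmem a (Sym2.mem_mk_left a b)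
      have hb : b ∈ S := hmem b (Sym2.mem_mk_right a b)
      exact h a ha b hb hab
  · intro h v hv w hw hvw
    refine h ?_
    apply mem_edgeF.mpr
    intro a ha
    replace ha : a ∈ s(v, w) := ha
    rw [Sym2.mem_iff] at ha
    rcases ha with rfl | rfl <;> assumption


def SS (n r : ℕ) : Finset (Finset (Fin n)) := Finset.univ.powersetCard r

def edges (n : ℕ) (A : Finset (Finset (Fin n))) : Finset (EdgeType n) :=
  A.biUnion (edgeF n)

def Bsum (n r t : ℕ) (q : ℝ) : ℝ :=
  ∑ A ∈ (SS n r).powersetCard t, q ^ (edges n A).card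

lemma mem_SS {n r : ℕ} {S : Finset (Fin n)} : S ∈ SS n r ↔ S.card = r := by
  simp [SS, Finset.mem_powersetCard_univ]

lemma sum_wt_mul_ind (n : ℕ) (q : ℝ) (E₀ : Finset (EdgeType n)) :
    ∑ Γ : RGraph n, wt n q Γ * (if E₀ ⊆ Γ then (1:ℝ) else 0) = q ^ E₀.card := by
  have h := sum_wt_subset (α := EdgeType n) q E₀
  rw [card_edgeType] at h
  simpa [wt] using h

open Classical in
lemma choose_Nr (n r t : ℕ) (Γ : RGraph n) :
    ((Nr n r Γ).choose t : ℝ)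
      = ∑ A ∈ (SS n r).powersetCard t, (if edges n A ⊆ Γ then (1:ℝ) else 0) := by
  rw [Finset.sum_boole]
  norm_cast
  have h1 : Nr n r Γ = ((SS n r).filter (fun S => edgeF n S ⊆ Γ)).card := by
    unfold Nr
    congr 1
    ext S
    simp only [Finset.mem_filter, Finset.mem_univ, true_and, mem_SS, isCliqueIn_iff]
  rw [h1, ← Finset.card_powersetCard]
  congr 1
  ext A
  simp only [Finset.mem_powersetCard, Finset.mem_filter]
  constructor
  · intro ⟨hsub, hcard⟩
    refine ⟨⟨fun S hS => (Finset.mem_filter.mp (hsub hS)).1, hcard⟩, ?_⟩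
    rw [edges]
    exact Finset.biUnion_subset.mpr fun S hS => (Finset.mem_filter.mp (hsub hS)).2
  · intro ⟨⟨hsub, hcard⟩, hedges⟩
    refine ⟨fun S hS => Finset.mem_filter.mpr ⟨hsub hS, ?_⟩, hcard⟩
    exact fun e he => hedges (Finset.mem_biUnion.mpr ⟨S, hS, he⟩)

lemma EV_choose (n r t : ℕ) (q : ℝ) :
    EV n q (fun Γ => ((Nr n r Γ).choose t : ℝ)) = Bsum n r t q := by
  unfold EV Bsum
  calc ∑ Γ : RGraph n, wt n q Γ * ((Nr n r Γ).choose t : ℝ)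
      = ∑ Γ : RGraph n, ∑ A ∈ (SS n r).powersetCard t,
          wt n q Γ * (if edges n A ⊆ Γ then (1:ℝ) else 0) := by
        refine Finset.sum_congr rfl fun Γ _ => ?_
        rw [choose_Nr, Finset.mul_sum]
    _ = ∑ A ∈ (SS n r).powersetCard t, ∑ Γ : RGraph n,
          wt n q Γ * (if edges n A ⊆ Γ then (1:ℝ) else 0) := Finset.sum_comm
    _ = _ := Finset.sum_congr rfl fun A _ => sum_wt_mul_ind n q (edges n A)

lemma wt_nonneg {n : ℕ} {q : ℝ} (h0 : 0 ≤ q) (h1 : q ≤ 1) (Γ : RGraph n) :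
    0 ≤ wt n q Γ := by
  unfold wt
  have : (0:ℝ) ≤ 1 - q := by linarith
  positivity

open Classical in
lemma Pr_eq_EV (n : ℕ) (q : ℝ) (A : RGraph n → Prop) [DecidablePred A] :
    Pr n q A = EV n q (fun Γ => if A Γ then (1:ℝ) else 0) := by
  unfold Pr EV
  rw [Finset.sum_filter]
  refine Finset.sum_congr rfl fun Γ _ => ?_
  by_cases h : A Γ <;> simp [h]

lemma abs_EV_le {n : ℕ} {q : ℝ} (h0 : 0 ≤ q) (h1 : q ≤ 1) {f g : RGraph n → ℝ}
    (h : ∀ Γ, |f Γ| ≤ g Γ) : |EV n q f| ≤ EV n q g := by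
  unfold EV
  calc |∑ Γ : RGraph n, wt n q Γ * f Γ| ≤ ∑ Γ : RGraph n, |wt n q Γ * f Γ| :=
        Finset.abs_sum_le_sum_abs _ _
    _ ≤ ∑ Γ : RGraph n, wt n q Γ * g Γ := by
        refine Finset.sum_le_sum fun Γ _ => ?_
        rw [abs_mul, abs_of_nonneg (wt_nonneg h0 h1 Γ)]
        exact mul_le_mul_of_nonneg_left (h Γ) (wt_nonneg h0 h1 Γ)

lemma EV_sum {n : ℕ} {q : ℝ} {ι : Type*} (s : Finset ι) (F : ι → RGraph n → ℝ) :
    EV n q (fun Γ => ∑ j ∈ s, F j Γ) = ∑ j ∈ s, EV n q (F j) := by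
  unfold EV
  rw [Finset.sum_comm]
  exact Finset.sum_congr rfl fun Γ _ => Finset.mul_sum _ _ _

lemma EV_const_mul {n : ℕ} {q : ℝ} (c : ℝ) (f : RGraph n → ℝ) :
    EV n q (fun Γ => c * f Γ) = c * EV n q f := by
  unfold EV
  rw [Finset.mul_sum]
  exact Finset.sum_congr rfl fun Γ _ => by ring


lemma EV_sub {n : ℕ} {q : ℝ} (f g : RGraph n → ℝ) :
    EV n q f - EV n q g = EV n q (fun Γ => f Γ - g Γ) := by
  unfold EV
  rw [← Finset.sum_sub_distrib]
  exact Finset.sum_congr rfl fun Γ _ => by ring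

lemma alt_sum_choose (M J : ℕ) (hM : 1 ≤ M) :
    ∑ j ∈ Finset.range (J+1), (-1:ℝ)^j * (M.choose j)
      = (-1)^J * ((M-1).choose J) := by
  induction J with
  | zero => simp
  | succ J ih =>
    rw [Finset.sum_range_succ, ih]
    obtain ⟨M', rfl⟩ : ∃ M', M = M' + 1 := ⟨M - 1, by omega⟩
    have h : (M' + 1).choose (J + 1) = M'.choose J + M'.choose (J+1) :=
      Nat.choose_succ_succ _ _
    simp only [Nat.add_sub_cancel] at *
    rw [h]
    push_cast
    ring

lemma bonferroni_pointwise (N k J : ℕ) :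
    |(∑ j ∈ Finset.range (J+1), (-1:ℝ)^j * ((k+j).choose k) * (N.choose (k+j)))
      - (if N = k then (1:ℝ) else 0)|
      ≤ ((k+J+1).choose k) * (N.choose (k+J+1)) := by
  have key : ∀ j : ℕ, (((k+j).choose k : ℝ)) * (N.choose (k+j))
      = (N.choose k) * ((N-k).choose j) := by
    intro j
    by_cases hj : k + j ≤ N
    · have := Nat.choose_mul (n := N) (k := k + j) (s := k) (Nat.le_add_right k j)
      rw [Nat.add_sub_cancel_left] at this
      have := congrArg (fun m : ℕ => (m : ℝ)) this
      push_cast at this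
      linarith [this]
    · have h1 : N.choose (k+j) = 0 := Nat.choose_eq_zero_of_lt (by omega)
      by_cases hk : k ≤ N
      · simp [h1, Nat.choose_eq_zero_of_lt (show N - k < j by omega)]
      · simp [h1, Nat.choose_eq_zero_of_lt (show N < k by omega)]
  have hsum : (∑ j ∈ Finset.range (J+1), (-1:ℝ)^j * ((k+j).choose k) * (N.choose (k+j)))
      = (N.choose k : ℝ) * ∑ j ∈ Finset.range (J+1), (-1:ℝ)^j * ((N-k).choose j) := by
    rw [Finset.mul_sum]
    refine Finset.sum_congr rfl fun j _ => ?_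
    rw [mul_assoc, key j]
    ring
  rcases lt_trichotomy N k with h | rfl | h
  · have hz : N.choose k = 0 := Nat.choose_eq_zero_of_lt h
    rw [hsum, hz, if_neg (by omega : ¬ N = k)]
    simp only [Nat.cast_zero, zero_mul, sub_zero, abs_zero]
    positivity
  · have hNk : N - N = 0 := Nat.sub_self N
    rw [hsum, hNk, if_pos rfl]
    have : ∑ j ∈ Finset.range (J+1), (-1:ℝ)^j * ((0 : ℕ).choose j) = 1 := by
      rw [Finset.sum_eq_single 0]
      · simp
      · intro j _ hj
        have : (0:ℕ).choose j = 0 := Nat.choose_eq_zero_of_lt (by omega)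
        simp [this]
      · intro h; exact absurd (Finset.mem_range.mpr (by omega)) h
    rw [this, Nat.choose_self]
    simp only [Nat.cast_one, one_mul, sub_self, abs_zero]
    positivity
  · have hM : 1 ≤ N - k := by omega
    rw [hsum, alt_sum_choose _ _ hM, if_neg (by omega : ¬ N = k)]
    have habs : |(N.choose k : ℝ) * ((-1:ℝ)^J * ((N-k-1).choose J)) - 0|
        = (N.choose k : ℝ) * ((N-k-1).choose J) := by
      rw [sub_zero, abs_mul, abs_mul, abs_pow, abs_neg, abs_one, one_pow, one_mul,
        Nat.abs_cast, Nat.abs_cast]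
    rw [habs]
    have hnat : N.choose k * ((N-k-1).choose J) ≤ (k+J+1).choose k * (N.choose (k+J+1)) := by
      have h1 : (N-k-1).choose J ≤ (N-k).choose (J+1) := by
        obtain ⟨M', hM'⟩ : ∃ M', N - k = M' + 1 := ⟨N - k - 1, by omega⟩
        rw [hM', Nat.choose_succ_succ]
        simp [show N - k - 1 = M' by omega]
      have h2 : N.choose k * ((N-k).choose (J+1)) = N.choose (k+J+1) * ((k+J+1).choose k) := by
        by_cases hj : k + (J+1) ≤ N
        · have := Nat.choose_mul (n := N) (k := k + (J+1)) (s := k) (Nat.le_add_right _ _)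
          rw [Nat.add_sub_cancel_left] at this
          rw [show k + (J + 1) = k + J + 1 from by omega] at this
          exact this.symm
        · have hz1 : N.choose (k + J + 1) = 0 := Nat.choose_eq_zero_of_lt (by omega)
          have hz2 : (N-k).choose (J+1) = 0 := Nat.choose_eq_zero_of_lt (by omega)
          simp [hz1, hz2]
      calc N.choose k * ((N-k-1).choose J) ≤ N.choose k * ((N-k).choose (J+1)) :=
            Nat.mul_le_mul_left _ h1
        _ = (k+J+1).choose k * (N.choose (k+J+1)) := by rw [h2]; ring
    calc ((N.choose k : ℝ)) * ((N-k-1).choose J)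
        = ((N.choose k * ((N-k-1).choose J) : ℕ) : ℝ) := by push_cast; ring
      _ ≤ (((k+J+1).choose k * (N.choose (k+J+1)) : ℕ) : ℝ) := by exact_mod_cast hnat
      _ = _ := by push_cast; ring

open Classical in
lemma bonferroni_EV (n r k J : ℕ) (q : ℝ) (h0 : 0 ≤ q) (h1 : q ≤ 1) :
    |Pr n q (fun Γ => Nr n r Γ = k)
      - ∑ j ∈ Finset.range (J+1), (-1:ℝ)^j * ((k+j).choose k) * Bsum n r (k+j) q|
      ≤ ((k+J+1).choose k) * Bsum n r (k+J+1) q := by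
  have hPr : Pr n q (fun Γ => Nr n r Γ = k)
      = EV n q (fun Γ => if Nr n r Γ = k then (1:ℝ) else 0) := Pr_eq_EV n q _
  have hT : ∑ j ∈ Finset.range (J+1), (-1:ℝ)^j * ((k+j).choose k) * Bsum n r (k+j) q
      = EV n q (fun Γ => ∑ j ∈ Finset.range (J+1),
          (-1:ℝ)^j * ((k+j).choose k) * ((Nr n r Γ).choose (k+j) : ℝ)) := by
    rw [EV_sum]
    refine Finset.sum_congr rfl fun j _ => ?_
    have : (fun Γ => (-1:ℝ)^j * ((k+j).choose k) * ((Nr n r Γ).choose (k+j) : ℝ))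
        = (fun Γ => ((-1:ℝ)^j * ((k+j).choose k)) * ((Nr n r Γ).choose (k+j) : ℝ)) := by
      funext Γ; ring
    rw [this, EV_const_mul, EV_choose]
  rw [hPr, hT, EV_sub]
  have hbd : ∀ Γ : RGraph n,
      |(if Nr n r Γ = k then (1:ℝ) else 0) - ∑ j ∈ Finset.range (J+1),
          (-1:ℝ)^j * ((k+j).choose k) * ((Nr n r Γ).choose (k+j) : ℝ)|
        ≤ ((k+J+1).choose k : ℝ) * ((Nr n r Γ).choose (k+J+1) : ℝ) := by
    intro Γ
    rw [abs_sub_comm]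
    exact bonferroni_pointwise (Nr n r Γ) k J
  have := abs_EV_le h0 h1 (n := n) (q := q) hbd
  calc |EV n q fun Γ => (if Nr n r Γ = k then (1:ℝ) else 0) - ∑ j ∈ Finset.range (J+1),
          (-1:ℝ)^j * ((k+j).choose k) * ((Nr n r Γ).choose (k+j) : ℝ)| ≤
      EV n q (fun Γ => ((k+J+1).choose k : ℝ) * ((Nr n r Γ).choose (k+J+1) : ℝ)) := this
    _ = ((k+J+1).choose k) * Bsum n r (k+J+1) q := by rw [EV_const_mul, EV_choose]


def VV (n : ℕ) (A : Finset (Finset (Fin n))) : Finset (Fin n) := A.biUnion id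

def Good (n : ℕ) (A : Finset (Finset (Fin n))) : Prop :=
  ∀ S ∈ A, ∀ T ∈ A, S ≠ T → (S ∩ T).card ≤ 1

lemma card_edges_le {n r : ℕ} {A : Finset (Finset (Fin n))} (hA : ∀ S ∈ A, S.card = r) :
    (edges n A).card ≤ A.card * r.choose 2 := by
  rw [edges]
  calc (A.biUnion (edgeF n)).card ≤ ∑ S ∈ A, (edgeF n S).card := Finset.card_biUnion_le
    _ = ∑ S ∈ A, r.choose 2 := Finset.sum_congr rfl fun S hS => by
        rw [card_edgeF, hA S hS]
    _ = A.card * r.choose 2 := by rw [Finset.sum_const, smul_eq_mul]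

lemma card_edges_good {n r : ℕ} {A : Finset (Finset (Fin n))} (hA : ∀ S ∈ A, S.card = r)
    (hg : Good n A) : (edges n A).card = A.card * r.choose 2 := by
  rw [edges, Finset.card_biUnion]
  · rw [Finset.sum_congr rfl fun S hS => by rw [card_edgeF, hA S hS],
      Finset.sum_const, smul_eq_mul]
  · intro S hS T hT hST
    have h1 : edgeF n S ∩ edgeF n T = edgeF n (S ∩ T) := (edgeF_inter S T).symm
    have h2 : (edgeF n (S ∩ T)).card = 0 := by
      rw [card_edgeF]
      exact Nat.choose_eq_zero_of_lt (by have := hg S hS T hT hST; omega)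
    rw [Function.onFun, Finset.disjoint_iff_inter_eq_empty, h1]
    exact Finset.card_eq_zero.mp h2

lemma card_edges_insert {n r : ℕ} {A : Finset (Finset (Fin n))} {S : Finset (Fin n)}
    (hS : S.card = r) :
    (edges n A).card + (r.choose 2 - ((S ∩ VV n A).card).choose 2)
      ≤ (edges n (insert S A)).card := by
  classical
  have h1 : edges n (insert S A) = edgeF n S ∪ edges n A := by
    rw [edges, edges, Finset.biUnion_insert]
  have h2 : (edgeF n S ∪ edges n A).card = (edgeF n S \ edges n A).card + (edges n A).card :=
    (Finset.card_sdiff_add_card _ _).symm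
  have h3 : edgeF n S \ edgeF n (S ∩ VV n A) ⊆ edgeF n S \ edges n A := by
    intro e he
    rw [Finset.mem_sdiff] at he ⊢
    refine ⟨he.1, fun hmem => he.2 ?_⟩
    rw [edges, Finset.mem_biUnion] at hmem
    obtain ⟨T, hT, heT⟩ := hmem
    rw [mem_edgeF] at *
    intro a ha
    rw [Finset.mem_inter]
    exact ⟨he.1 a ha, by
      rw [VV, Finset.mem_biUnion]
      exact ⟨T, hT, heT a ha⟩⟩
  have h4 : (edgeF n S \ edgeF n (S ∩ VV n A)).card
      = r.choose 2 - ((S ∩ VV n A).card).choose 2 := by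
    rw [Finset.card_sdiff_of_subset (edgeF_mono Finset.inter_subset_left), card_edgeF, card_edgeF, hS]
  have h5 := Finset.card_le_card h3
  have h6 : (edges n (insert S A)).card = (edgeF n S \ edges n A).card + (edges n A).card := by
    rw [h1]; exact h2
  omega

lemma card_inter_count {n r : ℕ} (U : Finset (Fin n)) (s : ℕ) :
    ((SS n r).filter (fun S => (S ∩ U).card = s)).card
      ≤ U.card.choose s * n.choose (r - s) := by
  classical
  have hle := Finset.card_le_card_of_injOn (f := fun S : Finset (Fin n) => (S ∩ U, S \ U))
    (t := (U.powersetCard s) ×ˢ ((Finset.univ : Finset (Fin n)).powersetCard (r - s)))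
    (s := (SS n r).filter (fun S => (S ∩ U).card = s)) ?_ ?_
  · calc ((SS n r).filter (fun S => (S ∩ U).card = s)).card
        ≤ ((U.powersetCard s) ×ˢ ((Finset.univ : Finset (Fin n)).powersetCard (r-s))).card :=
          hle
      _ = U.card.choose s * n.choose (r - s) := by
          rw [Finset.card_product, Finset.card_powersetCard, Finset.card_powersetCard,
            Finset.card_univ, Fintype.card_fin]
  · intro S hS
    rw [Finset.mem_coe, Finset.mem_filter] at hS
    obtain ⟨hS1, hS2⟩ := hS
    rw [Finset.mem_coe, Finset.mem_product, Finset.mem_powersetCard, Finset.mem_powersetCard]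
    have hcard : S.card = r := mem_SS.mp hS1
    have hint : (S ∩ U).card + (S \ U).card = S.card := Finset.card_inter_add_card_sdiff S U
    refine ⟨⟨Finset.inter_subset_right, hS2⟩, Finset.subset_univ _, ?_⟩
    show (S \ U).card = r - s
    omega
  · intro S _ T _ h
    simp only [Prod.mk.injEq] at h
    have := congrArg₂ (fun a b : Finset (Fin n) => a ∪ b) h.2 h.1
    simpa [Finset.sdiff_union_inter] using this

lemma sum_image_le' {α β : Type*} [DecidableEq β] (s : Finset α) (g : α → β) (f : β → ℝ)
    (hf : ∀ b, 0 ≤ f b) : ∑ b ∈ s.image g, f b ≤ ∑ a ∈ s, f (g a) := by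
  classical
  induction s using Finset.induction_on with
  | empty => simp
  | @insert a s ha ih =>
    rw [Finset.image_insert, Finset.sum_insert ha]
    by_cases h : g a ∈ s.image g
    · rw [Finset.insert_eq_self.mpr h]
      linarith [hf (g a)]
    · rw [Finset.sum_insert h]
      linarith

lemma sum_le_of_surj {α β : Type*} [DecidableEq β] {f : β → ℝ} (hf : ∀ b, 0 ≤ f b)
    {s : Finset α} {t : Finset β} {g : α → β} (h : ∀ b ∈ t, ∃ a ∈ s, g a = b) :
    ∑ b ∈ t, f b ≤ ∑ a ∈ s, f (g a) := by
  classical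
  have h1 : t ⊆ s.image g := by
    intro b hb
    rw [Finset.mem_image]
    obtain ⟨a, ha, rfl⟩ := h b hb
    exact ⟨a, ha, rfl⟩
  calc ∑ b ∈ t, f b ≤ ∑ b ∈ s.image g, f b :=
        Finset.sum_le_sum_of_subset_of_nonneg h1 (fun b _ _ => hf b)
    _ ≤ ∑ a ∈ s, f (g a) := sum_image_le' s g f hf


open Classical in
def BadSum (n r t : ℕ) (x : ℝ) : ℝ :=
  ∑ A ∈ ((SS n r).powersetCard t).filter (fun A => ¬ Good n A), x ^ (edges n A).card

open Classical in
lemma Bsum_split (n r t : ℕ) {x : ℝ} (hx0 : 0 ≤ x) (hx1 : x ≤ 1) :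
    ((n.choose r).choose t : ℝ) * x ^ (t * r.choose 2) ≤ Bsum n r t x ∧
    Bsum n r t x ≤ ((n.choose r).choose t : ℝ) * x ^ (t * r.choose 2) + BadSum n r t x := by
  have hMt : ((SS n r).powersetCard t).card = (n.choose r).choose t := by
    rw [Finset.card_powersetCard, SS, Finset.card_powersetCard, Finset.card_univ,
      Fintype.card_fin]
  have hcards : ∀ A ∈ (SS n r).powersetCard t, (∀ S ∈ A, S.card = r) ∧ A.card = t := by
    intro A hA
    rw [Finset.mem_powersetCard] at hA
    exact ⟨fun S hS => mem_SS.mp (hA.1 hS), hA.2⟩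
  have hsplit : Bsum n r t x =
      (∑ A ∈ ((SS n r).powersetCard t).filter (fun A => Good n A), x ^ (edges n A).card)
      + BadSum n r t x := by
    rw [Bsum, BadSum, Finset.sum_filter_add_sum_filter_not]
  have hgood : ∀ A ∈ ((SS n r).powersetCard t).filter (fun A => Good n A),
      x ^ (edges n A).card = x ^ (t * r.choose 2) := by
    intro A hA
    rw [Finset.mem_filter] at hA
    obtain ⟨h1, h2⟩ := hcards A hA.1
    rw [card_edges_good h1 hA.2, h2]
  have hgoodsum : (∑ A ∈ ((SS n r).powersetCard t).filter (fun A => Good n A),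
      x ^ (edges n A).card)
      = (((SS n r).powersetCard t).filter (fun A => Good n A)).card
        * x ^ (t * r.choose 2) := by
    rw [Finset.sum_congr rfl hgood, Finset.sum_const, nsmul_eq_mul]
  have hbadge : ∀ A ∈ ((SS n r).powersetCard t).filter (fun A => ¬ Good n A),
      x ^ (t * r.choose 2) ≤ x ^ (edges n A).card := by
    intro A hA
    rw [Finset.mem_filter] at hA
    obtain ⟨h1, h2⟩ := hcards A hA.1
    refine pow_le_pow_of_le_one hx0 hx1 ?_
    calc (edges n A).card ≤ A.card * r.choose 2 := card_edges_le h1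
      _ = t * r.choose 2 := by rw [h2]
  have hcardsplit : (((SS n r).powersetCard t).filter (fun A => Good n A)).card
      + (((SS n r).powersetCard t).filter (fun A => ¬ Good n A)).card
      = (n.choose r).choose t := by
    rw [Finset.card_filter_add_card_filter_not, hMt]
  constructor
  · have hb : (((SS n r).powersetCard t).filter (fun A => ¬ Good n A)).card
        * x ^ (t * r.choose 2) ≤ BadSum n r t x := by
      rw [BadSum, ← nsmul_eq_mul, ← Finset.sum_const]
      exact Finset.sum_le_sum hbadge
    rw [hsplit, hgoodsum]
    have := hcardsplit
    have hcast : ((n.choose r).choose t : ℝ)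
        = ((((SS n r).powersetCard t).filter (fun A => Good n A)).card : ℝ)
          + ((((SS n r).powersetCard t).filter (fun A => ¬ Good n A)).card : ℝ) := by
      exact_mod_cast (congrArg (fun m : ℕ => (m : ℝ)) this.symm)
    rw [hcast, add_mul]
    have hxp : (0:ℝ) ≤ x ^ (t * r.choose 2) := pow_nonneg hx0 _
    nlinarith [hb]
  · rw [hsplit, hgoodsum]
    have hle : ((((SS n r).powersetCard t).filter (fun A => Good n A)).card : ℝ)
        ≤ ((n.choose r).choose t : ℝ) := by
      exact_mod_cast Nat.le.intro hcardsplit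
    have hxp : (0:ℝ) ≤ x ^ (t * r.choose 2) := pow_nonneg hx0 _
    nlinarith

open Classical in
lemma inner_sum_le {n r : ℕ} {x : ℝ} (hx0 : 0 ≤ x) (U : Finset (Fin n)) (L m k : ℕ)
    (hU : U.card ≤ L) (F : Finset (Finset (Fin n))) (hF : F ⊆ SS n r)
    (hm : ∀ S ∈ F, m ≤ (S ∩ U).card ∧ (S ∩ U).card ≤ k) :
    ∑ S ∈ F, x ^ (r.choose 2 - ((S ∩ U).card).choose 2)
      ≤ ∑ s ∈ Finset.Icc m k, (L.choose s * n.choose (r-s) : ℝ)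
          * x ^ (r.choose 2 - s.choose 2) := by
  have hfib := Finset.sum_fiberwise_of_maps_to (g := fun S => (S ∩ U).card)
    (t := Finset.Icc m k) (s := F)
    (fun S hS => Finset.mem_Icc.mpr (hm S hS))
    (fun S => x ^ (r.choose 2 - ((S ∩ U).card).choose 2))
  rw [← hfib]
  refine Finset.sum_le_sum fun s _ => ?_
  have hconst : ∀ S ∈ F.filter (fun S => (S ∩ U).card = s),
      x ^ (r.choose 2 - ((S ∩ U).card).choose 2) = x ^ (r.choose 2 - s.choose 2) := by
    intro S hS
    rw [Finset.mem_filter] at hS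
    rw [hS.2]
  rw [Finset.sum_congr rfl hconst, Finset.sum_const, nsmul_eq_mul]
  refine mul_le_mul_of_nonneg_right ?_ (pow_nonneg hx0 _)
  have hsub : F.filter (fun S => (S ∩ U).card = s) ⊆
      (SS n r).filter (fun S => (S ∩ U).card = s) := by
    intro S hS
    rw [Finset.mem_filter] at hS ⊢
    exact ⟨hF hS.1, hS.2⟩
  have h1 : (F.filter (fun S => (S ∩ U).card = s)).card
      ≤ U.card.choose s * n.choose (r - s) :=
    le_trans (Finset.card_le_card hsub) (card_inter_count U s)
  have h2 : U.card.choose s * n.choose (r-s) ≤ L.choose s * n.choose (r-s) :=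
    Nat.mul_le_mul_right _ (Nat.choose_le_choose s hU)
  calc ((F.filter (fun S => (S ∩ U).card = s)).card : ℝ)
      ≤ ((L.choose s * n.choose (r-s) : ℕ) : ℝ) := by exact_mod_cast le_trans h1 h2
    _ = (L.choose s * n.choose (r-s) : ℝ) := by push_cast; ring


open Classical in
lemma badSum_step {n r t : ℕ} {x : ℝ} (hx0 : 0 ≤ x) (hx1 : x ≤ 1) (ht : 2 ≤ t) :
    BadSum n r (t+1) x ≤ BadSum n r t x *
      (∑ s ∈ Finset.Icc 0 r, ((r*t).choose s * n.choose (r-s) : ℝ)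
        * x ^ (r.choose 2 - s.choose 2)) := by
  set K := ∑ s ∈ Finset.Icc 0 r, ((r*t).choose s * n.choose (r-s) : ℝ)
        * x ^ (r.choose 2 - s.choose 2) with hK
  have hsurj : ∀ A ∈ ((SS n r).powersetCard (t+1)).filter (fun A => ¬ Good n A),
      ∃ q ∈ (((SS n r).powersetCard t).filter (fun A => ¬ Good n A)) ×ˢ (SS n r),
        insert q.2 q.1 = A := by
    intro A hA
    rw [Finset.mem_filter, Finset.mem_powersetCard] at hA
    obtain ⟨⟨hAsub, hAcard⟩, hbad⟩ := hA
    rw [Good] at hbad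
    push_neg at hbad
    obtain ⟨S₁, hS₁, S₂, hS₂, hne, hcard2⟩ := hbad
    obtain ⟨S, hSA, hSnot⟩ : ∃ S ∈ A, S ∉ ({S₁, S₂} : Finset (Finset (Fin n))) := by
      by_contra hcon
      push_neg at hcon
      have hsub : A ⊆ ({S₁, S₂} : Finset (Finset (Fin n))) := fun y hy => hcon y hy
      have := Finset.card_le_card hsub
      have hc2 : ({S₁, S₂} : Finset (Finset (Fin n))).card ≤ 2 :=
        Finset.card_insert_le _ _ |>.trans (by simp)
      omega
    simp only [Finset.mem_insert, Finset.mem_singleton] at hSnot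
    push_neg at hSnot
    refine ⟨(A.erase S, S), ?_, ?_⟩
    · rw [Finset.mem_product]
      constructor
      · rw [Finset.mem_filter, Finset.mem_powersetCard]
        refine ⟨⟨(Finset.erase_subset _ _).trans hAsub, ?_⟩, ?_⟩
        · rw [Finset.card_erase_of_mem hSA, hAcard]
          omega
        · intro hgood
          have h1 : S₁ ∈ A.erase S := Finset.mem_erase.mpr ⟨Ne.symm hSnot.1, hS₁⟩
          have h2 : S₂ ∈ A.erase S := Finset.mem_erase.mpr ⟨Ne.symm hSnot.2, hS₂⟩
          exact absurd (hgood S₁ h1 S₂ h2 hne) (by omega)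
      · exact hAsub hSA
    · exact Finset.insert_erase hSA
  have h1 := sum_le_of_surj (f := fun A => x ^ (edges n A).card)
    (fun A => pow_nonneg hx0 _) hsurj
  rw [Finset.sum_product] at h1
  have h2 : ∀ A' ∈ ((SS n r).powersetCard t).filter (fun A => ¬ Good n A),
      ∑ S ∈ SS n r, x ^ (edges n (insert S A')).card ≤ x ^ (edges n A').card * K := by
    intro A' hA'
    rw [Finset.mem_filter, Finset.mem_powersetCard] at hA'
    have hVV : (VV n A').card ≤ r * t := by
      rw [VV]
      calc (A'.biUnion id).card ≤ ∑ S ∈ A', (id S).card := Finset.card_biUnion_le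
        _ = ∑ S ∈ A', r := Finset.sum_congr rfl fun S hS => mem_SS.mp (hA'.1.1 hS)
        _ = t * r := by rw [Finset.sum_const, hA'.1.2, smul_eq_mul]
        _ = r * t := mul_comm _ _
    calc ∑ S ∈ SS n r, x ^ (edges n (insert S A')).card
        ≤ ∑ S ∈ SS n r, x ^ (edges n A').card
            * x ^ (r.choose 2 - ((S ∩ VV n A').card).choose 2) := by
          refine Finset.sum_le_sum fun S hS => ?_
          rw [← pow_add]
          exact pow_le_pow_of_le_one hx0 hx1 (card_edges_insert (mem_SS.mp hS))
      _ = x ^ (edges n A').card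
            * ∑ S ∈ SS n r, x ^ (r.choose 2 - ((S ∩ VV n A').card).choose 2) :=
          (Finset.mul_sum _ _ _).symm
      _ ≤ x ^ (edges n A').card * K := by
          refine mul_le_mul_of_nonneg_left ?_ (pow_nonneg hx0 _)
          refine inner_sum_le hx0 (VV n A') (r*t) 0 r hVV (SS n r) (subset_refl _) ?_
          intro S hS
          refine ⟨Nat.zero_le _, ?_⟩
          calc (S ∩ VV n A').card ≤ S.card := Finset.card_le_card Finset.inter_subset_left
            _ = r := mem_SS.mp hS
  calc BadSum n r (t+1) x
      ≤ ∑ A' ∈ ((SS n r).powersetCard t).filter (fun A => ¬ Good n A),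
          ∑ S ∈ SS n r, x ^ (edges n (insert S A')).card := h1
    _ ≤ ∑ A' ∈ ((SS n r).powersetCard t).filter (fun A => ¬ Good n A),
          x ^ (edges n A').card * K := Finset.sum_le_sum h2
    _ = BadSum n r t x * K := by rw [BadSum, Finset.sum_mul]

open Classical in
lemma badSum_two {n r : ℕ} {x : ℝ} (hx0 : 0 ≤ x) (hx1 : x ≤ 1) :
    BadSum n r 2 x ≤ ((n.choose r : ℝ) * x ^ (r.choose 2)) *
      (∑ s ∈ Finset.Icc 2 (r-1), (r.choose s * n.choose (r-s) : ℝ)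
        * x ^ (r.choose 2 - s.choose 2)) := by
  set K := ∑ s ∈ Finset.Icc 2 (r-1), (r.choose s * n.choose (r-s) : ℝ)
        * x ^ (r.choose 2 - s.choose 2) with hKdef
  have hK0 : 0 ≤ K := by
    refine Finset.sum_nonneg fun s _ => ?_
    have : (0:ℝ) ≤ (r.choose s * n.choose (r-s) : ℝ) := by positivity
    positivity
  have hsurj : ∀ A ∈ ((SS n r).powersetCard 2).filter (fun A => ¬ Good n A),
      ∃ q ∈ (SS n r ×ˢ SS n r).filter
          (fun q => q.1 ≠ q.2 ∧ 2 ≤ (q.2 ∩ q.1).card),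
        insert q.2 {q.1} = A := by
    intro A hA
    rw [Finset.mem_filter, Finset.mem_powersetCard] at hA
    obtain ⟨⟨hAsub, hAcard⟩, hbad⟩ := hA
    rw [Good] at hbad
    push_neg at hbad
    obtain ⟨S₁, hS₁, S₂, hS₂, hne, hcard2⟩ := hbad
    have hpair : A = {S₁, S₂} := by
      refine (Finset.eq_of_subset_of_card_le ?_ ?_).symm
      · intro y hy
        simp only [Finset.mem_insert, Finset.mem_singleton] at hy
        rcases hy with rfl | rfl <;> assumption
      · rw [hAcard, Finset.card_pair hne]
    refine ⟨(S₁, S₂), ?_, ?_⟩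
    · rw [Finset.mem_filter, Finset.mem_product]
      refine ⟨⟨hAsub hS₁, hAsub hS₂⟩, hne, ?_⟩
      show 2 ≤ (S₂ ∩ S₁).card
      rw [Finset.inter_comm]
      omega
    · rw [hpair]
      show ({S₂, S₁} : Finset (Finset (Fin n))) = {S₁, S₂}
      exact Finset.pair_comm S₂ S₁
  have h1 := sum_le_of_surj (f := fun A => x ^ (edges n A).card)
    (fun A => pow_nonneg hx0 _) hsurj
  have hsplit : ∑ q ∈ (SS n r ×ˢ SS n r).filter
        (fun q => q.1 ≠ q.2 ∧ 2 ≤ (q.2 ∩ q.1).card),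
      x ^ (edges n (insert q.2 {q.1})).card
      = ∑ S₁ ∈ SS n r, ∑ S₂ ∈ (SS n r).filter
          (fun S₂ => S₁ ≠ S₂ ∧ 2 ≤ (S₂ ∩ S₁).card),
          x ^ (edges n (insert S₂ {S₁})).card := by
    rw [Finset.sum_filter, Finset.sum_product]
    exact Finset.sum_congr rfl fun S₁ _ => (Finset.sum_filter _ _).symm
  rw [hsplit] at h1
  have h2 : ∀ S₁ ∈ SS n r,
      ∑ S₂ ∈ (SS n r).filter (fun S₂ => S₁ ≠ S₂ ∧ 2 ≤ (S₂ ∩ S₁).card),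
        x ^ (edges n (insert S₂ {S₁})).card ≤ x ^ (r.choose 2) * K := by
    intro S₁ hS₁
    have hcS₁ : S₁.card = r := mem_SS.mp hS₁
    have heS₁ : (edges n {S₁}).card = r.choose 2 := by
      rw [edges, Finset.singleton_biUnion, card_edgeF, hcS₁]
    have hVS₁ : VV n {S₁} = S₁ := by
      rw [VV, Finset.singleton_biUnion]
      rfl
    calc ∑ S₂ ∈ (SS n r).filter (fun S₂ => S₁ ≠ S₂ ∧ 2 ≤ (S₂ ∩ S₁).card),
          x ^ (edges n (insert S₂ {S₁})).card
        ≤ ∑ S₂ ∈ (SS n r).filter (fun S₂ => S₁ ≠ S₂ ∧ 2 ≤ (S₂ ∩ S₁).card),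
          x ^ (r.choose 2) * x ^ (r.choose 2 - ((S₂ ∩ S₁).card).choose 2) := by
          refine Finset.sum_le_sum fun S₂ hS₂ => ?_
          rw [Finset.mem_filter] at hS₂
          rw [← pow_add]
          refine pow_le_pow_of_le_one hx0 hx1 ?_
          have := card_edges_insert (A := {S₁}) (S := S₂) (mem_SS.mp hS₂.1)
          rw [heS₁, hVS₁] at this
          exact this
      _ = x ^ (r.choose 2) * ∑ S₂ ∈ (SS n r).filter
            (fun S₂ => S₁ ≠ S₂ ∧ 2 ≤ (S₂ ∩ S₁).card),
            x ^ (r.choose 2 - ((S₂ ∩ S₁).card).choose 2) := (Finset.mul_sum _ _ _).symm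
      _ ≤ x ^ (r.choose 2) * K := by
          refine mul_le_mul_of_nonneg_left ?_ (pow_nonneg hx0 _)
          refine inner_sum_le hx0 S₁ r 2 (r-1) (le_of_eq hcS₁) _
            (Finset.filter_subset _ _) ?_
          intro S₂ hS₂
          rw [Finset.mem_filter] at hS₂
          refine ⟨hS₂.2.2, ?_⟩
          have hc2 : S₂.card = r := mem_SS.mp hS₂.1
          have hle : (S₂ ∩ S₁).card ≤ r := by
            calc (S₂ ∩ S₁).card ≤ S₂.card := Finset.card_le_card Finset.inter_subset_left
              _ = r := hc2
          have hneq : (S₂ ∩ S₁).card ≠ r := by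
            intro hcon
            have hinter : S₂ ∩ S₁ = S₂ := by
              refine Finset.eq_of_subset_of_card_le Finset.inter_subset_left ?_ |>.symm |>.symm
              omega
            have hsub : S₂ ⊆ S₁ := by
              rw [← hinter]; exact Finset.inter_subset_right
            have : S₂ = S₁ := Finset.eq_of_subset_of_card_le hsub (by omega)
            exact hS₂.2.1 this.symm
          omega
  calc BadSum n r 2 x ≤ _ := h1
    _ ≤ ∑ S₁ ∈ SS n r, x ^ (r.choose 2) * K := Finset.sum_le_sum h2
    _ = ((n.choose r : ℝ) * x ^ (r.choose 2)) * K := by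
        rw [Finset.sum_const, nsmul_eq_mul, SS, Finset.card_powersetCard,
          Finset.card_univ, Fintype.card_fin]
        ring


lemma two_mul_choose_two (n : ℕ) : 2 * n.choose 2 = n * (n - 1) := by
  rcases n with _ | m
  · simp
  · rw [Nat.choose_two_right]
    simp only [Nat.add_sub_cancel]
    have heven : 2 ∣ (m + 1) * m := by
      have := (Nat.even_mul_succ_self m).two_dvd
      rwa [Nat.mul_comm] at this
    rw [Nat.mul_div_cancel' heven]

lemma choose_sub_identity {r s : ℕ} (hs : s ≤ r) :
    2 * (r.choose 2 - s.choose 2) = (r-1)*(r-s) + s*(r-s) := by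
  have hb : s.choose 2 ≤ r.choose 2 := Nat.choose_le_choose 2 hs
  have h1 := two_mul_choose_two r
  have h2 := two_mul_choose_two s
  have hkey : r * (r-1) = s * (s-1) + ((r-1)*(r-s) + s*(r-s)) := by
    obtain ⟨d, rfl⟩ : ∃ d, r = s + d := ⟨r - s, by omega⟩
    rcases s with _ | s'
    · simp [Nat.mul_comm]
    ·
      have e1 : s' + 1 + d - 1 = s' + d := by omega
      have e2 : s' + 1 - 1 = s' := by omega
      have e3 : s' + 1 + d - (s' + 1) = d := by omega
      rw [e1, e2, e3]
      ring
  omega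

lemma sq_le_of_Icc {r s : ℕ} (h1 : 1 ≤ s) (h2 : s ≤ r - 1) : r - 1 ≤ s * (r - s) := by
  obtain ⟨a, rfl⟩ : ∃ a, s = a + 1 := ⟨s - 1, by omega⟩
  obtain ⟨b, hb⟩ : ∃ b, r - (a + 1) = b + 1 := ⟨r - (a + 1) - 1, by omega⟩
  rw [hb]
  have h3 : r - 1 = a + 1 + b := by omega
  rw [h3]
  nlinarith

lemma le_choose {r : ℕ} (hr : 1 ≤ r) (m : ℕ) : m + 1 ≤ (m + r).choose r := by
  induction m with
  | zero => simp
  | succ m ih =>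
    obtain ⟨r', rfl⟩ : ∃ r', r = r' + 1 := ⟨r - 1, by omega⟩
    have hp : (m + 1 + (r' + 1)).choose (r' + 1)
        = (m + (r' + 1)).choose r' + (m + (r' + 1)).choose (r' + 1) := by
      rw [show m + 1 + (r' + 1) = (m + (r' + 1)) + 1 by omega]
      exact Nat.choose_succ_succ _ _
    have hpos : 0 < (m + (r' + 1)).choose r' := Nat.choose_pos (by omega)
    omega

lemma choose_tendsto {M : ℕ → ℕ} {w : ℕ → ℝ} {l : ℝ} (t : ℕ)
    (hMw : Tendsto (fun n => (M n : ℝ) * w n) atTop (nhds l))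
    (hw : Tendsto w atTop (nhds 0))
    (hM : Tendsto M atTop atTop) :
    Tendsto (fun n => ((M n).choose t : ℝ) * (w n)^t) atTop
      (nhds (l^t / t.factorial)) := by
  have hfac : ∀ i : ℕ, Tendsto (fun n => ((M n - i : ℕ) : ℝ) * w n) atTop (nhds l) := by
    intro i
    have hev : ∀ᶠ n in atTop, ((M n - i : ℕ) : ℝ) * w n = (M n : ℝ) * w n - i * w n := by
      filter_upwards [hM.eventually (eventually_ge_atTop i)] with n hn
      rw [Nat.cast_sub hn]
      ring
    have hlim2 : Tendsto (fun n => (M n : ℝ) * w n - i * w n) atTop (nhds l) := by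
      have := hMw.sub ((hw.const_mul (i:ℝ)))
      simpa using this
    exact Tendsto.congr' (hev.mono fun n h => h.symm) hlim2
  have hprod : Tendsto (fun n => ∏ i ∈ Finset.range t, (((M n - i : ℕ)) : ℝ) * w n)
      atTop (nhds (l^t)) := by
    have := tendsto_finset_prod (Finset.range t)
      (fun i _ => hfac i)
    simpa using this
  have hev : ∀ᶠ n in atTop, (∏ i ∈ Finset.range t, (((M n - i : ℕ)) : ℝ) * w n)
      / (t.factorial : ℝ)
      = ((M n).choose t : ℝ) * (w n)^t := by
    filter_upwards [hM.eventually (eventually_ge_atTop t)] with n hn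
    have hnat : (M n).descFactorial t = t.factorial * (M n).choose t :=
      Nat.descFactorial_eq_factorial_mul_choose _ _
    have hprod_eq : (M n).descFactorial t = ∏ i ∈ Finset.range t, (M n - i) :=
      Nat.descFactorial_eq_prod_range _ _
    have hcast : (∏ i ∈ Finset.range t, (((M n - i : ℕ)) : ℝ))
        = (t.factorial : ℝ) * ((M n).choose t : ℝ) := by
      rw [← Nat.cast_prod, ← hprod_eq, hnat]
      push_cast
      ring
    rw [Finset.prod_mul_distrib, hcast, Finset.prod_const, Finset.card_range]
    have hfne : (t.factorial : ℝ) ≠ 0 := by positivity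
    field_simp
  have := (hprod.div_const (t.factorial : ℝ))
  exact Tendsto.congr' hev this


lemma Bsum_tendsto (r : ℕ) (hr : 2 ≤ r) (c : ℝ) (hc : 0 < c) (p : ℕ → ℝ)
    (hp : ∀ n, 0 < p n ∧ p n < 1)
    (hlim : Tendsto (fun n : ℕ => (n : ℝ) * p n ^ (((r : ℝ) - 1) / 2)) atTop (nhds c))
    (t : ℕ) :
    Tendsto (fun n => Bsum n r t (p n)) atTop
      (nhds ((c ^ r / r.factorial) ^ t / t.factorial)) := by
  classical
  set lam := c ^ r / (r.factorial : ℝ) with hlam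
  set z : ℕ → ℝ := fun n => Real.sqrt (p n) with hzdef
  have hz0 : ∀ n, 0 ≤ z n := fun n => Real.sqrt_nonneg _
  have hz1 : ∀ n, z n ≤ 1 := by
    intro n
    have h := Real.sqrt_le_sqrt (le_of_lt (hp n).2)
    rw [Real.sqrt_one] at h
    exact h
  have hzsq : ∀ n, z n ^ 2 = p n := fun n => Real.sq_sqrt (hp n).1.le
  have hx0 : ∀ n, 0 ≤ p n := fun n => (hp n).1.le
  have hx1 : ∀ n, p n ≤ 1 := fun n => (hp n).2.le
  have hpow : ∀ (n e : ℕ), p n ^ e = z n ^ (2 * e) := by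
    intro n e
    rw [pow_mul, hzsq]
  have hzrw : ∀ n, p n ^ (((r : ℝ) - 1) / 2) = z n ^ (r - 1) := by
    intro n
    have h1 : ((r:ℝ) - 1) / 2 = (1/2 : ℝ) * ((r - 1 : ℕ) : ℝ) := by
      rw [Nat.cast_sub (by omega : 1 ≤ r)]
      push_cast
      ring
    rw [h1, Real.rpow_mul (hx0 n), Real.rpow_natCast, ← Real.sqrt_eq_rpow]
  have ha : Tendsto (fun n : ℕ => (n:ℝ) * z n ^ (r-1)) atTop (nhds c) := by
    refine Tendsto.congr (fun n => ?_) hlim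
    rw [hzrw n]
  have hzr0 : Tendsto (fun n => z n ^ (r-1)) atTop (nhds 0) := by
    have h2 : Tendsto (fun n : ℕ => ((n:ℝ))⁻¹) atTop (nhds 0) :=
      tendsto_inv_atTop_nhds_zero_nat
    have h3 := ha.mul h2
    rw [mul_zero] at h3
    refine Tendsto.congr' ?_ h3
    filter_upwards [eventually_ge_atTop 1] with n hn
    have hne : (n:ℝ) ≠ 0 := by
      have : (1:ℝ) ≤ (n:ℝ) := by exact_mod_cast hn
      linarith
    field_simp
  obtain ⟨D, hD1, hDb⟩ : ∃ D : ℝ, 1 ≤ D ∧ ∀ n : ℕ, (n:ℝ) * z n ^ (r-1) ≤ D := by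
    obtain ⟨D₀, hD₀⟩ := ha.bddAbove_range
    refine ⟨max D₀ 1, le_max_right _ _, fun n => ?_⟩
    exact le_trans (hD₀ ⟨n, rfl⟩) (le_max_left _ _)
  have haz : ∀ n : ℕ, 0 ≤ (n:ℝ) * z n ^ (r-1) := fun n => by positivity
  -- per-term bound for counting sums
  have hterm : ∀ (n s : ℕ), s ≤ r →
      ((n.choose (r-s) : ℕ):ℝ) * p n ^ (r.choose 2 - s.choose 2)
        ≤ D^(r-s) * z n ^ (s*(r-s)) := by
    intro n s hs
    have h1 : ((n.choose (r-s) : ℕ):ℝ) ≤ ((n:ℝ))^(r-s) := by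
      exact_mod_cast Nat.choose_le_pow n (r-s)
    have h2 : p n ^ (r.choose 2 - s.choose 2)
        = z n ^ ((r-1)*(r-s)) * z n ^ (s*(r-s)) := by
      rw [hpow, ← pow_add, choose_sub_identity hs]
    have h3 : ((n:ℝ))^(r-s) * z n ^ ((r-1)*(r-s)) = ((n:ℝ) * z n ^ (r-1))^(r-s) := by
      rw [mul_pow, ← pow_mul]
    have h4 : ((n:ℝ) * z n ^ (r-1))^(r-s) ≤ D^(r-s) :=
      pow_le_pow_left₀ (haz n) (hDb n) _
    have hzp : (0:ℝ) ≤ z n ^ (s*(r-s)) := by positivity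
    calc ((n.choose (r-s) : ℕ):ℝ) * p n ^ (r.choose 2 - s.choose 2)
        = ((n.choose (r-s) : ℕ):ℝ) * (z n ^ ((r-1)*(r-s)) * z n ^ (s*(r-s))) := by rw [h2]
      _ ≤ ((n:ℝ))^(r-s) * (z n ^ ((r-1)*(r-s)) * z n ^ (s*(r-s))) := by
          have hz2 : (0:ℝ) ≤ z n ^ ((r-1)*(r-s)) * z n ^ (s*(r-s)) := by positivity
          exact mul_le_mul_of_nonneg_right h1 hz2
      _ = (((n:ℝ))^(r-s) * z n ^ ((r-1)*(r-s))) * z n ^ (s*(r-s)) := by ring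
      _ ≤ D^(r-s) * z n ^ (s*(r-s)) := by
          rw [h3]
          exact mul_le_mul_of_nonneg_right h4 hzp
  -- main choose limit, first for M = n then for binomials
  have hMlim : Tendsto (fun n => ((n.choose r : ℕ):ℝ) * p n ^ (r.choose 2)) atTop
      (nhds lam) := by
    have h0 := choose_tendsto (M := fun n => n) (w := fun n => z n ^ (r-1)) (l := c) r
      ha hzr0 tendsto_id
    refine Tendsto.congr (fun n => ?_) h0
    rw [hpow, two_mul_choose_two, ← pow_mul]
    ring_nf
  have hMtop : Tendsto (fun n : ℕ => n.choose r) atTop atTop := by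
    have h2 : Tendsto (fun n : ℕ => n - r) atTop atTop := tendsto_sub_atTop_nat r
    have h1 : Tendsto (fun n : ℕ => n - r + 1) atTop atTop :=
      tendsto_atTop_mono (fun n => Nat.le_succ _) h2
    refine tendsto_atTop_mono' atTop ?_ h1
    filter_upwards [eventually_ge_atTop r] with n hn
    have := le_choose (by omega : 1 ≤ r) (n - r)
    rwa [Nat.sub_add_cancel hn] at this
  have hxE0 : Tendsto (fun n => p n ^ (r.choose 2)) atTop (nhds 0) := by
    have h1 : Tendsto (fun n => z n ^ (r-1)) atTop (nhds 0) := hzr0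
    have h2 := h1.pow r
    rw [zero_pow (by omega : r ≠ 0)] at h2
    refine Tendsto.congr (fun n => ?_) h2
    rw [hpow, two_mul_choose_two, ← pow_mul]
    ring_nf
  have hMt : ∀ t : ℕ, Tendsto (fun n => (((n.choose r).choose t : ℕ):ℝ)
      * p n ^ (t * r.choose 2)) atTop (nhds (lam^t / t.factorial)) := by
    intro t
    have h0 := choose_tendsto (M := fun n => n.choose r)
      (w := fun n => p n ^ (r.choose 2)) (l := lam) t hMlim hxE0 hMtop
    refine Tendsto.congr (fun n => ?_) h0
    rw [← pow_mul]
    ring_nf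
  -- BadSum limits
  have hBadlim : ∀ t : ℕ, Tendsto (fun n => BadSum n r t (p n)) atTop (nhds 0) := by
    have hBad0 : ∀ n (t : ℕ), t ≤ 1 → BadSum n r t (p n) = 0 := by
      intro n t ht
      rw [BadSum]
      convert Finset.sum_empty
      rw [Finset.filter_eq_empty_iff]
      intro A hA
      rw [Finset.mem_powersetCard] at hA
      rw [not_not]  -- goal ¬¬Good
      intro S hS T hT hST
      exfalso
      have : 1 < A.card := Finset.one_lt_card.mpr ⟨S, hS, T, hT, hST⟩
      omega
    have hBadnn : ∀ n (t : ℕ), 0 ≤ BadSum n r t (p n) := by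
      intro n t
      rw [BadSum]
      refine Finset.sum_nonneg fun A _ => pow_nonneg (hx0 n) _
    -- base bound for t = 2
    have hbase : Tendsto (fun n => BadSum n r 2 (p n)) atTop (nhds 0) := by
      set C2 : ℝ := ∑ s ∈ Finset.Icc 2 (r-1), ((r.choose s : ℕ):ℝ) * D^(r-s) with hC2
      have hub : ∀ n, BadSum n r 2 (p n)
          ≤ (((n.choose r : ℕ):ℝ) * p n ^ (r.choose 2)) * (C2 * z n ^ (r-1)) := by
        intro n
        refine le_trans (badSum_two (hx0 n) (hx1 n)) ?_
        refine mul_le_mul_of_nonneg_left ?_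
          (mul_nonneg (by positivity) (pow_nonneg (hx0 n) _))
        rw [hC2, Finset.sum_mul]
        refine Finset.sum_le_sum fun s hs => ?_
        rw [Finset.mem_Icc] at hs
        have hsr : s ≤ r := by omega
        have h5 : ((r.choose s * n.choose (r-s) : ℕ):ℝ) * p n ^ (r.choose 2 - s.choose 2)
            ≤ ((r.choose s : ℕ):ℝ) * (D^(r-s) * z n ^ (s*(r-s))) := by
          push_cast
          rw [mul_assoc]
          refine mul_le_mul_of_nonneg_left ?_ (by positivity)
          exact hterm n s hsr
        refine le_trans (le_of_eq (by push_cast; ring)) (le_trans h5 ?_)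
        rw [mul_assoc]
        refine mul_le_mul_of_nonneg_left ?_ (by positivity)
        refine mul_le_mul_of_nonneg_left ?_ (by positivity)
        refine pow_le_pow_of_le_one (hz0 n) (hz1 n) ?_
        exact sq_le_of_Icc (by omega) (by omega)
      have hlim2 : Tendsto (fun n => (((n.choose r : ℕ):ℝ) * p n ^ (r.choose 2))
          * (C2 * z n ^ (r-1))) atTop (nhds 0) := by
        have h6 := hMlim.mul ((hzr0.const_mul C2))
        simpa using h6
      refine tendsto_of_tendsto_of_tendsto_of_le_of_le tendsto_const_nhds hlim2 ?_ ?_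
      · exact fun n => hBadnn n 2
      · exact fun n => hub n
    -- step
    have hstep : ∀ t : ℕ, 2 ≤ t →
        Tendsto (fun n => BadSum n r t (p n)) atTop (nhds 0) →
        Tendsto (fun n => BadSum n r (t+1) (p n)) atTop (nhds 0) := by
      intro t ht hind
      set Ct : ℝ := ∑ s ∈ Finset.Icc 0 r, (((r*t).choose s : ℕ):ℝ) * D^(r-s) with hCt
      have hub : ∀ n, BadSum n r (t+1) (p n) ≤ BadSum n r t (p n) * Ct := by
        intro n
        refine le_trans (badSum_step (hx0 n) (hx1 n) ht) ?_
        refine mul_le_mul_of_nonneg_left ?_ (hBadnn n t)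
        rw [hCt]
        refine Finset.sum_le_sum fun s hs => ?_
        rw [Finset.mem_Icc] at hs
        have h5 : (((r*t).choose s * n.choose (r-s) : ℕ):ℝ)
            * p n ^ (r.choose 2 - s.choose 2)
            ≤ (((r*t).choose s : ℕ):ℝ) * (D^(r-s) * z n ^ (s*(r-s))) := by
          push_cast
          rw [mul_assoc]
          refine mul_le_mul_of_nonneg_left ?_ (by positivity)
          exact hterm n s hs.2
        refine le_trans (le_of_eq (by push_cast; ring)) (le_trans h5 ?_)
        refine mul_le_mul_of_nonneg_left ?_ (by positivity)
        have h7 : z n ^ (s*(r-s)) ≤ 1 := by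
          refine pow_le_one₀ (hz0 n) (hz1 n)
        nlinarith [pow_nonneg (le_trans zero_le_one hD1) (r-s)]
      have hlim3 : Tendsto (fun n => BadSum n r t (p n) * Ct) atTop (nhds 0) := by
        have := hind.mul_const Ct
        simpa using this
      refine tendsto_of_tendsto_of_tendsto_of_le_of_le tendsto_const_nhds hlim3 ?_ ?_
      · exact fun n => hBadnn n (t+1)
      · exact fun n => hub n
    intro t
    rcases Nat.lt_or_ge t 2 with h | h
    · have : ∀ n, BadSum n r t (p n) = 0 := fun n => hBad0 n t (by omega)
      simpa [this] using tendsto_const_nhds (α := ℝ) (f := atTop (α := ℕ))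
    · obtain ⟨m, rfl⟩ : ∃ m, t = m + 2 := ⟨t - 2, by omega⟩
      clear h
      induction m with
      | zero => exact hbase
      | succ m ih =>
        exact hstep (m+2) (by omega) ih
  -- squeeze for Bsum
  have hlow : ∀ n, (((n.choose r).choose t : ℕ):ℝ) * p n ^ (t * r.choose 2)
      ≤ Bsum n r t (p n) := fun n => (Bsum_split n r t (hx0 n) (hx1 n)).1
  have hhigh : ∀ n, Bsum n r t (p n) ≤ (((n.choose r).choose t : ℕ):ℝ)
      * p n ^ (t * r.choose 2) + BadSum n r t (p n) :=
    fun n => (Bsum_split n r t (hx0 n) (hx1 n)).2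
  have hup : Tendsto (fun n => (((n.choose r).choose t : ℕ):ℝ) * p n ^ (t * r.choose 2)
      + BadSum n r t (p n)) atTop (nhds (lam^t / t.factorial)) := by
    have := (hMt t).add (hBadlim t)
    simpa using this
  exact tendsto_of_tendsto_of_tendsto_of_le_of_le (hMt t) hup hlow hhigh


end ER

theorem stmt2' (r : ℕ) (hr : 2 ≤ r) (c : ℝ) (hc : 0 < c) (p : ℕ → ℝ)
    (hp : ∀ n, 0 < p n ∧ p n < 1)
    (hlim : Tendsto (fun n : ℕ => (n : ℝ) * p n ^ (((r : ℝ) - 1) / 2)) atTop (nhds c))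
    (k : ℕ) :
    Tendsto (fun n : ℕ => Pr n (p n) (fun Γ => Nr n r Γ = k)) atTop
      (nhds (Real.exp (-(c ^ r / r.factorial)) * (c ^ r / r.factorial) ^ k / k.factorial)) := by
  classical
  set lam : ℝ := c ^ r / (r.factorial : ℝ) with hlamdef
  have hlam0 : 0 < lam := by
    rw [hlamdef]
    positivity
  set P : ℝ := Real.exp (-(c ^ r / r.factorial)) * (c ^ r / r.factorial) ^ k / k.factorial
    with hPdef
  have hPalt : P = (lam ^ k / (k.factorial : ℝ)) * Real.exp (-lam) := by
    rw [hPdef, hlamdef]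
    ring
  have hx0 : ∀ n, 0 ≤ p n := fun n => (hp n).1.le
  have hx1 : ∀ n, p n ≤ 1 := fun n => (hp n).2.le
  have hB : ∀ t : ℕ, Tendsto (fun n => ER.Bsum n r t (p n)) atTop
      (nhds (lam ^ t / t.factorial)) := fun t =>
    ER.Bsum_tendsto r hr c hc p hp hlim t
  -- the factorial identity
  have idt2 : ∀ j : ℕ, ((k+j).choose k : ℝ) * (lam^(k+j) / ((k+j).factorial : ℝ))
      = (lam^k / (k.factorial : ℝ)) * (lam^j / (j.factorial : ℝ)) := by
    intro j
    have hfacnat : (k+j).choose k * k.factorial * j.factorial = (k+j).factorial := by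
      have := Nat.choose_mul_factorial_mul_factorial (Nat.le_add_right k j)
      rwa [Nat.add_sub_cancel_left] at this
    have hfac2 : (k+j).choose k * (k.factorial * j.factorial) = (k+j).factorial := by
      rw [← Nat.mul_assoc]
      exact hfacnat
    have hC : ((k+j).choose k : ℝ)
        = ((k+j).factorial : ℝ) / ((k.factorial : ℝ) * (j.factorial : ℝ)) := by
      rw [eq_div_iff (by positivity)]
      exact_mod_cast hfac2
    rw [hC]
    have h1 : ((k+j).factorial : ℝ) ≠ 0 := by positivity
    have h2 : (k.factorial : ℝ) ≠ 0 := by positivity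
    have h3 : (j.factorial : ℝ) ≠ 0 := by positivity
    field_simp
    ring
  have idt : ∀ j : ℕ, (-1:ℝ)^j * ((k+j).choose k : ℝ) * (lam^(k+j) / ((k+j).factorial : ℝ))
      = (lam^k / (k.factorial : ℝ)) * ((-lam)^j / (j.factorial : ℝ)) := by
    intro j
    have h := idt2 j
    have hneg : (-lam)^j = (-1:ℝ)^j * lam^j := by rw [neg_pow]
    rw [hneg]
    calc (-1:ℝ)^j * ((k+j).choose k : ℝ) * (lam^(k+j) / ((k+j).factorial : ℝ))
        = (-1:ℝ)^j * (((k+j).choose k : ℝ) * (lam^(k+j) / ((k+j).factorial : ℝ))) := by ring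
      _ = (-1:ℝ)^j * ((lam^k / (k.factorial : ℝ)) * (lam^j / (j.factorial : ℝ))) := by rw [h]
      _ = lam ^ k / (k.factorial : ℝ) * ((-1:ℝ)^j * lam ^ j / (j.factorial : ℝ)) := by ring
  -- limits of the truncated sums
  set L : ℕ → ℝ := fun J => ∑ j ∈ Finset.range (J+1),
    (-1:ℝ)^j * ((k+j).choose k : ℝ) * (lam^(k+j) / ((k+j).factorial : ℝ)) with hLdef
  have hTlim : ∀ J : ℕ, Tendsto (fun n => ∑ j ∈ Finset.range (J+1),
      (-1:ℝ)^j * ((k+j).choose k : ℝ) * ER.Bsum n r (k+j) (p n)) atTop (nhds (L J)) := by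
    intro J
    simp only [hLdef]
    refine tendsto_finset_sum _ fun j _ => ?_
    exact Tendsto.const_mul _ (hB (k+j))
  -- L tends to P
  have hexp : HasSum (fun j : ℕ => (-lam)^j / (j.factorial : ℝ)) (Real.exp (-lam)) := by
    rw [Real.exp_eq_exp_ℝ]
    exact NormedSpace.expSeries_div_hasSum_exp (-lam)
  have hLP : Tendsto L atTop (nhds P) := by
    have h1 := hexp.tendsto_sum_nat
    have h2 : Tendsto (fun J : ℕ => ∑ j ∈ Finset.range (J+1),
        (-lam)^j / (j.factorial : ℝ)) atTop (nhds (Real.exp (-lam))) :=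
      h1.comp (tendsto_add_atTop_nat 1)
    have h3 := h2.const_mul (lam^k / (k.factorial : ℝ))
    rw [hPalt]
    refine Tendsto.congr (fun J => ?_) h3
    simp only [hLdef]
    rw [Finset.mul_sum]
    exact Finset.sum_congr rfl fun j _ => (idt j).symm
  -- tail bound sequence
  set E : ℕ → ℝ := fun J => ((k+J+1).choose k : ℝ) * (lam^(k+J+1) / ((k+J+1).factorial : ℝ))
    with hEdef
  have hE0 : Tendsto E atTop (nhds 0) := by
    have h1 : Tendsto (fun m : ℕ => lam^m / (m.factorial : ℝ)) atTop (nhds 0) :=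
      (Real.summable_pow_div_factorial lam).tendsto_atTop_zero
    have h2 : Tendsto (fun J : ℕ => lam^(J+1) / ((J+1).factorial : ℝ)) atTop (nhds 0) :=
      h1.comp (tendsto_add_atTop_nat 1)
    have h3 := h2.const_mul (lam^k / (k.factorial : ℝ))
    rw [mul_zero] at h3
    refine Tendsto.congr (fun J => ?_) h3
    have h4 := idt2 (J+1)
    rw [show k + (J+1) = k + J + 1 from by omega] at h4
    simp only [hEdef]
    exact h4.symm
  -- epsilon argument
  rw [Metric.tendsto_atTop]
  intro ε hε
  obtain ⟨J₁, hJ₁⟩ := (Metric.tendsto_atTop).mp hLP (ε/4) (by linarith)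
  obtain ⟨J₂, hJ₂⟩ := (Metric.tendsto_atTop).mp hE0 (ε/4) (by linarith)
  set J := max J₁ J₂ with hJdef
  have hLJ : |L J - P| < ε/4 := by
    have := hJ₁ J (le_max_left _ _)
    rwa [Real.dist_eq] at this
  have hEJ : E J < ε/4 := by
    have := hJ₂ J (le_max_right _ _)
    rw [Real.dist_eq, sub_zero] at this
    calc E J ≤ |E J| := le_abs_self _
      _ < ε/4 := this
  obtain ⟨N₁, hN₁⟩ := (Metric.tendsto_atTop).mp (hTlim J) (ε/4) (by linarith)
  obtain ⟨N₂, hN₂⟩ := (Metric.tendsto_atTop).mp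
    ((hB (k+J+1)).const_mul (((k+J+1).choose k : ℝ))) (ε/4) (by linarith)
  refine ⟨max N₁ N₂, fun n hn => ?_⟩
  have hn₁ : N₁ ≤ n := le_trans (le_max_left _ _) hn
  have hn₂ : N₂ ≤ n := le_trans (le_max_right _ _) hn
  have hbonf := ER.bonferroni_EV n r k J (p n) (hx0 n) (hx1 n)
  have hTn : |(∑ j ∈ Finset.range (J+1),
      (-1:ℝ)^j * ((k+j).choose k : ℝ) * ER.Bsum n r (k+j) (p n)) - L J| < ε/4 := by
    have := hN₁ n hn₁
    rwa [Real.dist_eq] at this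
  have hCB : ((k+J+1).choose k : ℝ) * ER.Bsum n r (k+J+1) (p n) < ε/2 := by
    have := hN₂ n hn₂
    rw [Real.dist_eq] at this
    have habs : ((k+J+1).choose k : ℝ) * ER.Bsum n r (k+J+1) (p n)
        - ((k+J+1).choose k : ℝ) * (lam^(k+J+1) / ((k+J+1).factorial : ℝ)) < ε/4 :=
      lt_of_le_of_lt (le_abs_self _) this
    have hEJ' : ((k+J+1).choose k : ℝ) * (lam^(k+J+1) / ((k+J+1).factorial : ℝ)) = E J := by
      simp only [hEdef]
    linarith
  rw [Real.dist_eq]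
  have htri : |Pr n (p n) (fun Γ => Nr n r Γ = k) - P|
      ≤ |Pr n (p n) (fun Γ => Nr n r Γ = k) - (∑ j ∈ Finset.range (J+1),
          (-1:ℝ)^j * ((k+j).choose k : ℝ) * ER.Bsum n r (k+j) (p n))|
        + |(∑ j ∈ Finset.range (J+1),
          (-1:ℝ)^j * ((k+j).choose k : ℝ) * ER.Bsum n r (k+j) (p n)) - L J|
        + |L J - P| := by
    have := abs_sub_le (Pr n (p n) (fun Γ => Nr n r Γ = k))
      (∑ j ∈ Finset.range (J+1),
        (-1:ℝ)^j * ((k+j).choose k : ℝ) * ER.Bsum n r (k+j) (p n)) P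
    have h2 := abs_sub_le (∑ j ∈ Finset.range (J+1),
        (-1:ℝ)^j * ((k+j).choose k : ℝ) * ER.Bsum n r (k+j) (p n)) (L J) P
    linarith
  have hb1 : |Pr n (p n) (fun Γ => Nr n r Γ = k) - (∑ j ∈ Finset.range (J+1),
      (-1:ℝ)^j * ((k+j).choose k : ℝ) * ER.Bsum n r (k+j) (p n))|
      ≤ ((k+J+1).choose k : ℝ) * ER.Bsum n r (k+J+1) (p n) := hbonf
  linarith

/-- If `n · p_n^{(r−1)/2} → c > 0` then the number of `r`-element complete subgraphs of the
random graph `G(n, p_n)` converges in distribution to a Poisson law with mean `λ = c^r/r!`. -/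
theorem stmt2 (r : ℕ) (hr : 2 ≤ r) (c : ℝ) (hc : 0 < c) (p : ℕ → ℝ)
    (hp : ∀ n, 0 < p n ∧ p n < 1)
    (hlim : Tendsto (fun n : ℕ => (n : ℝ) * p n ^ (((r : ℝ) - 1) / 2)) atTop (nhds c))
    (k : ℕ) :
    Tendsto (fun n : ℕ => Pr n (p n) (fun Γ => Nr n r Γ = k)) atTop
      (nhds (Real.exp (-(c ^ r / r.factorial)) * (c ^ r / r.factorial) ^ k / k.factorial)) := by
  exact stmt2' r hr c hc p hp hlim k

end
end

section
/- Fix a real number p with 0 < p < 1 and a real number ε > 0, and for each n set r = r(n) = ⌊z(n,p) − ε⌋. Then r^{−1}·C(n,r)·p^{C(r,2)} → ∞ as n → ∞, where C(m,k) denotes the binomial coefficient. -/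
open Finset Filter

noncomputable section

lemma lin_log_tendsto (a b c : ℝ) (ha : 0 < a) :
    Tendsto (fun x : ℝ => a * x + b * Real.log x + c) atTop atTop := by
  have hb : (0:ℝ) < a / (2 * (|b| + 1)) := by positivity
  have h := (Real.isLittleO_log_id_atTop).def hb
  rw [Filter.eventually_atTop] at h
  obtain ⟨X, hX⟩ := h
  apply tendsto_atTop_mono' _ (show ∀ᶠ x in atTop, a / 2 * x + c ≤ a * x + b * Real.log x + c from ?_)
  · have : Tendsto (fun x : ℝ => a / 2 * x) atTop atTop :=
      Tendsto.const_mul_atTop (by positivity) tendsto_id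
    exact this.atTop_add tendsto_const_nhds
  · filter_upwards [eventually_ge_atTop X, eventually_ge_atTop (0:ℝ)] with x hx hx0
    have h1 := hX x hx
    simp only [Real.norm_eq_abs, id] at h1
    have h2 : |b * Real.log x| ≤ a / 2 * x := by
      rw [abs_mul]
      calc |b| * |Real.log x| ≤ (|b| + 1) * (a / (2 * (|b| + 1)) * |x|) := by
            apply mul_le_mul (by linarith [abs_nonneg b]) h1 (abs_nonneg _) (by positivity)
        _ = a / 2 * |x| := by field_simp
        _ = a / 2 * x := by rw [abs_of_nonneg hx0]
    have := neg_abs_le (b * Real.log x)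
    nlinarith [abs_nonneg (b * Real.log x)]

/-- `r! · e^{r-1} ≤ r^{r+1}` for `r ≥ 1`. -/
lemma factorial_bound (r : ℕ) (hr : 1 ≤ r) :
    (r.factorial : ℝ) * Real.exp ((r:ℝ) - 1) ≤ (r:ℝ) ^ (r + 1) := by
  induction r with
  | zero => omega
  | succ r ih =>
    rcases Nat.eq_or_lt_of_le hr with h1 | h1
    · simp [← h1]
    · have hr1 : 1 ≤ r := by omega
      have ih := ih hr1
      have hrpos : (0:ℝ) < (r:ℝ) := by exact_mod_cast hr1
      have hr1pos : (0:ℝ) < (r:ℝ) + 1 := by positivity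
      set t : ℝ := 1 / ((r:ℝ)+1) with htdef
      have ht : Real.exp t ≤ ((r:ℝ)+1) / r := by
        have h2 := Real.add_one_le_exp (-t)
        have h5 : (r:ℝ)/((r:ℝ)+1) ≤ (Real.exp t)⁻¹ := by
          rw [← Real.exp_neg]
          have : (r:ℝ)/((r:ℝ)+1) = -t + 1 := by rw [htdef]; field_simp; ring
          linarith [this ▸ h2]
        have h6 := (le_inv_comm₀ (div_pos hrpos hr1pos) (Real.exp_pos t)).mp h5
        rwa [inv_div] at h6
      have key : Real.exp 1 * (r:ℝ) ^ (r + 1) ≤ ((r:ℝ)+1) ^ (r + 1) := by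
        have e1 : Real.exp 1 = Real.exp t ^ (r + 1) := by
          rw [← Real.exp_nat_mul]
          congr 1
          rw [htdef]; push_cast; field_simp
        have e2 : Real.exp t ^ (r+1) ≤ (((r:ℝ)+1)/r) ^ (r+1) :=
          pow_le_pow_left₀ (Real.exp_pos t).le ht _
        calc Real.exp 1 * (r:ℝ) ^ (r+1) ≤ (((r:ℝ)+1)/r) ^ (r+1) * (r:ℝ) ^ (r+1) := by
              rw [e1]; exact mul_le_mul_of_nonneg_right e2 (by positivity)
          _ = ((r:ℝ)+1) ^ (r+1) := by
              rw [← mul_pow, div_mul_cancel₀ _ (ne_of_gt hrpos)]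
      have expand : ((r+1).factorial : ℝ) * Real.exp (((r:ℕ)+1:ℕ) - 1) =
          ((r:ℝ)+1) * Real.exp 1 * ((r.factorial : ℝ) * Real.exp ((r:ℝ) - 1)) := by
        rw [Nat.factorial_succ]
        push_cast
        rw [show (r:ℝ)+1-1 = 1 + ((r:ℝ)-1) by ring, Real.exp_add]
        ring
      calc ((r+1).factorial : ℝ) * Real.exp (((r:ℕ)+1:ℕ) - 1)
          = ((r:ℝ)+1) * Real.exp 1 * ((r.factorial : ℝ) * Real.exp ((r:ℝ) - 1)) := expand
        _ ≤ ((r:ℝ)+1) * Real.exp 1 * ((r:ℝ) ^ (r + 1)) := by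
            apply mul_le_mul_of_nonneg_left ih (by positivity)
        _ = ((r:ℝ)+1) * (Real.exp 1 * (r:ℝ) ^ (r + 1)) := by ring
        _ ≤ ((r:ℝ)+1) * (((r:ℝ)+1) ^ (r + 1)) := by
            apply mul_le_mul_of_nonneg_left key (by positivity)
        _ = ((r:ℝ)+1) ^ (r + 1 + 1) := by ring
        _ = (((r:ℕ)+1:ℕ):ℝ) ^ (r + 1 + 1) := by push_cast; ring


/-- `z(n,p) = 2 log_q n − 2 log_q log_q n + 2 log_q (e/2) + 1`, where `q = 1/p`. -/
def zf (p : ℝ) (n : ℕ) : ℝ :=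
  2 * Real.logb p⁻¹ n - 2 * Real.logb p⁻¹ (Real.logb p⁻¹ n)
    + 2 * Real.logb p⁻¹ (Real.exp 1 / 2) + 1

set_option maxHeartbeats 1000000 in
/-- For `r = r(n) = ⌊z(n,p) − ε⌋`, one has `r⁻¹·C(n,r)·p^{C(r,2)} → ∞` as `n → ∞`. -/
theorem stmt4 (p ε : ℝ) (hp0 : 0 < p) (hp1 : p < 1) (hε : 0 < ε) :
    Tendsto (fun n : ℕ =>
        ((⌊zf p n - ε⌋.toNat : ℝ))⁻¹ * (n.choose ⌊zf p n - ε⌋.toNat : ℝ) *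
          p ^ (⌊zf p n - ε⌋.toNat.choose 2))
      atTop atTop := by
  have hq1 : 1 < p⁻¹ := (one_lt_inv₀ hp0).mpr hp1
  have hlq : 0 < Real.log p⁻¹ := Real.log_pos hq1
  set lq := Real.log p⁻¹ with hlqdef
  set c : ℝ := ε / 4 * lq with hcdef
  have hc : 0 < c := by positivity
  set δ : ℝ := Real.exp (-c) with hddef
  have hδ1 : δ < 1 := Real.exp_lt_one_iff.mpr (by linarith)
  have hδ0 : 0 < δ := Real.exp_pos _
  set A : ℕ → ℝ := fun n => Real.logb p⁻¹ n with hAdef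
  have hA : Tendsto A atTop atTop :=
    (Real.tendsto_logb_atTop hq1).comp tendsto_natCast_atTop_atTop
  have hAform : ∀ n : ℕ, A n = Real.log n / lq := fun n => rfl
  set c0 : ℝ := 2 * Real.logb p⁻¹ (Real.exp 1 / 2) + 1 with hc0def
  clear_value lq c δ A c0
  -- zf - ε tends to infinity
  have hz : Tendsto (fun n : ℕ => zf p n - ε) atTop atTop := by
    have h := (lin_log_tendsto 2 (-(2/lq)) (c0 - ε) (by norm_num)).comp hA
    refine h.congr fun n => ?_
    simp only [Function.comp_apply, zf, Real.logb, hAdef, hc0def, hlqdef]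
    ring
  -- r(n) → ∞ (as reals)
  have hrt : Tendsto (fun n : ℕ => ((⌊zf p n - ε⌋.toNat : ℕ) : ℝ)) atTop atTop := by
    apply tendsto_atTop_mono' _ _ (tendsto_atTop_add_const_right _ (-1) hz)
    filter_upwards with n
    have h1 : zf p n - ε - 1 < (⌊zf p n - ε⌋ : ℝ) := Int.sub_one_lt_floor _
    have h2 : (⌊zf p n - ε⌋ : ℝ) ≤ ((⌊zf p n - ε⌋.toNat : ℕ) : ℝ) := by
      exact_mod_cast Int.self_le_toNat _
    linarith
  -- lower bounding function tends to infinity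
  apply tendsto_atTop_mono' _ _
    (show Tendsto (fun n : ℕ =>
        Real.exp (c * ((⌊zf p n - ε⌋.toNat : ℕ) : ℝ)
          + (-2) * Real.log ((⌊zf p n - ε⌋.toNat : ℕ) : ℝ) + (-1))) atTop atTop from
      (Real.tendsto_exp_atTop.comp (lin_log_tendsto c (-2) (-1) hc)).comp hrt)
  -- eventual facts
  have ev1 : ∀ᶠ n : ℕ in atTop, 3 ≤ zf p n - ε := hz.eventually_ge_atTop 3
  have ev2 : ∀ᶠ n : ℕ in atTop, 1 ≤ A n := hA.eventually_ge_atTop 1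
  have ev3 : ∀ᶠ n : ℕ in atTop, (c0 - ε) / 2 ≤ Real.logb p⁻¹ (A n) :=
    ((Real.tendsto_logb_atTop hq1).comp hA).eventually_ge_atTop _
  have ev4 : ∀ᶠ n : ℕ in atTop,
      0 ≤ 1 * (n:ℝ) + (-(2/lq)) * Real.log n + (-c0) :=
    ((lin_log_tendsto 1 (-(2/lq)) (-c0) one_pos).comp
      tendsto_natCast_atTop_atTop).eventually_ge_atTop 0
  have ev5 : ∀ᶠ n : ℕ in atTop,
      0 ≤ (1 - δ) * (n:ℝ) + (-(2/lq)) * Real.log n + 0 :=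
    ((lin_log_tendsto (1 - δ) (-(2/lq)) 0 (by linarith)).comp
      tendsto_natCast_atTop_atTop).eventually_ge_atTop 0
  have ev6 : ∀ᶠ n : ℕ in atTop, 2 ≤ n := eventually_ge_atTop 2
  filter_upwards [ev1, ev2, ev3, ev4, ev5, ev6] with n h1 h2 h3 h4 h5 h6
  try simp only [Function.comp_apply] at h3
  try simp only [Function.comp_apply] at h4
  try simp only [Function.comp_apply] at h5
  -- basic per-n facts
  set r : ℕ := ⌊zf p n - ε⌋.toNat with hrdef
  clear_value r
  have hn1 : (1:ℝ) ≤ (n:ℝ) := by exact_mod_cast h6.trans' (by norm_num)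
  have hfl3 : (3:ℤ) ≤ ⌊zf p n - ε⌋ := Int.le_floor.mpr (by exact_mod_cast h1)
  have hr3 : 3 ≤ r := by rw [hrdef]; omega
  have hR3 : (3:ℝ) ≤ (r:ℝ) := by exact_mod_cast hr3
  have hR0 : (0:ℝ) < (r:ℝ) := by linarith
  have hRz : ((r:ℕ):ℝ) ≤ zf p n - ε := by
    have h0 : (0:ℤ) ≤ ⌊zf p n - ε⌋ := by omega
    have e : ((r:ℕ):ℝ) = ((⌊zf p n - ε⌋ : ℤ) : ℝ) := by
      rw [hrdef]; exact_mod_cast Int.toNat_of_nonneg h0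
    rw [e]; exact Int.floor_le _
  have hApos : (0:ℝ) < A n := by linarith
  have hz2A : zf p n - ε ≤ 2 * A n := by
    have : zf p n = 2 * A n - 2 * Real.logb p⁻¹ (A n) + c0 := by
      simp only [zf, hAdef, hc0def]; ring
    rw [this]; linarith
  have hR2A : ((r:ℕ):ℝ) ≤ 2 * A n := hRz.trans hz2A
  have h2A : 2 * A n = 2 / lq * Real.log n := by rw [hAform]; field_simp
  have hRn : ((r:ℕ):ℝ) ≤ (n:ℝ) := by
    have hlb : (0:ℝ) ≤ Real.logb p⁻¹ (A n) := Real.logb_nonneg hq1 h2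
    simp only [hAdef] at hlb
    have hzle : zf p n ≤ 2 * A n + c0 := by
      simp only [zf, hAdef, hc0def]; linarith
    calc ((r:ℕ):ℝ) ≤ zf p n - ε := hRz
      _ ≤ zf p n := by linarith
      _ ≤ 2 * A n + c0 := hzle
      _ = 2 / lq * Real.log n + c0 := by rw [h2A]
      _ ≤ n := by linarith [h4]
  have hrn : r ≤ n := by exact_mod_cast hRn
  have hdn : (n:ℝ) * δ ≤ (n:ℝ) - (r:ℝ) + 1 := by
    have h2d : 2 * A n ≤ (1 - δ) * n := by rw [h2A]; linarith [h5]
    linarith [hR2A]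
  have hnR1 : (0:ℝ) < (n:ℝ) - (r:ℝ) + 1 := lt_of_lt_of_le (mul_pos (by positivity) hδ0) hdn
  -- positivity
  have hchoose_pos : (0:ℝ) < (n.choose r : ℝ) := by
    exact_mod_cast Nat.choose_pos hrn
  have hppow_pos : (0:ℝ) < p ^ (r.choose 2) := by positivity
  -- log of the binomial coefficient
  have key := Nat.pow_le_choose r n (α := ℝ)
  have hcast : ((n + 1 - r : ℕ) : ℝ) = (n:ℝ) - (r:ℝ) + 1 := by
    rw [Nat.cast_sub (by omega)]; push_cast; ring
  rw [hcast] at key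
  have hlogC : (r:ℝ) * Real.log ((n:ℝ) - (r:ℝ) + 1) - Real.log (r.factorial : ℝ)
      ≤ Real.log (n.choose r : ℝ) := by
    have hposL : (0:ℝ) < ((n:ℝ) - (r:ℝ) + 1) ^ r / (r.factorial : ℝ) := by positivity
    have := Real.log_le_log hposL key
    rw [Real.log_div (by positivity) (by positivity), Real.log_pow] at this
    linarith
  -- log of the factorial
  have hfact : Real.log (r.factorial : ℝ)
      ≤ 1 + Real.log (r:ℝ) + (r:ℝ) * (Real.log (r:ℝ) - 1) := by
    have hb := factorial_bound r (by omega)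
    have := Real.log_le_log (by positivity) hb
    rw [Real.log_mul (by positivity) (Real.exp_ne_zero _), Real.log_exp,
      Real.log_pow] at this
    push_cast at this
    linarith [this]
  -- the exponent term
  have hEp : ((r.choose 2 : ℕ) : ℝ) * Real.log p = -((r:ℝ) * ((r:ℝ) - 1) / 2 * lq) := by
    rw [Nat.cast_choose_two]
    have : Real.log p = -lq := by rw [hlqdef, Real.log_inv]; ring
    rw [this]; ring
  set K : ℝ := Real.log n - Real.log (A n) + 1 - Real.log 2 - ε / 2 * lq with hKdef
  clear_value K
  have hid : (zf p n - ε - 1) / 2 * lq = K := by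
    have hlog2 : Real.logb p⁻¹ (Real.exp 1 / 2) * lq = 1 - Real.log 2 := by
      rw [Real.logb, ← hlqdef, div_mul_cancel₀ _ (ne_of_gt hlq),
        Real.log_div (Real.exp_ne_zero 1) two_ne_zero, Real.log_exp]
    have e1 : zf p n - ε - 1
        = 2 * (Real.log n / lq) - 2 * (Real.log (A n) / lq)
          + 2 * Real.logb p⁻¹ (Real.exp 1 / 2) - ε := by
      simp only [zf, hAdef, Real.logb, hlqdef]; ring
    rw [hKdef, e1]
    have hx1 := div_mul_cancel₀ (Real.log (n:ℝ)) (ne_of_gt hlq)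
    have hx2 := div_mul_cancel₀ (Real.log (A n)) (ne_of_gt hlq)
    linarith [hlog2, hx1, hx2]
  have hK : (r:ℝ) * ((r:ℝ) - 1) / 2 * lq ≤ (r:ℝ) * K := by
    calc (r:ℝ) * ((r:ℝ) - 1) / 2 * lq = (r:ℝ) * lq / 2 * ((r:ℝ) - 1) := by ring
      _ ≤ (r:ℝ) * lq / 2 * (zf p n - ε - 1) := by
          apply mul_le_mul_of_nonneg_left (by linarith)
            (div_nonneg (mul_nonneg (Nat.cast_nonneg r) hlq.le) (by norm_num))
      _ = (r:ℝ) * ((zf p n - ε - 1) / 2 * lq) := by ring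
      _ = (r:ℝ) * K := by rw [hid]
  -- bracket bounds
  have hbr1 : Real.log n - c ≤ Real.log ((n:ℝ) - (r:ℝ) + 1) := by
    have := Real.log_le_log (mul_pos (by positivity) hδ0) hdn
    rw [Real.log_mul (by positivity) (ne_of_gt hδ0), hddef, Real.log_exp] at this
    linarith
  have hbr2 : Real.log (r:ℝ) ≤ Real.log 2 + Real.log (A n) := by
    have := Real.log_le_log hR0 hR2A
    rw [Real.log_mul two_ne_zero (ne_of_gt hApos)] at this
    linarith
  -- assemble
  have hbracket : c ≤ Real.log ((n:ℝ) - (r:ℝ) + 1) - Real.log (r:ℝ) + 1 - K := by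
    linarith [hbr1, hbr2, hKdef, hcdef]
  have hmul : (r:ℝ) * c ≤ (r:ℝ) * (Real.log ((n:ℝ) - (r:ℝ) + 1) - Real.log (r:ℝ) + 1 - K) :=
    mul_le_mul_of_nonneg_left hbracket (by linarith)
  have hRHSpos : (0:ℝ) < ((r:ℝ))⁻¹ * (n.choose r : ℝ) * p ^ (r.choose 2) := by positivity
  rw [← Real.exp_log hRHSpos]
  apply Real.exp_le_exp.mpr
  rw [Real.log_mul (by positivity) (by positivity),
    Real.log_mul (by positivity) (by positivity), Real.log_inv, Real.log_pow, hEp]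
  nlinarith [hmul, hlogC, hfact, hK]


end
end

section
/- Fix an integer r ≥ 1 and a real number p with 0 < p < 1. Let S, T be disjoint r-element subsets of {1,…,n}, and let S', T' be disjoint r-element subsets of {1,…,n}, with a = |S∩S'|, b = |T∩S'|, c = |S∩T'|, d = |T∩T'|. Then the probability, under the Erdős–Rényi random graph G(n,p), that each of the four sets S, T, S', T' induces a complete subgraph equals p^{4·C(r,2) − C(a,2) − C(b,2) − C(c,2) − C(d,2)}. -/
open Finset Filter

noncomputable section

-- auxiliary: edge set of a clique on S
def edgeSet (n : ℕ) (S : Finset (Fin n)) : Finset (EdgeType n) :=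
  Finset.univ.filter (fun e => ∀ v ∈ e.1, v ∈ S)

lemma mem_edgeSet {n : ℕ} {S : Finset (Fin n)} {e : EdgeType n} :
    e ∈ edgeSet n S ↔ ∀ v ∈ e.1, v ∈ S := by simp [edgeSet]

lemma isCliqueIn_iff {n : ℕ} {Γ : RGraph n} {S : Finset (Fin n)} :
    IsCliqueIn n Γ S ↔ edgeSet n S ⊆ Γ := by
  constructor
  · intro h e he
    obtain ⟨e, hd⟩ := e
    induction e using Sym2.inductionOn with
    | hf v w =>
      replace he := mem_edgeSet.1 he
      have hv : v ∈ S := he v (by simp)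
      have hw : w ∈ S := he w (by simp)
      have hvw : v ≠ w := by simpa [Sym2.mk_isDiag_iff] using hd
      exact h v hv w hw hvw
  · intro h v hv w hw hvw
    apply h
    refine mem_edgeSet.2 ?_
    intro u hu
    rcases Sym2.mem_iff.1 hu with rfl | rfl <;> assumption

lemma edgeSet_inter {n : ℕ} (A B : Finset (Fin n)) :
    edgeSet n A ∩ edgeSet n B = edgeSet n (A ∩ B) := by
  ext e
  simp only [Finset.mem_inter, mem_edgeSet, ← forall_and]

lemma edgeSet_empty {n : ℕ} : edgeSet n (∅ : Finset (Fin n)) = ∅ := by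
  ext e
  obtain ⟨e, hd⟩ := e
  induction e using Sym2.inductionOn with
  | hf v w =>
    refine iff_of_false ?_ (Finset.notMem_empty _)
    intro h
    replace h := mem_edgeSet.1 h
    exact absurd (h v (by simp)) (Finset.notMem_empty v)

lemma card_edgeSet {n : ℕ} (A : Finset (Fin n)) :
    (edgeSet n A).card = A.card.choose 2 := by
  classical
  rw [← Sym2.card_image_offDiag A]
  rw [← Finset.card_image_of_injective (f := fun e : EdgeType n => e.1) (edgeSet n A) Subtype.val_injective]
  congr 1
  ext e
  induction e using Sym2.inductionOn with
  | hf v w =>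
    simp only [Finset.mem_image, Finset.mem_offDiag, mem_edgeSet]
    constructor
    · rintro ⟨⟨e, hd⟩, he, rfl⟩
      have hv : v ∈ A := he v (by simp)
      have hw : w ∈ A := he w (by simp)
      have hvw : v ≠ w := by simpa [Sym2.mk_isDiag_iff] using hd
      exact ⟨(v, w), ⟨hv, hw, hvw⟩, rfl⟩
    · rintro ⟨⟨a, b⟩, ⟨ha, hb, hab⟩, h⟩
      refine ⟨⟨s(a,b), by simpa [Sym2.mk_isDiag_iff] using hab⟩, ?_, h⟩
      intro u hu
      rcases Sym2.mem_iff.1 hu with rfl | rfl <;> assumption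

lemma pr_superset (n : ℕ) (p : ℝ) (E₀ : Finset (EdgeType n)) :
    Pr n p (fun Γ => E₀ ⊆ Γ) = p ^ E₀.card := by
  classical
  have hN : Fintype.card (EdgeType n) = n.choose 2 := by
    have := Sym2.card_subtype_not_diag (α := Fin n)
    simp only [Fintype.card_fin] at this
    exact this
  have hfil : (Finset.univ.filter (fun Γ : RGraph n => E₀ ⊆ Γ))
      = E₀ᶜ.powerset.image (fun Δ => Δ ∪ E₀) := by
    ext Γ
    simp only [Finset.mem_filter, Finset.mem_univ, true_and, Finset.mem_image,
      Finset.mem_powerset]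
    constructor
    · intro h
      exact ⟨Γ \ E₀, fun x hx => by simp_all [Finset.mem_sdiff, Finset.mem_compl],
        by rw [Finset.sdiff_union_of_subset h]⟩
    · rintro ⟨Δ, hΔ, rfl⟩
      exact Finset.subset_union_right
  rw [Pr, Finset.filter_congr_decidable, hfil, Finset.sum_image (by
    intro x hx y hy h
    rw [Finset.mem_coe, Finset.mem_powerset] at hx hy
    have hx' : Disjoint x E₀ := disjoint_compl_left.mono_left hx
    have hy' : Disjoint y E₀ := disjoint_compl_left.mono_left hy
    calc x = (x ∪ E₀) \ E₀ := by rw [Finset.union_sdiff_right, Finset.sdiff_eq_self_of_disjoint hx']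
    _ = (y ∪ E₀) \ E₀ := by rw [show x ∪ E₀ = y ∪ E₀ from h]
    _ = y := by rw [Finset.union_sdiff_right, Finset.sdiff_eq_self_of_disjoint hy'])]
  have key : ∀ Δ ∈ E₀ᶜ.powerset, wt n p (Δ ∪ E₀)
      = p ^ E₀.card * (p ^ Δ.card * (1 - p) ^ (E₀ᶜ \ Δ).card) := by
    intro Δ hΔ
    rw [Finset.mem_powerset] at hΔ
    have hdis : Disjoint Δ E₀ := disjoint_compl_left.mono_left hΔ
    have hc : (Δ ∪ E₀).card = Δ.card + E₀.card := Finset.card_union_of_disjoint hdis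
    have hcc : E₀ᶜ.card = n.choose 2 - E₀.card := by
      rw [Finset.card_compl, hN]
    have h1 : (E₀ᶜ \ Δ).card = E₀ᶜ.card - Δ.card := Finset.card_sdiff_of_subset hΔ
    have h2 : Δ.card ≤ E₀ᶜ.card := Finset.card_le_card hΔ
    have h3 : E₀.card ≤ n.choose 2 := by
      rw [← hN]; exact Finset.card_le_univ _ |>.trans_eq (Finset.card_univ)
    have : n.choose 2 - (Δ.card + E₀.card) = (E₀ᶜ \ Δ).card := by omega
    rw [wt, hc, ← this, pow_add]
    ring
  rw [Finset.sum_congr rfl key, ← Finset.mul_sum]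
  have : ∑ Δ ∈ E₀ᶜ.powerset, p ^ Δ.card * (1 - p) ^ (E₀ᶜ \ Δ).card = 1 := by
    have := Finset.prod_add (fun _ : EdgeType n => p) (fun _ => 1 - p) E₀ᶜ
    simp only [Finset.prod_const] at this
    rw [← this]
    simp
  rw [this, mul_one]

lemma edgeSet_disjoint {n : ℕ} {A B : Finset (Fin n)} (h : Disjoint A B) :
    Disjoint (edgeSet n A) (edgeSet n B) := by
  rw [Finset.disjoint_iff_inter_eq_empty, edgeSet_inter,
    Finset.disjoint_iff_inter_eq_empty.1 h, edgeSet_empty]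

/-- For disjoint `r`-element subsets `S, T` and disjoint `r`-element subsets `S', T'` with
`a = |S∩S'|`, `b = |T∩S'|`, `c = |S∩T'|`, `d = |T∩T'|`, the probability that each of
`S, T, S', T'` induces a complete subgraph of `G(n,p)` equals
`p^{4·C(r,2) − C(a,2) − C(b,2) − C(c,2) − C(d,2)}`. -/
theorem stmt6 (r : ℕ) (hr : 1 ≤ r) (p : ℝ) (hp0 : 0 < p) (hp1 : p < 1) (n : ℕ)
    (S T S' T' : Finset (Fin n))
    (hS : S.card = r) (hT : T.card = r) (hST : Disjoint S T)
    (hS' : S'.card = r) (hT' : T'.card = r) (hST' : Disjoint S' T') :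
    Pr n p (fun Γ => IsCliqueIn n Γ S ∧ IsCliqueIn n Γ T ∧
        IsCliqueIn n Γ S' ∧ IsCliqueIn n Γ T') =
      p ^ ((4 * r.choose 2 : ℤ) - ((S ∩ S').card.choose 2 : ℤ) - ((T ∩ S').card.choose 2 : ℤ)
          - ((S ∩ T').card.choose 2 : ℤ) - ((T ∩ T').card.choose 2 : ℤ)) := by
  classical
  set eS := edgeSet n S
  set eT := edgeSet n T
  set eS' := edgeSet n S'
  set eT' := edgeSet n T'
  set E₀ := (eS ∪ eT) ∪ (eS' ∪ eT') with hE₀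
  have hevent : Pr n p (fun Γ => IsCliqueIn n Γ S ∧ IsCliqueIn n Γ T ∧
      IsCliqueIn n Γ S' ∧ IsCliqueIn n Γ T') = Pr n p (fun Γ => E₀ ⊆ Γ) := by
    refine congrArg (Pr n p) (funext fun Γ => propext ?_)
    simp only [hE₀, isCliqueIn_iff, Finset.union_subset_iff]
    tauto
  rw [hevent, pr_superset]
  -- cardinality computation
  have dAB : Disjoint (edgeSet n (S ∩ S')) (edgeSet n (T ∩ S')) :=
    edgeSet_disjoint (hST.mono inter_subset_left inter_subset_left)
  have dAC : Disjoint (edgeSet n (S ∩ S')) (edgeSet n (S ∩ T')) :=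
    edgeSet_disjoint (hST'.mono inter_subset_right inter_subset_right)
  have dAD : Disjoint (edgeSet n (S ∩ S')) (edgeSet n (T ∩ T')) :=
    edgeSet_disjoint (hST.mono inter_subset_left inter_subset_left)
  have dBC : Disjoint (edgeSet n (T ∩ S')) (edgeSet n (S ∩ T')) :=
    edgeSet_disjoint (hST'.mono inter_subset_right inter_subset_right)
  have dBD : Disjoint (edgeSet n (T ∩ S')) (edgeSet n (T ∩ T')) :=
    edgeSet_disjoint (hST'.mono inter_subset_right inter_subset_right)
  have dCD : Disjoint (edgeSet n (S ∩ T')) (edgeSet n (T ∩ T')) :=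
    edgeSet_disjoint (hST.mono inter_subset_left inter_subset_left)
  have hInter : (eS ∪ eT) ∩ (eS' ∪ eT')
      = (edgeSet n (S ∩ S') ∪ edgeSet n (S ∩ T')) ∪
        (edgeSet n (T ∩ S') ∪ edgeSet n (T ∩ T')) := by
    rw [Finset.union_inter_distrib_right, Finset.inter_union_distrib_left,
      Finset.inter_union_distrib_left, edgeSet_inter, edgeSet_inter, edgeSet_inter,
      edgeSet_inter]
  have hIcard : ((eS ∪ eT) ∩ (eS' ∪ eT')).card
      = (S ∩ S').card.choose 2 + (S ∩ T').card.choose 2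
        + ((T ∩ S').card.choose 2 + (T ∩ T').card.choose 2) := by
    rw [hInter, Finset.card_union_of_disjoint, Finset.card_union_of_disjoint dAC,
      Finset.card_union_of_disjoint dBD, card_edgeSet, card_edgeSet, card_edgeSet,
      card_edgeSet]
    · exact Finset.disjoint_union_left.2
        ⟨Finset.disjoint_union_right.2 ⟨dAB, dAD⟩,
         Finset.disjoint_union_right.2 ⟨dBC.symm, dCD⟩⟩
  have c1 : (eS ∪ eT).card = r.choose 2 + r.choose 2 := by
    rw [Finset.card_union_of_disjoint (edgeSet_disjoint hST), card_edgeSet, card_edgeSet,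
      hS, hT]
  have c2 : (eS' ∪ eT').card = r.choose 2 + r.choose 2 := by
    rw [Finset.card_union_of_disjoint (edgeSet_disjoint hST'), card_edgeSet, card_edgeSet,
      hS', hT']
  have hkey : E₀.card + ((S ∩ S').card.choose 2 + (S ∩ T').card.choose 2
        + ((T ∩ S').card.choose 2 + (T ∩ T').card.choose 2)) = 4 * r.choose 2 := by
    have := Finset.card_union_add_card_inter (eS ∪ eT) (eS' ∪ eT')
    rw [c1, c2, hIcard, ← hE₀] at this
    omega
  have hz : ((4 * r.choose 2 : ℤ) - ((S ∩ S').card.choose 2 : ℤ)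
      - ((T ∩ S').card.choose 2 : ℤ) - ((S ∩ T').card.choose 2 : ℤ)
      - ((T ∩ T').card.choose 2 : ℤ)) = (E₀.card : ℤ) := by omega
  rw [hz, zpow_natCast]


end
end

section
/- Fix an integer r ≥ 1, a real number p with 0 < p < 1, and an integer n ≥ 4r. Let X = X_r be the number of (r,r)-bicliques in the Erdős–Rényi random graph G(n,p). Then E(X²)/(E X)² = Σ_{α∈D} F_α·q^{L(α)}, where q = 1/p and D, F_α, L(α) are defined in the context. -/
open Finset Filter

noncomputable section

open Classical in
/-- `X_r(Γ)`: the number of `(r,r)`-bicliques of `Γ`, i.e. ordered pairs `(S,T)` of disjoint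
`r`-element vertex subsets each inducing a complete subgraph of `Γ`. -/
def Xr (n r : ℕ) (Γ : RGraph n) : ℕ :=
  (Finset.univ.filter (fun ST : Finset (Fin n) × Finset (Fin n) =>
    ST.1.card = r ∧ ST.2.card = r ∧ Disjoint ST.1 ST.2 ∧
    IsCliqueIn n Γ ST.1 ∧ IsCliqueIn n Γ ST.2)).card

/-- The set `D` of vectors `(a,b,c,d)` of nonnegative integers with
`a+b ≤ r`, `a+c ≤ r`, `c+d ≤ r`, `b+d ≤ r`. -/
def Dset (r : ℕ) : Finset (ℕ × ℕ × ℕ × ℕ) :=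
  (Finset.range (r+1) ×ˢ Finset.range (r+1) ×ˢ Finset.range (r+1) ×ˢ Finset.range (r+1)).filter
    (fun α => α.1 + α.2.1 ≤ r ∧ α.1 + α.2.2.1 ≤ r ∧ α.2.2.1 + α.2.2.2 ≤ r ∧ α.2.1 + α.2.2.2 ≤ r)

/-- The coefficient `F_α` for `α = (a,b,c,d)`. -/
def Fa (n r : ℕ) (α : ℕ × ℕ × ℕ × ℕ) : ℝ :=
  match α with
  | (a, b, c, d) =>
    ((r.factorial : ℝ) / ((a.factorial : ℝ) * c.factorial * (r - a - c).factorial)) *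
    ((r.factorial : ℝ) / ((b.factorial : ℝ) * d.factorial * (r - b - d).factorial)) *
    (((n - 2*r).factorial : ℝ) /
      (((r - a - b).factorial : ℝ) * (r - c - d).factorial * (n - 4*r + a + b + c + d).factorial)) /
    ((n.factorial : ℝ) / ((r.factorial : ℝ) * r.factorial * (n - 2*r).factorial))

/-- `L(α) = C(a,2) + C(b,2) + C(c,2) + C(d,2)`. -/
def La (α : ℕ × ℕ × ℕ × ℕ) : ℕ :=
  α.1.choose 2 + α.2.1.choose 2 + α.2.2.1.choose 2 + α.2.2.2.choose 2

/-- `T_α = F_α · q^{L(α)}` with `q = 1/p`. -/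
def Ta (n r : ℕ) (p : ℝ) (α : ℕ × ℕ × ℕ × ℕ) : ℝ := Fa n r α * (p⁻¹) ^ (La α)

namespace Aux7

def ev {n : ℕ} (e : EdgeType n) : Sym2 (Fin n) := Subtype.val e
open Classical in
def cE (n : ℕ) (S : Finset (Fin n)) : Finset (EdgeType n) :=
  Finset.univ.filter (fun e => ∀ v ∈ ev e, v ∈ S)
lemma mem_cE {n : ℕ} {S : Finset (Fin n)} {e : EdgeType n} :
    e ∈ cE n S ↔ ∀ v ∈ ev e, v ∈ S := by
  classical simp [cE]
lemma card_edgeType (n : ℕ) : Fintype.card (EdgeType n) = n.choose 2 := by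
  classical
  have h : Fintype.card {e : Sym2 (Fin n) // ¬ e.IsDiag} = n.choose 2 := by
    rw [Sym2.card_subtype_not_diag, Fintype.card_fin]
  exact (Fintype.card_congr (Equiv.refl _)).trans h

lemma card_cE {n : ℕ} (S : Finset (Fin n)) : (cE n S).card = S.card.choose 2 := by
  classical
  rw [← Sym2.card_image_offDiag]
  apply Finset.card_bij (fun e _ => ev e)
  · rintro ⟨z, hz⟩ he
    induction z using Sym2.ind with
    | _ x y =>
      have hxy : x ≠ y := by simpa [Sym2.mk_isDiag_iff] using hz
      have hx : x ∈ S := mem_cE.1 he x (Sym2.mem_mk_left _ _)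
      have hy : y ∈ S := mem_cE.1 he y (Sym2.mem_mk_right _ _)
      exact Finset.mem_image.2 ⟨(x, y), Finset.mem_offDiag.2 ⟨hx, hy, hxy⟩, rfl⟩
  · intro e₁ h₁ e₂ h₂ h
    exact Subtype.ext h
  · intro z hz
    obtain ⟨⟨x, y⟩, hxy, rfl⟩ := Finset.mem_image.1 hz
    obtain ⟨hx, hy, hne⟩ := Finset.mem_offDiag.1 hxy
    refine ⟨⟨s(x, y), by simpa [Sym2.mk_isDiag_iff] using hne⟩, ?_, rfl⟩
    refine mem_cE.2 fun v hv => ?_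
    rcases Sym2.mem_iff.1 hv with rfl | rfl <;> assumption

-- new stuff
lemma cE_inter {n : ℕ} (S T : Finset (Fin n)) : cE n S ∩ cE n T = cE n (S ∩ T) := by
  ext e
  simp only [Finset.mem_inter, mem_cE, forall_and]

lemma cE_disjoint {n : ℕ} {S T : Finset (Fin n)} (h : Disjoint S T) :
    Disjoint (cE n S) (cE n T) := by
  rw [Finset.disjoint_left]
  intro e heS heT
  obtain ⟨z, hz⟩ := e
  induction z using Sym2.ind with
  | _ x y =>
    have hxS : x ∈ S := mem_cE.1 heS x (Sym2.mem_mk_left _ _)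
    have hxT : x ∈ T := mem_cE.1 heT x (Sym2.mem_mk_left _ _)
    exact (Finset.disjoint_left.1 h) hxS hxT

lemma isCliqueIn_iff {n : ℕ} {Γ : RGraph n} {S : Finset (Fin n)} :
    IsCliqueIn n Γ S ↔ cE n S ⊆ Γ := by
  constructor
  · intro hcl e he
    obtain ⟨z, hz⟩ := e
    induction z using Sym2.ind with
    | _ x y =>
      have hxy : x ≠ y := by simpa [Sym2.mk_isDiag_iff] using hz
      have hx : x ∈ S := mem_cE.1 he x (Sym2.mem_mk_left _ _)
      have hy : y ∈ S := mem_cE.1 he y (Sym2.mem_mk_right _ _)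
      exact hcl x hx y hy hxy
  · intro hsub v hv w hw hvw
    refine hsub (mem_cE.2 fun u hu => ?_)
    rcases Sym2.mem_iff.1 hu with rfl | rfl <;> assumption

/-- pairs of disjoint subsets of `s` with cards `i`, `j`. -/
def dp {n : ℕ} (s : Finset (Fin n)) (i j : ℕ) : Finset (Finset (Fin n) × Finset (Fin n)) :=
  ((s.powersetCard i) ×ˢ (s.powersetCard j)).filter fun AB => Disjoint AB.1 AB.2

lemma mem_dp {n : ℕ} {s : Finset (Fin n)} {i j : ℕ} {AB : Finset (Fin n) × Finset (Fin n)} :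
    AB ∈ dp s i j ↔ (AB.1 ⊆ s ∧ AB.1.card = i) ∧ (AB.2 ⊆ s ∧ AB.2.card = j) ∧
      Disjoint AB.1 AB.2 := by
  simp [dp, Finset.mem_powersetCard, and_assoc]

lemma card_filter_product {γ δ : Type*} [DecidableEq γ] (A : Finset γ) (B : Finset δ)
    (Q : γ → δ → Prop) [∀ x y, Decidable (Q x y)] :
    ((A ×ˢ B).filter (fun z => Q z.1 z.2)).card = ∑ x ∈ A, (B.filter (fun y => Q x y)).card := by
  rw [Finset.card_eq_sum_card_fiberwise
    (f := Prod.fst) (t := A)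
    (fun z hz => (Finset.mem_product.1 (Finset.mem_filter.1 hz).1).1)]
  refine Finset.sum_congr rfl fun x hx => ?_
  refine Finset.card_nbij' Prod.snd (fun y => (x, y)) ?_ ?_ ?_ ?_
  · intro z hz
    simp only [Finset.mem_coe, Finset.mem_filter, Finset.mem_product] at hz ⊢
    obtain ⟨⟨⟨h1, h2⟩, hQ⟩, hfst⟩ := hz
    exact ⟨h2, by rwa [← hfst]⟩
  · intro y hy
    simp only [Finset.mem_coe, Finset.mem_filter, Finset.mem_product] at hy ⊢
    exact ⟨⟨⟨hx, hy.1⟩, hy.2⟩, trivial⟩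
  · intro z hz
    simp only [Finset.mem_coe, Finset.mem_filter] at hz
    exact Prod.ext_iff.mpr ⟨hz.2.symm, rfl⟩
  · intro y hy
    rfl

lemma card_dp {n : ℕ} (s : Finset (Fin n)) (i j : ℕ) :
    (dp s i j).card = s.card.choose i * (s.card - i).choose j := by
  classical
  rw [dp, card_filter_product]
  have key : ∀ A ∈ s.powersetCard i,
      ((s.powersetCard j).filter (fun B => Disjoint A B)).card = (s.card - i).choose j := by
    intro A hA
    obtain ⟨hAs, hAc⟩ := Finset.mem_powersetCard.1 hA
    have : (s.powersetCard j).filter (fun B => Disjoint A B) = (s \ A).powersetCard j := by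
      ext B
      simp only [Finset.mem_filter, Finset.mem_powersetCard, Finset.subset_sdiff]
      constructor
      · rintro ⟨⟨h1, h2⟩, h3⟩
        exact ⟨⟨h1, h3.symm⟩, h2⟩
      · rintro ⟨⟨h1, h3⟩, h2⟩
        exact ⟨⟨h1, h2⟩, h3.symm⟩
    rw [this, Finset.card_powersetCard, Finset.card_sdiff_of_subset hAs, hAc]
  rw [Finset.sum_congr rfl key, Finset.sum_const, Finset.card_powersetCard, smul_eq_mul]

lemma binom_one {γ : Type*} [DecidableEq γ] (p : ℝ) (s : Finset γ) :
    ∑ D ∈ s.powerset, p ^ D.card * (1 - p) ^ (s.card - D.card) = 1 := by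
  have h := Finset.prod_add (fun _ : γ => p) (fun _ : γ => (1 - p)) s
  simp only [Finset.prod_const] at h
  have h2 : ∀ D ∈ s.powerset, p ^ D.card * (1 - p) ^ (s.card - D.card)
      = p ^ D.card * (1 - p) ^ (s \ D).card := by
    intro D hD
    rw [Finset.card_sdiff_of_subset (Finset.mem_powerset.1 hD)]
  rw [Finset.sum_congr rfl h2, ← h]
  norm_num

lemma sum_wt_ind {n : ℕ} (p : ℝ) (E : Finset (EdgeType n)) :
    ∑ Γ : RGraph n, wt n p Γ * (if E ⊆ Γ then (1 : ℝ) else 0) = p ^ E.card := by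
  classical
  simp only [mul_ite, mul_one, mul_zero, ← Finset.sum_filter]
  have hM : (Finset.univ : Finset (EdgeType n)).card = n.choose 2 := by
    rw [Finset.card_univ, card_edgeType]
  rw [Finset.sum_nbij' (i := fun Γ => Γ \ E) (j := fun D => E ∪ D)
      (t := (Finset.univ \ E).powerset)
      (g := fun D => p ^ E.card * (p ^ D.card * (1 - p) ^ ((Finset.univ \ E).card - D.card)))]
  · rw [← Finset.mul_sum, binom_one, mul_one]
  · intro Γ hΓ
    exact Finset.mem_powerset.2 (Finset.sdiff_subset_sdiff (Finset.subset_univ _) le_rfl)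
  · intro D hD
    simp only [Finset.mem_filter, Finset.mem_univ, true_and]
    exact Finset.subset_union_left
  · intro Γ hΓ
    simp only [Finset.mem_filter, Finset.mem_univ, true_and] at hΓ
    exact Finset.union_sdiff_of_subset hΓ
  · intro D hD
    exact Finset.union_sdiff_cancel_left (by
      have h := Finset.mem_powerset.1 hD
      exact Finset.disjoint_left.2 fun a ha haD => (Finset.mem_sdiff.1 (h haD)).2 ha)
  · intro Γ hΓ
    simp only [Finset.mem_filter, Finset.mem_univ, true_and] at hΓ
    have hle := Finset.card_le_card hΓ
    have hle2 : Γ.card ≤ (Finset.univ : Finset (EdgeType n)).card := Finset.card_le_univ _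
    have hcard : Γ.card = E.card + (Γ \ E).card := by
      rw [Finset.card_sdiff_of_subset hΓ]; omega
    have hexp : (Finset.univ \ E).card - (Γ \ E).card = n.choose 2 - Γ.card := by
      rw [Finset.card_sdiff_of_subset (Finset.subset_univ _), hM, Finset.card_sdiff_of_subset hΓ]; omega
    rw [wt, hcard, pow_add, hexp, mul_assoc, ← hcard]

section Recon
variable {n : ℕ} {S T A B C D E F : Finset (Fin n)}

lemma part3_eq (S T A : Finset (Fin n)) : (A ∩ S) ∪ (A ∩ T) ∪ (A \ (S ∪ T)) = A := by
  ext x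
  simp only [Finset.mem_union, Finset.mem_inter, Finset.mem_sdiff]
  tauto

lemma part3_card (hST : Disjoint S T) (A : Finset (Fin n)) :
    (A ∩ S).card + (A ∩ T).card + (A \ (S ∪ T)).card = A.card := by
  classical
  have d1 : Disjoint (A ∩ S) (A ∩ T) :=
    hST.mono Finset.inter_subset_right Finset.inter_subset_right
  have d2 : Disjoint ((A ∩ S) ∪ (A ∩ T)) (A \ (S ∪ T)) := by
    rw [Finset.disjoint_left]
    intro x hx hx2
    have h2 := (Finset.mem_sdiff.1 hx2).2
    rcases Finset.mem_union.1 hx with h | h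
    · exact h2 (Finset.mem_union_left _ (Finset.mem_inter.1 h).2)
    · exact h2 (Finset.mem_union_right _ (Finset.mem_inter.1 h).2)
  rw [← Finset.card_union_of_disjoint d1, ← Finset.card_union_of_disjoint d2, part3_eq]

lemma hSU' (S T : Finset (Fin n)) : Disjoint S (Finset.univ \ (S ∪ T)) :=
  (Finset.sdiff_disjoint.mono_right Finset.subset_union_left).symm

lemma hTU' (S T : Finset (Fin n)) : Disjoint T (Finset.univ \ (S ∪ T)) :=
  (Finset.sdiff_disjoint.mono_right Finset.subset_union_right).symm

lemma recon_S (hST : Disjoint S T) (hA : A ⊆ S) (hC : C ⊆ T)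
    (hE : E ⊆ Finset.univ \ (S ∪ T)) : (A ∪ C ∪ E) ∩ S = A := by
  ext x
  simp only [Finset.mem_inter, Finset.mem_union]
  constructor
  · rintro ⟨(h | h) | h, hs⟩
    · exact h
    · exact absurd (hC h) (Finset.disjoint_left.1 hST hs)
    · exact absurd (Finset.mem_union_left _ hs) (Finset.mem_sdiff.1 (hE h)).2
  · intro h
    exact ⟨Or.inl (Or.inl h), hA h⟩

lemma recon_T (hST : Disjoint S T) (hA : A ⊆ S) (hC : C ⊆ T)
    (hE : E ⊆ Finset.univ \ (S ∪ T)) : (A ∪ C ∪ E) ∩ T = C := by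
  ext x
  simp only [Finset.mem_inter, Finset.mem_union]
  constructor
  · rintro ⟨(h | h) | h, hs⟩
    · exact absurd (hA h) (Finset.disjoint_right.1 hST hs)
    · exact h
    · exact absurd (Finset.mem_union_right _ hs) (Finset.mem_sdiff.1 (hE h)).2
  · intro h
    exact ⟨Or.inl (Or.inr h), hC h⟩

lemma recon_U (hA : A ⊆ S) (hC : C ⊆ T)
    (hE : E ⊆ Finset.univ \ (S ∪ T)) : (A ∪ C ∪ E) \ (S ∪ T) = E := by
  ext x
  simp only [Finset.mem_sdiff, Finset.mem_union]
  constructor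
  · rintro ⟨(h | h) | h, hs⟩
    · exact absurd (Or.inl (hA h)) hs
    · exact absurd (Or.inr (hC h)) hs
    · exact h
  · intro h
    have := Finset.mem_sdiff.1 (hE h)
    exact ⟨Or.inr h, by simpa using this.2⟩

lemma recon_disj (hST : Disjoint S T) (hA : A ⊆ S) (hB : B ⊆ S) (hC : C ⊆ T) (hD : D ⊆ T)
    (hE : E ⊆ Finset.univ \ (S ∪ T)) (hF : F ⊆ Finset.univ \ (S ∪ T))
    (dAB : Disjoint A B) (dCD : Disjoint C D) (dEF : Disjoint E F) :
    Disjoint (A ∪ C ∪ E) (B ∪ D ∪ F) := by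
  simp only [Finset.disjoint_union_left, Finset.disjoint_union_right]
  refine ⟨⟨⟨⟨?_, ?_⟩, ?_⟩, ⟨⟨?_, ?_⟩, ?_⟩⟩, ⟨⟨?_, ?_⟩, ?_⟩⟩
  · exact dAB
  · exact hST.symm.mono hC hB
  · exact (hSU' S T).symm.mono hE hB
  · exact hST.mono hA hD
  · exact dCD
  · exact (hTU' S T).symm.mono hE hD
  · exact (hSU' S T).mono hA hF
  · exact (hTU' S T).mono hC hF
  · exact dEF

end Recon

lemma inner_card {n r : ℕ} (S T : Finset (Fin n)) (hSc : S.card = r) (hTc : T.card = r)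
    (hST : Disjoint S T) (a b c d : ℕ) (hab : a + b ≤ r) (hac : a + c ≤ r)
    (hcd : c + d ≤ r) (hbd : b + d ≤ r) :
    ((dp (Finset.univ : Finset (Fin n)) r r).filter
        (fun z => (z.1 ∩ S).card = a ∧ (z.2 ∩ S).card = b ∧
                  (z.1 ∩ T).card = c ∧ (z.2 ∩ T).card = d)).card
      = (r.choose a * (r - a).choose b) * (r.choose c * (r - c).choose d) *
        ((n - 2*r).choose (r - a - c) * ((n - 2*r - (r - a - c)).choose (r - b - d))) := by
  classical
  have hU : (Finset.univ \ (S ∪ T) : Finset (Fin n)).card = n - 2*r := by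
    rw [Finset.card_sdiff_of_subset (Finset.subset_univ _), Finset.card_union_of_disjoint hST, hSc, hTc,
      Finset.card_univ, Fintype.card_fin]
    omega
  have key : ((dp (Finset.univ : Finset (Fin n)) r r).filter
        (fun z => (z.1 ∩ S).card = a ∧ (z.2 ∩ S).card = b ∧
                  (z.1 ∩ T).card = c ∧ (z.2 ∩ T).card = d)).card
      = (dp S a b ×ˢ (dp T c d ×ˢ dp (Finset.univ \ (S ∪ T)) (r - a - c) (r - b - d))).card := by
    apply Finset.card_nbij'
      (i := fun z => ((z.1 ∩ S, z.2 ∩ S), ((z.1 ∩ T, z.2 ∩ T), (z.1 \ (S ∪ T), z.2 \ (S ∪ T)))))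
      (j := fun w => (w.1.1 ∪ w.2.1.1 ∪ w.2.2.1, w.1.2 ∪ w.2.1.2 ∪ w.2.2.2))
    · intro z hz
      obtain ⟨hzd, ha, hb, hc, hd⟩ := Finset.mem_filter.1 hz
      obtain ⟨⟨_, z1c⟩, ⟨_, z2c⟩, dz⟩ := mem_dp.1 hzd
      have p1 := part3_card hST z.1
      have p2 := part3_card hST z.2
      have e1 : (z.1 \ (S ∪ T)).card = r - a - c := by omega
      have e2 : (z.2 \ (S ∪ T)).card = r - b - d := by omega
      refine Finset.mem_product.2 ⟨mem_dp.2 ⟨⟨Finset.inter_subset_right, ha⟩,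
        ⟨Finset.inter_subset_right, hb⟩,
        dz.mono Finset.inter_subset_left Finset.inter_subset_left⟩,
        Finset.mem_product.2 ⟨mem_dp.2 ⟨⟨Finset.inter_subset_right, hc⟩,
          ⟨Finset.inter_subset_right, hd⟩,
          dz.mono Finset.inter_subset_left Finset.inter_subset_left⟩,
        mem_dp.2 ⟨⟨Finset.sdiff_subset_sdiff (Finset.subset_univ _) le_rfl, e1⟩,
          ⟨Finset.sdiff_subset_sdiff (Finset.subset_univ _) le_rfl, e2⟩,
          dz.mono Finset.sdiff_subset Finset.sdiff_subset⟩⟩⟩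
    · intro w hw
      obtain ⟨hw1, hw23⟩ := Finset.mem_product.1 hw
      obtain ⟨hw2, hw3⟩ := Finset.mem_product.1 hw23
      obtain ⟨⟨hA, cA⟩, ⟨hB, cB⟩, dAB⟩ := mem_dp.1 hw1
      obtain ⟨⟨hC, cC⟩, ⟨hD, cD⟩, dCD⟩ := mem_dp.1 hw2
      obtain ⟨⟨hE, cE'⟩, ⟨hF, cF⟩, dEF⟩ := mem_dp.1 hw3
      have dAC : Disjoint w.1.1 w.2.1.1 := hST.mono hA hC
      have dACE : Disjoint (w.1.1 ∪ w.2.1.1) w.2.2.1 :=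
        Finset.disjoint_union_left.2 ⟨(hSU' S T).mono hA hE, (hTU' S T).mono hC hE⟩
      have dBD : Disjoint w.1.2 w.2.1.2 := hST.mono hB hD
      have dBDF : Disjoint (w.1.2 ∪ w.2.1.2) w.2.2.2 :=
        Finset.disjoint_union_left.2 ⟨(hSU' S T).mono hB hF, (hTU' S T).mono hD hF⟩
      refine Finset.mem_filter.2 ⟨mem_dp.2 ⟨⟨Finset.subset_univ _, ?_⟩, ⟨Finset.subset_univ _, ?_⟩,
        recon_disj hST hA hB hC hD hE hF dAB dCD dEF⟩, ?_, ?_, ?_, ?_⟩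
      · rw [Finset.card_union_of_disjoint dACE, Finset.card_union_of_disjoint dAC, cA, cC, cE']
        omega
      · rw [Finset.card_union_of_disjoint dBDF, Finset.card_union_of_disjoint dBD, cB, cD, cF]
        omega
      · rw [recon_S hST hA hC hE, cA]
      · rw [recon_S hST hB hD hF, cB]
      · rw [recon_T hST hA hC hE, cC]
      · rw [recon_T hST hB hD hF, cD]
    · intro z hz
      exact Prod.ext_iff.mpr ⟨part3_eq S T z.1, part3_eq S T z.2⟩
    · intro w hw
      obtain ⟨⟨A, B⟩, ⟨⟨C, D⟩, ⟨E', F'⟩⟩⟩ := w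
      obtain ⟨hw1, hw23⟩ := Finset.mem_product.1 hw
      obtain ⟨hw2, hw3⟩ := Finset.mem_product.1 hw23
      obtain ⟨⟨hA, cA⟩, ⟨hB, cB⟩, dAB⟩ := mem_dp.1 hw1
      obtain ⟨⟨hC, cC⟩, ⟨hD, cD⟩, dCD⟩ := mem_dp.1 hw2
      obtain ⟨⟨hE, cE'⟩, ⟨hF, cF⟩, dEF⟩ := mem_dp.1 hw3
      simp only [Prod.mk.injEq]
      exact ⟨⟨recon_S hST hA hC hE, recon_S hST hB hD hF⟩,
        ⟨recon_T hST hA hC hE, recon_T hST hB hD hF⟩,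
        recon_U hA hC hE, recon_U hB hD hF⟩
  rw [key, Finset.card_product, Finset.card_product, card_dp, card_dp, card_dp, hSc, hTc, hU]
  ring

def PP (n r : ℕ) : Finset (Finset (Fin n) × Finset (Fin n)) := dp (Finset.univ : Finset (Fin n)) r r

def bE (n : ℕ) (S T : Finset (Fin n)) : Finset (EdgeType n) := cE n S ∪ cE n T

lemma card_bE {n r : ℕ} {S T : Finset (Fin n)} (hSc : S.card = r) (hTc : T.card = r)
    (hST : Disjoint S T) : (bE n S T).card = 2 * r.choose 2 := by
  rw [bE, Finset.card_union_of_disjoint (cE_disjoint hST), card_cE, card_cE, hSc, hTc]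
  ring

lemma Xr_filter (n r : ℕ) (Γ : RGraph n) :
    Xr n r Γ = ((PP n r).filter (fun y => bE n y.1 y.2 ⊆ Γ)).card := by
  classical
  rw [Xr]
  congr 1
  ext y
  simp only [Finset.mem_filter, Finset.mem_univ, true_and, PP, mem_dp, isCliqueIn_iff, bE,
    Finset.union_subset_iff]
  constructor
  · rintro ⟨c1, c2, dis, q1, q2⟩
    exact ⟨⟨⟨Finset.subset_univ _, c1⟩, ⟨Finset.subset_univ _, c2⟩, dis⟩, q1, q2⟩
  · rintro ⟨⟨⟨_, c1⟩, ⟨_, c2⟩, dis⟩, q1, q2⟩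
    exact ⟨c1, c2, dis, q1, q2⟩

lemma Xr_sum (n r : ℕ) (Γ : RGraph n) :
    (Xr n r Γ : ℝ) = ∑ y ∈ PP n r, (if bE n y.1 y.2 ⊆ Γ then (1 : ℝ) else 0) := by
  classical
  rw [Xr_filter, Finset.card_filter]
  push_cast
  rfl

lemma EVX (n r : ℕ) (p : ℝ) :
    EV n p (fun Γ => (Xr n r Γ : ℝ)) = ((PP n r).card : ℝ) * p ^ (2 * r.choose 2) := by
  classical
  rw [EV]
  simp_rw [Xr_sum, Finset.mul_sum]
  rw [Finset.sum_comm]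
  have h : ∀ y ∈ PP n r,
      ∑ Γ : RGraph n, wt n p Γ * (if bE n y.1 y.2 ⊆ Γ then (1 : ℝ) else 0)
        = p ^ (2 * r.choose 2) := by
    intro y hy
    obtain ⟨⟨_, c1⟩, ⟨_, c2⟩, dis⟩ := mem_dp.1 hy
    rw [sum_wt_ind, card_bE c1 c2 dis]
  rw [Finset.sum_congr rfl h, Finset.sum_const, nsmul_eq_mul]

def am {n : ℕ} (w : (Finset (Fin n) × Finset (Fin n)) × (Finset (Fin n) × Finset (Fin n))) :
    ℕ × ℕ × ℕ × ℕ :=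
  ((w.2.1 ∩ w.1.1).card, (w.2.2 ∩ w.1.1).card, (w.2.1 ∩ w.1.2).card, (w.2.2 ∩ w.1.2).card)

lemma card_add_card_le {n : ℕ} {X Y W : Finset (Fin n)} (h : Disjoint X Y) (hX : X ⊆ W)
    (hY : Y ⊆ W) : X.card + Y.card ≤ W.card := by
  rw [← Finset.card_union_of_disjoint h]
  exact Finset.card_le_card (Finset.union_subset hX hY)

lemma am_mem {n r : ℕ} {y z : Finset (Fin n) × Finset (Fin n)} (hy : y ∈ PP n r)
    (hz : z ∈ PP n r) : am (y, z) ∈ Dset r := by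
  obtain ⟨⟨_, cy1⟩, ⟨_, cy2⟩, dy⟩ := mem_dp.1 hy
  obtain ⟨⟨_, cz1⟩, ⟨_, cz2⟩, dz⟩ := mem_dp.1 hz
  have hab : (z.1 ∩ y.1).card + (z.2 ∩ y.1).card ≤ r := by
    rw [← cy1]
    exact card_add_card_le (dz.mono Finset.inter_subset_left Finset.inter_subset_left)
      Finset.inter_subset_right Finset.inter_subset_right
  have hac : (z.1 ∩ y.1).card + (z.1 ∩ y.2).card ≤ r := by
    rw [← cz1]
    exact card_add_card_le (dy.mono Finset.inter_subset_right Finset.inter_subset_right)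
      Finset.inter_subset_left Finset.inter_subset_left
  have hcd : (z.1 ∩ y.2).card + (z.2 ∩ y.2).card ≤ r := by
    rw [← cy2]
    exact card_add_card_le (dz.mono Finset.inter_subset_left Finset.inter_subset_left)
      Finset.inter_subset_right Finset.inter_subset_right
  have hbd : (z.2 ∩ y.1).card + (z.2 ∩ y.2).card ≤ r := by
    rw [← cz2]
    exact card_add_card_le (dy.mono Finset.inter_subset_right Finset.inter_subset_right)
      Finset.inter_subset_left Finset.inter_subset_left
  simp only [Dset, Finset.mem_filter, Finset.mem_product, Finset.mem_range, am]
  refine ⟨⟨?_, ?_, ?_, ?_⟩, ?_, ?_, ?_, ?_⟩ <;> omega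

lemma card_inter_bE {n r : ℕ} {y z : Finset (Fin n) × Finset (Fin n)} (hy : y ∈ PP n r)
    (hz : z ∈ PP n r) :
    (bE n y.1 y.2 ∩ bE n z.1 z.2).card = La (am (y, z)) := by
  classical
  obtain ⟨⟨_, cy1⟩, ⟨_, cy2⟩, dy⟩ := mem_dp.1 hy
  obtain ⟨⟨_, cz1⟩, ⟨_, cz2⟩, dz⟩ := mem_dp.1 hz
  have heq : bE n y.1 y.2 ∩ bE n z.1 z.2
      = cE n (z.1 ∩ y.1) ∪ cE n (z.2 ∩ y.1) ∪ cE n (z.1 ∩ y.2) ∪ cE n (z.2 ∩ y.2) := by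
    ext e
    simp only [bE, Finset.mem_union, Finset.mem_inter, mem_cE, Finset.mem_inter, forall_and]
    tauto
  have d12 : Disjoint (cE n (z.1 ∩ y.1)) (cE n (z.2 ∩ y.1)) :=
    cE_disjoint (dz.mono Finset.inter_subset_left Finset.inter_subset_left)
  have d3 : Disjoint (cE n (z.1 ∩ y.1) ∪ cE n (z.2 ∩ y.1)) (cE n (z.1 ∩ y.2)) :=
    Finset.disjoint_union_left.2
      ⟨cE_disjoint (dy.mono Finset.inter_subset_right Finset.inter_subset_right),
       cE_disjoint (dz.symm.mono Finset.inter_subset_left Finset.inter_subset_left)⟩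
  have d4 : Disjoint (cE n (z.1 ∩ y.1) ∪ cE n (z.2 ∩ y.1) ∪ cE n (z.1 ∩ y.2))
      (cE n (z.2 ∩ y.2)) :=
    Finset.disjoint_union_left.2 ⟨Finset.disjoint_union_left.2
      ⟨cE_disjoint (dz.mono Finset.inter_subset_left Finset.inter_subset_left),
       cE_disjoint (dy.mono Finset.inter_subset_right Finset.inter_subset_right)⟩,
       cE_disjoint (dz.mono Finset.inter_subset_left Finset.inter_subset_left)⟩
  rw [heq, Finset.card_union_of_disjoint d4, Finset.card_union_of_disjoint d3,
    Finset.card_union_of_disjoint d12, card_cE, card_cE, card_cE, card_cE]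
  rfl

lemma card_union_bE {n r : ℕ} {y z : Finset (Fin n) × Finset (Fin n)} (hy : y ∈ PP n r)
    (hz : z ∈ PP n r) :
    (bE n y.1 y.2 ∪ bE n z.1 z.2).card = 4 * r.choose 2 - La (am (y, z))
      ∧ La (am (y, z)) ≤ 4 * r.choose 2 := by
  obtain ⟨⟨_, cy1⟩, ⟨_, cy2⟩, dy⟩ := mem_dp.1 hy
  obtain ⟨⟨_, cz1⟩, ⟨_, cz2⟩, dz⟩ := mem_dp.1 hz
  have h := Finset.card_union_add_card_inter (bE n y.1 y.2) (bE n z.1 z.2)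
  rw [card_inter_bE hy hz, card_bE cy1 cy2 dy, card_bE cz1 cz2 dz] at h
  omega

def mfun (n r : ℕ) (β : ℕ × ℕ × ℕ × ℕ) : ℕ :=
  match β with
  | (a, b, c, d) =>
    (r.choose a * (r - a).choose b) * (r.choose c * (r - c).choose d) *
      ((n - 2*r).choose (r - a - c) * ((n - 2*r - (r - a - c)).choose (r - b - d)))

lemma fiber_card {n r : ℕ} (β : ℕ × ℕ × ℕ × ℕ) (hβ : β ∈ Dset r) :
    (((PP n r) ×ˢ (PP n r)).filter (fun w => am w = β)).card
      = (PP n r).card * mfun n r β := by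
  classical
  obtain ⟨a, b, c, d⟩ := β
  simp only [Dset, Finset.mem_filter, Finset.mem_product, Finset.mem_range] at hβ
  obtain ⟨⟨ha, hb, hc, hd⟩, hab, hac, hcd, hbd⟩ := hβ
  rw [card_filter_product (Q := fun y z => am (y, z) = (a, b, c, d))]
  have key : ∀ y ∈ PP n r,
      ((PP n r).filter (fun z => am (y, z) = (a, b, c, d))).card = mfun n r (a, b, c, d) := by
    intro y hy
    obtain ⟨⟨_, cy1⟩, ⟨_, cy2⟩, dy⟩ := mem_dp.1 hy
    have hfc : (PP n r).filter (fun z => am (y, z) = (a, b, c, d))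
        = (PP n r).filter (fun z => (z.1 ∩ y.1).card = a ∧ (z.2 ∩ y.1).card = b ∧
            (z.1 ∩ y.2).card = c ∧ (z.2 ∩ y.2).card = d) := by
      apply Finset.filter_congr
      intro z hz
      simp [am, Prod.ext_iff]
    rw [hfc]
    exact inner_card y.1 y.2 cy1 cy2 dy a b c d hab hac hcd hbd
  rw [Finset.sum_congr rfl key, Finset.sum_const, smul_eq_mul]

lemma EVX2 (n r : ℕ) (p : ℝ) :
    EV n p (fun Γ => (Xr n r Γ : ℝ) ^ 2)
      = ∑ β ∈ Dset r, (((PP n r).card * mfun n r β : ℕ) : ℝ) * p ^ (4 * r.choose 2 - La β) := by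
  classical
  have hii : ∀ (P Q : Prop) [Decidable P] [Decidable Q],
      (if P then (1:ℝ) else 0) * (if Q then 1 else 0) = if P ∧ Q then 1 else 0 := by
    intro P Q _ _
    by_cases hP : P <;> by_cases hQ : Q <;> simp [hP, hQ]
  have hX2 : ∀ Γ : RGraph n, (Xr n r Γ : ℝ) ^ 2
      = ∑ w ∈ (PP n r) ×ˢ (PP n r),
          (if bE n w.1.1 w.1.2 ∪ bE n w.2.1 w.2.2 ⊆ Γ then (1:ℝ) else 0) := by
    intro Γ
    rw [sq, Xr_sum, Finset.sum_mul_sum, ← Finset.sum_product']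
    refine Finset.sum_congr rfl fun w hw => ?_
    rw [hii]
    exact if_congr Finset.union_subset_iff.symm rfl rfl
  rw [EV]
  simp_rw [hX2, Finset.mul_sum]
  rw [Finset.sum_comm]
  have h1 : ∀ w ∈ (PP n r) ×ˢ (PP n r),
      ∑ Γ : RGraph n, wt n p Γ * (if bE n w.1.1 w.1.2 ∪ bE n w.2.1 w.2.2 ⊆ Γ then (1:ℝ) else 0)
        = p ^ (4 * r.choose 2 - La (am w)) := by
    intro w hw
    obtain ⟨hw1, hw2⟩ := Finset.mem_product.1 hw
    rw [sum_wt_ind, (card_union_bE hw1 hw2).1]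
  rw [Finset.sum_congr rfl h1]
  rw [← Finset.sum_fiberwise_of_maps_to (g := am) (t := Dset r)
      (fun w hw => by
        obtain ⟨hw1, hw2⟩ := Finset.mem_product.1 hw
        exact am_mem hw1 hw2)]
  refine Finset.sum_congr rfl fun β hβ => ?_
  have h2 : ∀ w ∈ (((PP n r) ×ˢ (PP n r)).filter (fun w => am w = β)),
      p ^ (4 * r.choose 2 - La (am w)) = p ^ (4 * r.choose 2 - La β) := by
    intro w hw
    rw [(Finset.mem_filter.1 hw).2]
  rw [Finset.sum_congr rfl h2, Finset.sum_const, fiber_card β hβ, nsmul_eq_mul]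

lemma PP_card (n r : ℕ) : (PP n r).card = n.choose r * (n - r).choose r := by
  rw [PP, card_dp, Finset.card_univ, Fintype.card_fin]

lemma Fa_eq {n r : ℕ} (hn : 4*r ≤ n) (a b c d : ℕ) (hab : a+b ≤ r) (hac : a+c ≤ r)
    (hcd : c+d ≤ r) (hbd : b+d ≤ r) :
    Fa n r (a,b,c,d) * ((PP n r).card : ℝ) = (mfun n r (a,b,c,d) : ℝ) := by
  have F : ∀ m : ℕ, (m.factorial : ℝ) ≠ 0 := fun m => Nat.cast_ne_zero.2 (Nat.factorial_ne_zero m)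
  rw [PP_card, Fa, mfun]
  push_cast
  rw [Nat.cast_choose ℝ (show a ≤ r by omega),
      Nat.cast_choose ℝ (show b ≤ r - a by omega),
      Nat.cast_choose ℝ (show c ≤ r by omega),
      Nat.cast_choose ℝ (show d ≤ r - c by omega),
      Nat.cast_choose ℝ (show r - a - c ≤ n - 2*r by omega),
      Nat.cast_choose ℝ (show r - b - d ≤ n - 2*r - (r - a - c) by omega),
      Nat.cast_choose ℝ (show r ≤ n by omega),
      Nat.cast_choose ℝ (show r ≤ n - r by omega)]
  have e1 : n - 2*r - (r - a - c) - (r - b - d) = n - 4*r + a + b + c + d := by omega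
  have e2 : n - r - r = n - 2*r := by omega
  have e3 : r - a - b = r - (a + b) := by omega
  rw [e1, e2]
  field_simp


end Aux7

open Aux7 in
/-- Second moment formula: `E(X²)/(E X)² = Σ_{α ∈ D} F_α · q^{L(α)}`, where `X` is the number
of `(r,r)`-bicliques in `G(n,p)` and `q = 1/p`. -/
theorem stmt7 (r : ℕ) (hr : 1 ≤ r) (p : ℝ) (hp0 : 0 < p) (hp1 : p < 1)
    (n : ℕ) (hn : 4 * r ≤ n) :
    EV n p (fun Γ => (Xr n r Γ : ℝ) ^ 2) / (EV n p (fun Γ => (Xr n r Γ : ℝ))) ^ 2 =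
      ∑ α ∈ Dset r, Fa n r α * (p⁻¹) ^ (La α) := by
  classical
  have hNp : 0 < (PP n r).card := by
    rw [PP_card]
    exact Nat.mul_pos (Nat.choose_pos (by omega)) (Nat.choose_pos (by omega))
  have hNpR : ((PP n r).card : ℝ) ≠ 0 := Nat.cast_ne_zero.2 hNp.ne'
  have hpne : p ≠ 0 := hp0.ne'
  rw [EVX, EVX2, Finset.sum_div]
  refine Finset.sum_congr rfl fun β hβ => ?_
  obtain ⟨a, b, c, d⟩ := β
  simp only [Dset, Finset.mem_filter, Finset.mem_product, Finset.mem_range] at hβ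
  obtain ⟨⟨ha, hb, hc, hd⟩, hab, hac, hcd, hbd⟩ := hβ
  have hL : La (a, b, c, d) ≤ 4 * r.choose 2 := by
    have l1 := Nat.choose_le_choose 2 (show a ≤ r by omega)
    have l2 := Nat.choose_le_choose 2 (show b ≤ r by omega)
    have l3 := Nat.choose_le_choose 2 (show c ≤ r by omega)
    have l4 := Nat.choose_le_choose 2 (show d ≤ r by omega)
    simp only [La]
    omega
  have hFa : Fa n r (a, b, c, d) * ((PP n r).card : ℝ) = (mfun n r (a, b, c, d) : ℝ) :=
    Fa_eq (by omega) a b c d (by omega) (by omega) (by omega) (by omega)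
  push_cast
  rw [pow_sub₀ p hpne hL, inv_pow, ← hFa]
  have hpL : (p : ℝ) ^ (La (a, b, c, d)) ≠ 0 := pow_ne_zero _ hpne
  field_simp
  ring

end
end

section
/- Fix a real number p with 0 < p < 1 and ε with 0 < ε < 1/2, set q = 1/p, and for each n let r = r(n) = ⌊z(n,p) − ε⌋. Let T_{(r,0,0,r)} = q^{2·C(r,2)} / [n!/(r!·r!·(n−2r)!)]. Then r²·T_{(r,0,0,r)} → 0 as n → ∞. -/
set_option maxHeartbeats 1000000

open Real Filter

lemma fact_le_exp : ∀ r : ℕ, 1 ≤ r → (r.factorial : ℝ) ≤ (r:ℝ)^(r+1) * Real.exp (1 - r) := by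
  intro r
  induction r with
  | zero => omega
  | succ k ih =>
    intro _
    rcases Nat.eq_zero_or_pos k with hk | hk
    · subst hk; simp
    · have ihk := ih hk
      have hkR : (1:ℝ) ≤ (k:ℝ) := by exact_mod_cast hk
      have hkpos : (0:ℝ) < k := by linarith
      have ha : (0:ℝ) < 1/((k:ℝ)+1) := by positivity
      have h2 : (k:ℝ) ≤ ((k:ℝ)+1) * Real.exp (-(1/((k:ℝ)+1))) := by
        have h := Real.add_one_le_exp (-(1/((k:ℝ)+1)))
        have h' : ((k:ℝ)+1) * (-(1/((k:ℝ)+1)) + 1) ≤ ((k:ℝ)+1) * Real.exp (-(1/((k:ℝ)+1))) := by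
          apply mul_le_mul_of_nonneg_left h (by linarith)
        have he : ((k:ℝ)+1) * (-(1/((k:ℝ)+1)) + 1) = k := by field_simp; ring
        linarith
      have h3 : (k:ℝ) * Real.exp (1/((k:ℝ)+1)) ≤ (k:ℝ)+1 := by
        have := mul_le_mul_of_nonneg_right h2 (Real.exp_pos (1/((k:ℝ)+1))).le
        rw [mul_assoc, ← Real.exp_add] at this
        simpa using this
      have key0 := pow_le_pow_left₀ (by positivity) h3 (k+1)
      have hxp : ((k:ℝ) * Real.exp (1/((k:ℝ)+1)))^(k+1) = (k:ℝ)^(k+1) * Real.exp 1 := by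
        rw [mul_pow, ← Real.exp_nat_mul]
        congr 2
        push_cast
        field_simp
      have key : (k:ℝ)^(k+1) * Real.exp 1 ≤ ((k:ℝ)+1)^(k+1) := by rw [← hxp]; exact key0
      have hfs : ((k+1).factorial : ℝ) = ((k:ℝ)+1) * (k.factorial : ℝ) := by
        rw [Nat.factorial_succ]; push_cast; ring
      have hgoalcast : ((k:ℝ)+1)^(k+1+1) * Real.exp (1 - ((k:ℕ)+1:ℝ)) =
          ((k:ℝ)+1) * (((k:ℝ)+1)^(k+1) * Real.exp (-(k:ℝ))) := by
        rw [show (1 - ((k:ℕ)+1:ℝ)) = -(k:ℝ) by push_cast; ring]; ring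
      calc ((k+1).factorial : ℝ) = ((k:ℝ)+1) * (k.factorial : ℝ) := hfs
        _ ≤ ((k:ℝ)+1) * ((k:ℝ)^(k+1) * Real.exp (1 - k)) :=
            mul_le_mul_of_nonneg_left ihk (by linarith)
        _ = ((k:ℝ)+1) * (((k:ℝ)^(k+1) * Real.exp 1) * Real.exp (-(k:ℝ))) := by
            rw [show (1 - (k:ℝ)) = 1 + (-(k:ℝ)) by ring, Real.exp_add]; ring
        _ ≤ ((k:ℝ)+1) * ((((k:ℝ)+1)^(k+1)) * Real.exp (-(k:ℝ))) := by
            apply mul_le_mul_of_nonneg_left _ (by linarith)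
            exact mul_le_mul_of_nonneg_right key (Real.exp_pos _).le
        _ = ((k:ℝ)+1)^(k+1+1) * Real.exp (1 - ((k:ℕ)+1:ℝ)) := by rw [hgoalcast]
        _ = (((k+1:ℕ)):ℝ)^(k+1+1) * Real.exp (1 - ((k+1:ℕ):ℝ)) := by push_cast; ring_nf


lemma fact_le_exp' (r : ℕ) (hr : 1 ≤ r) :
    (r.factorial : ℝ) ≤ Real.exp (((r:ℝ)+1) * Real.log r + (1 - (r:ℝ))) := by
  have h1 := fact_le_exp r hr
  have hrpos : (0:ℝ) < r := by exact_mod_cast hr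
  have : (r:ℝ)^(r+1) = Real.exp (((r:ℝ)+1) * Real.log r) := by
    rw [← Real.exp_log (show (0:ℝ) < (r:ℝ)^(r+1) by positivity), Real.log_pow]
    push_cast; ring_nf
  rw [this, ← Real.exp_add] at h1
  exact h1

lemma aux10 (q ε : ℝ) (n r : ℕ) (hq : 1 < q) (hε : 0 < ε)
    (hR2 : 2 ≤ (r : ℝ))
    (hiii : 4 * Real.log r + 2 ≤ ε * Real.log q / 4 * r)
    (hrup : (r : ℝ) * Real.log q ≤
      2 * Real.log n - 2 * Real.log (Real.logb q n) + 2 - 2 * Real.log 2 + (1 - ε) * Real.log q)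
    (hr2L : (r : ℝ) ≤ 2 * Real.logb q n)
    (hΛpos : 0 < Real.logb q n)
    (hn : 2 * r ≤ n)
    (hNpos : (0:ℝ) < n)
    (hgap : (n : ℝ) * Real.exp (-(ε / 8) * Real.log q) ≤ (n : ℝ) - 2 * r + 1) :
    (r : ℝ) ^ 2 * (q ^ (2 * r.choose 2) /
      ((n.factorial : ℝ) / ((r.factorial : ℝ) * (r.factorial : ℝ) * ((n - 2 * r).factorial : ℕ)))) ≤
    Real.exp (-(ε * Real.log q / 2) * r) := by
  have hq0 : (0:ℝ) < q := lt_trans one_pos hq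
  have hlnq : 0 < Real.log q := Real.log_pos hq
  set lnq := Real.log q with hlnqdef
  set R := (r:ℝ) with hRdef
  set N := (n:ℝ) with hNdef
  set Λ := Real.logb q n with hΛdef
  have hRpos : (0:ℝ) < R := by linarith
  have hr1 : 1 ≤ r := by
    by_contra h
    have : r = 0 := by omega
    rw [this] at hRdef
    simp at hRdef
    rw [hRdef] at hR2
    norm_num at hR2
  set D : ℝ := N * Real.exp (-(ε / 8) * lnq) with hDdef
  have hDpos : 0 < D := by positivity
  -- factorial inequality from Nat
  have hMnat : (n - 2*r).factorial * ((n - 2*r) + 1)^(2*r) ≤ n.factorial := by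
    have := @Nat.factorial_mul_pow_le_factorial (n - 2*r) (2*r)
    rwa [Nat.sub_add_cancel hn] at this
  have hcast : ((n - 2*r : ℕ) : ℝ) = N - 2*R := by
    rw [Nat.cast_sub hn]; push_cast; ring
  have hMreal : ((n - 2*r).factorial : ℝ) * (N - 2*R + 1)^(2*r) ≤ (n.factorial : ℝ) := by
    have h2 : (((n - 2*r).factorial * ((n - 2*r) + 1)^(2*r) : ℕ) : ℝ) ≤ ((n.factorial : ℕ) : ℝ) := by
      exact_mod_cast hMnat
    push_cast at h2
    rwa [hcast] at h2
  have hD2 : D ^ (2*r) ≤ (N - 2*R + 1)^(2*r) := pow_le_pow_left₀ hDpos.le hgap _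
  have hstep1 : ((n - 2*r).factorial : ℝ) * D^(2*r) ≤ (n.factorial : ℝ) :=
    le_trans (by apply mul_le_mul_of_nonneg_left hD2 (by positivity)) hMreal
  have hnfacpos : (0:ℝ) < (n.factorial : ℝ) := by positivity
  have hrew : (q ^ (2 * r.choose 2) /
      ((n.factorial : ℝ) / ((r.factorial : ℝ) * (r.factorial : ℝ) * ((n - 2 * r).factorial : ℕ))))
      = q ^ (2 * r.choose 2) * ((r.factorial : ℝ) * (r.factorial : ℝ) *
          ((n - 2 * r).factorial : ℕ)) / (n.factorial : ℝ) := by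
    rw [div_div_eq_mul_div]
  rw [hrew]
  have hfrac : ((n - 2*r).factorial : ℝ) / (n.factorial : ℝ) ≤ 1 / D^(2*r) := by
    rw [div_le_div_iff₀ hnfacpos (by positivity)]
    linarith [hstep1]
  have hL1 : R ^ 2 * (q ^ (2 * r.choose 2) * ((r.factorial : ℝ) * (r.factorial : ℝ) *
      ((n - 2 * r).factorial : ℕ)) / (n.factorial : ℝ))
      = (R ^ 2 * q ^ (2 * r.choose 2) * ((r.factorial : ℝ) * (r.factorial : ℝ))) *
        (((n - 2 * r).factorial : ℝ) / (n.factorial : ℝ)) := by ring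
  rw [hL1]
  have hL2 : (R ^ 2 * q ^ (2 * r.choose 2) * ((r.factorial : ℝ) * (r.factorial : ℝ))) *
        (((n - 2 * r).factorial : ℝ) / (n.factorial : ℝ))
      ≤ (R ^ 2 * q ^ (2 * r.choose 2) * ((r.factorial : ℝ) * (r.factorial : ℝ))) * (1 / D^(2*r)) :=
    mul_le_mul_of_nonneg_left hfrac (by positivity)
  refine le_trans hL2 ?_
  -- exponential forms
  have e1 : R ^ 2 = Real.exp (2 * Real.log R) := by
    rw [← Real.exp_log (show (0:ℝ) < R^2 by positivity), Real.log_pow]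
    norm_num
  have e2 : q ^ (2 * r.choose 2) = Real.exp ((2 * r.choose 2 : ℕ) * lnq) := by
    rw [Real.exp_nat_mul, Real.exp_log hq0]
  have e3 : (r.factorial : ℝ) ≤ Real.exp ((R+1) * Real.log R + (1 - R)) := fact_le_exp' r hr1
  have e4' : D^(2*r) = Real.exp ((2*r:ℕ) * (Real.log N + (-(ε/8) * lnq))) := by
    conv_lhs => rw [← Real.exp_log hDpos]
    rw [← Real.exp_nat_mul]
    congr 1
    rw [hDdef, Real.log_mul (ne_of_gt hNpos) (Real.exp_ne_zero _), Real.log_exp]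
  have e4 : (1 : ℝ) / D^(2*r) = Real.exp (-((2*r:ℕ) * (Real.log N + (-(ε/8) * lnq)))) := by
    rw [e4', one_div, ← Real.exp_neg]
  have hfc : (R ^ 2 * q ^ (2 * r.choose 2) * ((r.factorial : ℝ) * (r.factorial : ℝ))) * (1 / D^(2*r))
      ≤ Real.exp (2 * Real.log R + (2 * r.choose 2 : ℕ) * lnq
          + ((R+1) * Real.log R + (1 - R)) + ((R+1) * Real.log R + (1 - R))
          + (-((2*r:ℕ) * (Real.log N + (-(ε/8) * lnq))))) := by
    rw [Real.exp_add, Real.exp_add, Real.exp_add, Real.exp_add, ← e1, ← e2, ← e4]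
    have hfr : (0:ℝ) ≤ (r.factorial : ℝ) := by positivity
    have := mul_le_mul e3 e3 hfr (Real.exp_pos _).le
    calc R ^ 2 * q ^ (2 * r.choose 2) * ((r.factorial : ℝ) * (r.factorial : ℝ)) * (1 / D^(2*r))
        ≤ R ^ 2 * q ^ (2 * r.choose 2) *
            (Real.exp ((R+1) * Real.log R + (1 - R)) * Real.exp ((R+1) * Real.log R + (1 - R)))
            * (1 / D^(2*r)) := by
          apply mul_le_mul_of_nonneg_right _ (by positivity)
          apply mul_le_mul_of_nonneg_left this (by positivity)
      _ = R ^ 2 * q ^ (2 * r.choose 2) * Real.exp ((R+1) * Real.log R + (1 - R))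
            * Real.exp ((R+1) * Real.log R + (1 - R)) * (1 / D^(2*r)) := by ring
  refine le_trans hfc (Real.exp_le_exp.mpr ?_)
  -- final exponent inequality
  have hk : ((2 * r.choose 2 : ℕ) : ℝ) = R^2 - R := by
    have hdvd : 2 ∣ r * (r - 1) := by
      rcases Nat.even_or_odd r with h | h
      · exact Dvd.dvd.mul_right h.two_dvd _
      · exact Dvd.dvd.mul_left (Nat.Odd.sub_odd h odd_one).two_dvd _
    have h2 : 2 * r.choose 2 = r * (r - 1) := by
      rw [Nat.choose_two_right, Nat.mul_div_cancel' hdvd]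
    rw [h2, Nat.cast_mul, Nat.cast_sub hr1]
    push_cast; ring
  have hΛne : Λ ≠ 0 := ne_of_gt hΛpos
  have hlog2 : Real.log R ≤ Real.log 2 + Real.log Λ := by
    calc Real.log R ≤ Real.log (2 * Λ) := Real.log_le_log hRpos hr2L
      _ = Real.log 2 + Real.log Λ := Real.log_mul two_ne_zero hΛne
  have hm1 : R * (R * lnq) ≤
      R * (2 * Real.log N - 2 * Real.log Λ + 2 - 2 * Real.log 2 + (1 - ε) * lnq) :=
    mul_le_mul_of_nonneg_left hrup hRpos.le
  have hm2 : R * Real.log R ≤ R * (Real.log 2 + Real.log Λ) :=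
    mul_le_mul_of_nonneg_left hlog2 hRpos.le
  have h2r : ((2*r : ℕ) : ℝ) = 2 * R := by push_cast; ring
  rw [hk, h2r]
  linarith [hm1, hm2, hiii]


lemma log_le_linear (c : ℝ) (hc : 0 < c) : ∀ᶠ x : ℝ in atTop, Real.log x ≤ c * x := by
  have h := Asymptotics.isLittleO_iff.mp Real.isLittleO_log_id_atTop hc
  filter_upwards [h, eventually_ge_atTop (0:ℝ)] with x hx hx0
  have hx' : |Real.log x| ≤ c * |x| := by simpa [Real.norm_eq_abs] using hx
  calc Real.log x ≤ |Real.log x| := le_abs_self _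
    _ ≤ c * |x| := hx'
    _ = c * x := by rw [abs_of_nonneg hx0]

lemma ev_one_le (a C : ℝ) (ha : 0 < a) : ∀ᶠ x : ℝ in atTop, 1 ≤ x - a * Real.log x + C := by
  filter_upwards [log_le_linear (1/(2*a)) (by positivity),
    eventually_ge_atTop (2*(1-C)+2)] with x h1 h2
  have hmul := mul_le_mul_of_nonneg_left h1 ha.le
  have heq : a * (1/(2*a) * x) = x/2 := by field_simp
  rw [heq] at hmul
  linarith

lemma ev_mul_log_le (a b : ℝ) (ha : 0 < a) (hb : 0 < b) :
    ∀ᶠ x : ℝ in atTop, a * Real.log x ≤ b * x := by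
  filter_upwards [log_le_linear (b/a) (by positivity)] with x h1
  have hmul := mul_le_mul_of_nonneg_left h1 ha.le
  have heq : a * (b/a * x) = b * x := by field_simp
  rw [heq] at hmul; exact hmul

open Finset Filter

noncomputable section

/-- For `r = r(n) = ⌊z(n,p) − ε⌋` and `T_{(r,0,0,r)} = q^{2·C(r,2)}/[n!/(r!·r!·(n−2r)!)]`,
one has `r²·T_{(r,0,0,r)} → 0` as `n → ∞`. -/
theorem stmt10 (p ε : ℝ) (hp0 : 0 < p) (hp1 : p < 1) (hε : 0 < ε) (hε' : ε < 1/2) :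
    Tendsto (fun n : ℕ =>
        (⌊zf p n - ε⌋.toNat : ℝ) ^ 2 *
          ((p⁻¹) ^ (2 * ⌊zf p n - ε⌋.toNat.choose 2) /
            ((n.factorial : ℝ) / ((⌊zf p n - ε⌋.toNat.factorial : ℝ) *
              ⌊zf p n - ε⌋.toNat.factorial * (n - 2 * ⌊zf p n - ε⌋.toNat).factorial))))
      atTop (nhds 0) := by
  have hq : 1 < p⁻¹ := (one_lt_inv_iff₀).mpr ⟨hp0, hp1⟩
  have hlnq : 0 < Real.log p⁻¹ := Real.log_pos hq
  set lnq := Real.log p⁻¹ with hlnqdef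
  set qδ : ℝ := Real.exp (-(ε/8) * lnq) with hqδdef
  have hqδpos : 0 < qδ := Real.exp_pos _
  have hqδ1 : qδ < 1 := by
    rw [hqδdef]
    have hneg : -(ε/8) * lnq < 0 := by
      have := mul_pos (show (0:ℝ) < ε/8 by linarith) hlnq
      linarith
    calc Real.exp (-(ε/8) * lnq) < Real.exp 0 := Real.exp_lt_exp.mpr hneg
      _ = 1 := Real.exp_zero
  have hΛtop : Tendsto (fun n : ℕ => Real.logb p⁻¹ n) atTop atTop :=
    (Real.tendsto_logb_atTop hq).comp tendsto_natCast_atTop_atTop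
  -- little-o of log
  have hlittle : ∀ c : ℝ, 0 < c → ∀ᶠ x : ℝ in atTop, Real.log x ≤ c * x := by
    intro c hc
    have h := Asymptotics.isLittleO_iff.mp Real.isLittleO_log_id_atTop hc
    filter_upwards [h, eventually_ge_atTop (0:ℝ)] with x hx hx0
    have hx' : |Real.log x| ≤ c * |x| := by simpa [Real.norm_eq_abs] using hx
    calc Real.log x ≤ |Real.log x| := le_abs_self _
      _ ≤ c * |x| := hx'
      _ = c * x := by rw [abs_of_nonneg hx0]
  -- eventual bound (iii)
  have hiiiE : ∀ᶠ x : ℝ in atTop, 4 * Real.log x + 2 ≤ ε * lnq / 4 * x := by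
    filter_upwards [hlittle (ε*lnq/32) (by positivity),
      eventually_ge_atTop ((16/(ε*lnq)) : ℝ)] with x h1 h2
    have hpos : (0:ℝ) < ε * lnq := by positivity
    have h4 : 16 ≤ x * (ε * lnq) := (div_le_iff₀ hpos).mp h2
    linarith
  obtain ⟨R0, hR0⟩ := eventually_atTop.mp hiiiE
  set C0 : ℝ := 2 * Real.logb p⁻¹ (Real.exp 1 / 2) + 1 - ε with hC0def
  -- eventual (in Λ) facts
  have hP2 : ∀ᶠ x : ℝ in atTop, 1 ≤ x - (2/lnq) * Real.log x + C0 :=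
    ev_one_le (2/lnq) C0 (by rw [hlnqdef] at hlnq ⊢; positivity)
  have hP3 : ∀ᶠ x : ℝ in atTop, C0 * lnq / 2 ≤ Real.log x :=
    Real.tendsto_log_atTop.eventually_ge_atTop _
  have hF5 : ∀ᶠ n : ℕ in atTop, 4 * Real.logb p⁻¹ n ≤ (n:ℝ) * (1 - qδ) := by
    have hx : ∀ᶠ x : ℝ in atTop, (4/Real.log p⁻¹) * Real.log x ≤ (1-qδ) * x :=
      ev_mul_log_le _ _ (div_pos four_pos hlnq) (by linarith)
    filter_upwards [tendsto_natCast_atTop_atTop.eventually hx] with n hn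
    rw [Real.logb]
    calc 4 * (Real.log n / Real.log p⁻¹) = (4/Real.log p⁻¹) * Real.log n := by ring
      _ ≤ (1-qδ) * n := hn
      _ = (n:ℝ) * (1-qδ) := by ring
  -- main eventual inequality
  have hmain : ∀ᶠ n : ℕ in atTop,
      (⌊zf p n - ε⌋.toNat : ℝ) ^ 2 *
          ((p⁻¹) ^ (2 * ⌊zf p n - ε⌋.toNat.choose 2) /
            ((n.factorial : ℝ) / ((⌊zf p n - ε⌋.toNat.factorial : ℝ) *
              ⌊zf p n - ε⌋.toNat.factorial * (n - 2 * ⌊zf p n - ε⌋.toNat).factorial)))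
        ≤ Real.exp (-(ε * lnq / 2) * Real.logb p⁻¹ n) := by
    filter_upwards [hΛtop.eventually hP2, hΛtop.eventually hP3,
      hΛtop.eventually (eventually_ge_atTop (max 2 R0)), hF5,
      eventually_ge_atTop 1] with n h2 h3 h45 h5 hn1
    set Λ := Real.logb p⁻¹ n with hΛdef
    set r : ℕ := ⌊zf p n - ε⌋.toNat with hrdef
    set R := (r:ℝ) with hRdef
    have hΛ2 : 2 ≤ Λ := le_trans (le_max_left _ _) h45
    have hΛR0 : R0 ≤ Λ := le_trans (le_max_right _ _) h45
    have hΛpos : 0 < Λ := by linarith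
    have hNpos : (0:ℝ) < n := by exact_mod_cast hn1
    have hzf : zf p n - ε = 2*Λ - (2/lnq) * Real.log Λ + C0 := by
      simp only [zf, hC0def, hΛdef, Real.logb, hlnqdef]
      ring
    have hx1 : Λ + 1 ≤ zf p n - ε := by rw [hzf]; linarith
    have hfl0 : 0 ≤ ⌊zf p n - ε⌋ := Int.floor_nonneg.mpr (by linarith)
    have hRfl : (R : ℝ) = ((⌊zf p n - ε⌋ : ℤ) : ℝ) := by
      rw [hRdef, hrdef]
      exact_mod_cast congrArg (fun z : ℤ => (z : ℝ)) (Int.toNat_of_nonneg hfl0)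
    have hRle : R ≤ zf p n - ε := by rw [hRfl]; exact Int.floor_le _
    have hΛleR : Λ ≤ R := by
      have := Int.lt_floor_add_one (zf p n - ε)
      rw [← hRfl] at this
      linarith
    have hR2 : 2 ≤ R := le_trans hΛ2 hΛleR
    have hiii : 4 * Real.log R + 2 ≤ ε * lnq / 4 * R := hR0 R (le_trans hΛR0 hΛleR)
    have hΛC0 : C0 ≤ (2/lnq) * Real.log Λ := by
      have hmul := mul_le_mul_of_nonneg_left h3 (show (0:ℝ) ≤ 2/lnq by positivity)
      have heq : (2/lnq) * (C0 * lnq / 2) = C0 := by field_simp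
      rw [heq] at hmul
      linarith
    have hr2L : R ≤ 2 * Λ := by rw [hzf] at hRle; linarith
    have hlnq0 : lnq ≠ 0 := ne_of_gt hlnq
    have hlogbmul : ∀ y : ℝ, Real.logb p⁻¹ y * Real.log p⁻¹ = Real.log y := fun y => by
      rw [Real.logb]; exact div_mul_cancel₀ _ hlnq0
    have hΛlnq : Λ * lnq = Real.log n := hlogbmul n
    have hloge2 : Real.log (Real.exp 1 / 2) = 1 - Real.log 2 := by
      rw [Real.log_div (Real.exp_ne_zero 1) two_ne_zero, Real.log_exp]
    have hC0lnq : C0 * lnq = 2 - 2 * Real.log 2 + (1 - ε) * lnq := by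
      have h1 : Real.logb p⁻¹ (Real.exp 1 / 2) * lnq = 1 - Real.log 2 :=
        (hlogbmul _).trans hloge2
      rw [hC0def]
      linear_combination 2 * h1
    have hrup : R * lnq ≤
        2 * Real.log n - 2 * Real.log Λ + 2 - 2 * Real.log 2 + (1 - ε) * lnq := by
      have h := mul_le_mul_of_nonneg_right hRle hlnq.le
      rw [hzf] at h
      have hcancel : 2 / lnq * Real.log Λ * lnq = 2 * Real.log Λ := by
        field_simp
      have hexp : (2*Λ - (2/lnq) * Real.log Λ + C0) * lnq
          = 2 * (Λ * lnq) - (2/lnq * Real.log Λ * lnq) + C0 * lnq := by ring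
      rw [hcancel, hΛlnq, hC0lnq] at hexp
      rw [hexp] at h
      linarith
    have h2rN : 2 * R ≤ (n:ℝ) * (1 - qδ) := by
      have : 2 * R ≤ 4 * Λ := by linarith
      linarith [h5]
    have hn2r : 2 * r ≤ n := by
      have h1 : (n:ℝ) * (1 - qδ) ≤ (n:ℝ) := by nlinarith
      have : ((2*r : ℕ) : ℝ) ≤ (n : ℝ) := by push_cast; linarith
      exact_mod_cast this
    have hgap : (n : ℝ) * qδ ≤ (n : ℝ) - 2 * R + 1 := by nlinarith
    have haux := aux10 p⁻¹ ε n r hq hε hR2 hiii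
      (by rw [← hlnqdef]; exact hrup) hr2L hΛpos hn2r hNpos
      (by rw [← hlnqdef, ← hqδdef]; linarith [hgap])
    refine le_trans haux (Real.exp_le_exp.mpr ?_)
    have : ε * lnq / 2 * Λ ≤ ε * lnq / 2 * R :=
      mul_le_mul_of_nonneg_left hΛleR (by positivity)
    rw [← hlnqdef]
    linarith
  -- squeeze
  have hupper : Tendsto (fun n : ℕ => Real.exp (-(ε * lnq / 2) * Real.logb p⁻¹ n))
      atTop (nhds 0) := by
    have h1 : Tendsto (fun n : ℕ => -(ε * lnq / 2) * Real.logb p⁻¹ n) atTop atBot := by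
      apply Tendsto.const_mul_atTop_of_neg _ hΛtop
      have : 0 < ε * lnq / 2 := by positivity
      linarith
    exact Real.tendsto_exp_atBot.comp h1
  refine tendsto_of_tendsto_of_tendsto_of_le_of_le' tendsto_const_nhds hupper
    (Eventually.of_forall (fun n => by positivity)) hmain

end
end

section
/- Fix a real number p with 0 < p < 1 and ε with 0 < ε < 1/2, set q = 1/p, and for each n let r = r(n) = ⌊z(n,p) − ε⌋. Let T_{(r,0,0,0)} = [C(n−2r, r) / (n!/(r!·r!·(n−2r)!))]·q^{C(r,2)}. Then r·T_{(r,0,0,0)} → 0 as n → ∞. -/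
open Finset Filter

noncomputable section

lemma exp_mul_pow_le' (n : ℕ) (hn : 1 ≤ n) :
    Real.exp 1 * (n:ℝ) ^ (n+1) ≤ ((n:ℝ)+1) ^ (n+1) := by
  have hn0 : (0:ℝ) < n := by exact_mod_cast hn
  have h1 : Real.exp (1/((n:ℝ)+1)) ≤ ((n:ℝ)+1)/n := by
    rw [← Real.exp_log (show (0:ℝ) < ((n:ℝ)+1)/n by positivity), Real.exp_le_exp]
    have h := Real.log_le_sub_one_of_pos (show (0:ℝ) < (n:ℝ)/((n:ℝ)+1) by positivity)
    have hlog : Real.log (((n:ℝ)+1)/n) = - Real.log ((n:ℝ)/((n:ℝ)+1)) := by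
      rw [← Real.log_inv]
      congr 1
      rw [inv_div]
    have heq : (n:ℝ)/((n:ℝ)+1) - 1 = -(1/((n:ℝ)+1)) := by field_simp; ring
    rw [hlog]
    linarith [h, heq.le]
  have h2 : Real.exp 1 = Real.exp (1/((n:ℝ)+1)) ^ (n+1) := by
    rw [← Real.exp_nat_mul]
    congr 1
    push_cast
    field_simp
  calc Real.exp 1 * (n:ℝ) ^ (n+1)
      = (Real.exp (1/((n:ℝ)+1)) * n) ^ (n+1) := by rw [mul_pow, ← h2]
    _ ≤ ((((n:ℝ)+1)/n) * n) ^ (n+1) := by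
        apply pow_le_pow_left₀ (by positivity)
        exact mul_le_mul_of_nonneg_right h1 hn0.le
    _ = ((n:ℝ)+1) ^ (n+1) := by rw [div_mul_cancel₀ _ hn0.ne']


lemma factorial_le_aux' : ∀ n : ℕ, 1 ≤ n →
    (n.factorial : ℝ) * Real.exp 1 ^ n ≤ Real.exp 1 * (n:ℝ) ^ (n+1) := by
  intro n hn
  induction n, hn using Nat.le_induction with
  | base => simp [Real.exp_pos]
  | succ n hn ih =>
    have h1 := exp_mul_pow_le' n hn
    have he : (0:ℝ) < Real.exp 1 := Real.exp_pos 1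
    have hn0 : (0:ℝ) ≤ (n:ℝ) + 1 := by positivity
    calc ((n+1).factorial : ℝ) * Real.exp 1 ^ (n+1)
        = ((n.factorial : ℝ) * Real.exp 1 ^ n) * (((n:ℝ)+1) * Real.exp 1) := by
          rw [Nat.factorial_succ]; push_cast; ring
      _ ≤ (Real.exp 1 * (n:ℝ) ^ (n+1)) * (((n:ℝ)+1) * Real.exp 1) := by
          apply mul_le_mul_of_nonneg_right ih (by positivity)
      _ = (Real.exp 1 * (n:ℝ) ^ (n+1)) * ((n:ℝ)+1) * Real.exp 1 := by ring
      _ ≤ (((n:ℝ)+1) ^ (n+1)) * ((n:ℝ)+1) * Real.exp 1 := by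
          apply mul_le_mul_of_nonneg_right (mul_le_mul_of_nonneg_right h1 hn0) he.le
      _ = Real.exp 1 * ((n:ℝ)+1) ^ (n+1+1) := by ring
      _ = Real.exp 1 * ((n+1 : ℕ):ℝ) ^ (n+1+1) := by push_cast; ring

/-- The key pointwise bound. -/
lemma key_bound' (q : ℝ) (hq : 1 < q) (n R : ℕ) (hR : 1 ≤ R) (h3 : 4 * R^2 ≤ n)
    (c : ℝ) (hc : 0 ≤ c)
    (h2 : (R:ℝ) * q ^ (((R:ℝ)-1)/2) ≤ Real.exp 1 * (n:ℝ) * c) :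
    (R : ℝ) * (((n - 2 * R).choose R : ℝ) /
        ((n.factorial : ℝ) / ((R.factorial : ℝ) * R.factorial * (n - 2 * R).factorial)) *
        q ^ (R.choose 2))
      ≤ 2 * Real.exp 1 * (R:ℝ)^2 * c ^ R := by
  have hq0 : (0:ℝ) < q := lt_trans one_pos hq
  have hRR : R ≤ R^2 := by nlinarith
  have h2R : 2 * R ≤ n := by omega
  set m : ℕ := n - 2 * R with hm
  have hmn : (m:ℝ) = (n:ℝ) - 2*R := by
    rw [hm]; push_cast [h2R]; ring
  have hmpos : 2 * R ≤ m := by omega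
  have hm1 : 1 ≤ m := by omega
  have hmpos' : (0:ℝ) < m := by exact_mod_cast hm1
  have hnpos : (0:ℝ) < n := by
    have : 1 ≤ n := by omega
    exact_mod_cast this
  set A : ℕ := m.descFactorial R with hA
  set B : ℕ := n.descFactorial (2*R) with hB
  have hBlb : m ^ (2*R) ≤ B := by
    calc m ^ (2*R) ≤ (n + 1 - 2*R) ^ (2*R) := Nat.pow_le_pow_left (by omega) _
      _ ≤ B := Nat.pow_sub_le_descFactorial n (2*R)
  have hBpos : (0:ℝ) < B := by
    have : 1 ≤ B := le_trans (Nat.one_le_pow _ _ (by omega)) hBlb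
    exact_mod_cast this
  have hAub : (A:ℝ) ≤ (m:ℝ) ^ R := by exact_mod_cast Nat.descFactorial_le_pow m R
  have hBlb' : (m:ℝ) ^ (2*R) ≤ (B:ℝ) := by exact_mod_cast hBlb
  -- rewrite the expression
  have hchoose : (m.choose R : ℝ) * R.factorial = A := by
    rw [hA, Nat.descFactorial_eq_factorial_mul_choose]
    push_cast; ring
  have hfact : (n.factorial : ℝ) = (m.factorial : ℝ) * B := by
    have h := Nat.factorial_mul_descFactorial h2R
    rw [hB, hm]
    exact_mod_cast h.symm
  have hexpr : ((m.choose R : ℝ) /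
      ((n.factorial : ℝ) / ((R.factorial : ℝ) * R.factorial * m.factorial))) =
      (A:ℝ) * R.factorial / B := by
    rw [div_div_eq_mul_div, hfact]
    rw [div_eq_div_iff (by positivity) hBpos.ne']
    have hf : (0:ℝ) < m.factorial := by exact_mod_cast m.factorial_pos
    linear_combination ((R.factorial:ℝ) * m.factorial * B) * hchoose
  rw [hexpr]
  -- the q-power identity
  have hqC : (q ^ (((R:ℝ)-1)/2)) ^ R = q ^ (R.choose 2) := by
    rw [← Real.rpow_natCast (q ^ (((R:ℝ)-1)/2)) R, ← Real.rpow_natCast q (R.choose 2),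
      ← Real.rpow_mul hq0.le]
    congr 1
    rw [Nat.cast_choose_two]
    ring
  have hqCpos : (0:ℝ) < q ^ (R.choose 2) := by positivity
  -- step 1
  have step1 : (R : ℝ) * ((A:ℝ) * R.factorial / B * q ^ (R.choose 2))
      ≤ (R:ℝ) * R.factorial * q ^ (R.choose 2) / (m:ℝ) ^ R := by
    have h1 : (A:ℝ) * R.factorial / B ≤ ((m:ℝ)^R * R.factorial) / (m:ℝ)^(2*R) := by
      apply div_le_div₀ (by positivity)
        (mul_le_mul_of_nonneg_right hAub (by positivity)) (by positivity) hBlb'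
    have h2' : ((m:ℝ)^R * R.factorial) / (m:ℝ)^(2*R) = (R.factorial : ℝ) / (m:ℝ)^R := by
      rw [two_mul, pow_add]
      field_simp
    calc (R : ℝ) * ((A:ℝ) * R.factorial / B * q ^ (R.choose 2))
        ≤ (R : ℝ) * (((m:ℝ)^R * R.factorial) / (m:ℝ)^(2*R) * q ^ (R.choose 2)) := by
          apply mul_le_mul_of_nonneg_left _ (by positivity)
          exact mul_le_mul_of_nonneg_right h1 hqCpos.le
      _ = (R:ℝ) * R.factorial * q ^ (R.choose 2) / (m:ℝ) ^ R := by
          rw [h2']; ring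
  -- step 2 : Bernoulli
  have step2 : ((n:ℝ))^R / 2 ≤ (m:ℝ)^R := by
    have hx : -2 ≤ -(2*(R:ℝ)/n) := by
      have : 2*(R:ℝ)/n ≤ 1 := by
        rw [div_le_one hnpos]
        exact_mod_cast h2R
      linarith
    have hber := one_add_mul_le_pow hx R
    have h1 : (1 + -(2*(R:ℝ)/n)) = (m:ℝ)/n := by
      rw [hmn]; field_simp; ring
    rw [h1] at hber
    have h2' : 1 + (R:ℝ) * -(2*(R:ℝ)/n) = 1 - 2*(R:ℝ)^2/n := by ring
    rw [h2'] at hber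
    have h3' : (1:ℝ)/2 ≤ 1 - 2*(R:ℝ)^2/n := by
      have h4n : 4*(R:ℝ)^2 ≤ (n:ℝ) := by exact_mod_cast h3
      have hh : 2*(R:ℝ)^2/n ≤ 1/2 := by
        rw [div_le_iff₀ hnpos]; linarith
      linarith
    have h4 : ((m:ℝ)/n)^R = (m:ℝ)^R/(n:ℝ)^R := div_pow _ _ _
    rw [h4] at hber
    have h5 : (1:ℝ)/2 ≤ (m:ℝ)^R/(n:ℝ)^R := le_trans h3' hber
    rw [le_div_iff₀ (pow_pos hnpos R)] at h5
    linarith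
  -- combine
  have hRpos : (0:ℝ) < R := by exact_mod_cast hR
  have hepos : (0:ℝ) < Real.exp 1 := Real.exp_pos 1
  have step3 : (R:ℝ) * R.factorial * q ^ (R.choose 2) / (m:ℝ) ^ R
      ≤ 2 * ((R:ℝ) * R.factorial * q ^ (R.choose 2)) / (n:ℝ) ^ R := by
    rw [show (2:ℝ) * ((R:ℝ) * R.factorial * q ^ (R.choose 2)) / (n:ℝ) ^ R
        = (R:ℝ) * R.factorial * q ^ (R.choose 2) / ((n:ℝ)^R / 2) by
      rw [div_div_eq_mul_div]; ring]
    apply div_le_div_of_nonneg_left (by positivity) (by positivity) step2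
  -- final step
  have key1 : (R:ℝ)^R * q ^ (R.choose 2) ≤ (Real.exp 1)^R * (n:ℝ)^R * c^R := by
    have := pow_le_pow_left₀ (by positivity) h2 R
    rw [mul_pow, hqC, mul_pow, mul_pow] at this
    exact this
  have key2 : (R.factorial : ℝ) * Real.exp 1 ^ R ≤ Real.exp 1 * (R:ℝ) ^ (R+1) :=
    factorial_le_aux' R hR
  have step4 : 2 * ((R:ℝ) * R.factorial * q ^ (R.choose 2)) / (n:ℝ) ^ R
      ≤ 2 * Real.exp 1 * (R:ℝ)^2 * c ^ R := by
    rw [div_le_iff₀ (by positivity)]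
    have heR : (0:ℝ) < Real.exp 1 ^ R := by positivity
    rw [← mul_le_mul_iff_of_pos_right heR]
    calc 2 * ((R:ℝ) * R.factorial * q ^ (R.choose 2)) * Real.exp 1 ^ R
        = 2 * (R:ℝ) * q ^ (R.choose 2) * ((R.factorial:ℝ) * Real.exp 1 ^ R) := by ring
      _ ≤ 2 * (R:ℝ) * q ^ (R.choose 2) * (Real.exp 1 * (R:ℝ) ^ (R+1)) := by
          apply mul_le_mul_of_nonneg_left key2 (by positivity)
      _ = 2 * Real.exp 1 * (R:ℝ)^2 * ((R:ℝ)^R * q ^ (R.choose 2)) := by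
          rw [pow_succ]; ring
      _ ≤ 2 * Real.exp 1 * (R:ℝ)^2 * ((Real.exp 1)^R * (n:ℝ)^R * c^R) := by
          apply mul_le_mul_of_nonneg_left key1 (by positivity)
      _ = 2 * Real.exp 1 * (R:ℝ)^2 * c ^ R * (n:ℝ) ^ R * Real.exp 1 ^ R := by ring
  calc (R : ℝ) * ((A:ℝ) * R.factorial / B * q ^ (R.choose 2))
      ≤ (R:ℝ) * R.factorial * q ^ (R.choose 2) / (m:ℝ) ^ R := step1
    _ ≤ 2 * ((R:ℝ) * R.factorial * q ^ (R.choose 2)) / (n:ℝ) ^ R := step3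
    _ ≤ 2 * Real.exp 1 * (R:ℝ)^2 * c ^ R := step4

/-- For `r = r(n) = ⌊z(n,p) − ε⌋` and
`T_{(r,0,0,0)} = [C(n−2r,r)/(n!/(r!·r!·(n−2r)!))]·q^{C(r,2)}`,
one has `r·T_{(r,0,0,0)} → 0` as `n → ∞`. -/
theorem stmt11 (p ε : ℝ) (hp0 : 0 < p) (hp1 : p < 1) (hε : 0 < ε) (hε' : ε < 1/2) :
    Tendsto (fun n : ℕ =>
        (⌊zf p n - ε⌋.toNat : ℝ) *
          ((((n - 2 * ⌊zf p n - ε⌋.toNat).choose ⌊zf p n - ε⌋.toNat : ℝ) /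
            ((n.factorial : ℝ) / ((⌊zf p n - ε⌋.toNat.factorial : ℝ) *
              ⌊zf p n - ε⌋.toNat.factorial * (n - 2 * ⌊zf p n - ε⌋.toNat).factorial))) *
            (p⁻¹) ^ (⌊zf p n - ε⌋.toNat.choose 2)))
      atTop (nhds 0) := by
  have hq : 1 < p⁻¹ := (one_lt_inv₀ hp0).mpr hp1
  have hq0 : (0:ℝ) < p⁻¹ := lt_trans one_pos hq
  have hq1 : (p⁻¹ : ℝ) ≠ 1 := ne_of_gt hq
  have hlq : 0 < Real.log p⁻¹ := Real.log_pos hq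
  set R : ℕ → ℕ := fun n => (⌊zf p n - ε⌋).toNat with hRdef
  have hLtop : Tendsto (fun n : ℕ => Real.logb p⁻¹ n) atTop atTop :=
    (Real.tendsto_logb_atTop hq).comp tendsto_natCast_atTop_atTop
  have hLLtop : Tendsto (fun n : ℕ => Real.logb p⁻¹ (Real.logb p⁻¹ n)) atTop atTop :=
    (Real.tendsto_logb_atTop hq).comp hLtop
  -- logb L ≤ L/2 eventually
  have hlam : ∀ᶠ n : ℕ in atTop,
      Real.logb p⁻¹ (Real.logb p⁻¹ n) ≤ Real.logb p⁻¹ n / 2 := by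
    have hc : (0:ℝ) < Real.log p⁻¹ / 2 := by linarith
    have h1 := Real.isLittleO_log_id_atTop.def hc
    have h2 : ∀ᶠ x : ℝ in atTop, Real.log x ≤ Real.log p⁻¹ / 2 * x := by
      filter_upwards [h1, eventually_ge_atTop (0:ℝ)] with x hx hx0
      have hx' : ‖Real.log x‖ ≤ Real.log p⁻¹ / 2 * ‖x‖ := hx
      rw [Real.norm_eq_abs, Real.norm_eq_abs, abs_of_nonneg hx0] at hx'
      calc Real.log x ≤ |Real.log x| := le_abs_self _
        _ ≤ Real.log p⁻¹ / 2 * x := hx'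
    filter_upwards [hLtop.eventually h2] with n h
    rw [Real.logb, div_le_iff₀ hlq]
    linarith
  -- zf - ε ≥ L + c0
  have hzlow : ∀ᶠ n : ℕ in atTop,
      Real.logb p⁻¹ n + (2 * Real.logb p⁻¹ (Real.exp 1 / 2) + 1 - ε) ≤ zf p n - ε := by
    filter_upwards [hlam] with n h
    simp only [zf]
    linarith
  have hztop : Tendsto (fun n : ℕ => zf p n - ε) atTop atTop :=
    tendsto_atTop_mono' atTop hzlow (tendsto_atTop_add_const_right _ _ hLtop)
  -- floor facts
  have hflr : ∀ᶠ n : ℕ in atTop,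
      1 ≤ R n ∧ (R n : ℝ) ≤ zf p n - ε ∧ zf p n - ε - 1 ≤ (R n : ℝ) := by
    filter_upwards [hztop.eventually_ge_atTop 1] with n h1
    have hfl1 : (1:ℤ) ≤ ⌊zf p n - ε⌋ := Int.le_floor.mpr (by exact_mod_cast h1)
    have hc : ((R n : ℕ) : ℝ) = ((⌊zf p n - ε⌋ : ℤ) : ℝ) := by
      show ((⌊zf p n - ε⌋.toNat : ℕ) : ℝ) = ((⌊zf p n - ε⌋ : ℤ) : ℝ)
      norm_cast
      omega
    refine ⟨?_, ?_, ?_⟩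
    · show 1 ≤ ⌊zf p n - ε⌋.toNat; omega
    · rw [hc]; exact Int.floor_le _
    · rw [hc]; linarith [Int.sub_one_lt_floor (zf p n - ε)]
  -- R → ∞
  have hRcast : Tendsto (fun n : ℕ => ((R n : ℕ) : ℝ)) atTop atTop := by
    apply tendsto_atTop_mono' atTop _
      (tendsto_atTop_add_const_right _ (-1) hztop)
    filter_upwards [hflr] with n h
    have := h.2.2
    linarith
  have hRtop : Tendsto R atTop atTop := tendsto_natCast_atTop_iff.mp hRcast
  -- E2 : R ≤ 2 L
  have hE2 : ∀ᶠ n : ℕ in atTop, (R n : ℝ) ≤ 2 * Real.logb p⁻¹ n := by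
    filter_upwards [hflr,
      hLLtop.eventually_ge_atTop (Real.logb p⁻¹ (Real.exp 1 / 2) + 1/2)] with n h h4
    have h2 := h.2.1
    have hz : zf p n - ε ≤ 2 * Real.logb p⁻¹ n := by
      simp only [zf]
      linarith
    linarith
  -- E3 : 4 R² ≤ n
  have hE3 : ∀ᶠ n : ℕ in atTop, 4 * (R n)^2 ≤ n := by
    have hc : (0:ℝ) < (Real.log p⁻¹)^2/16 := by positivity
    have h1 := (Real.isLittleO_pow_log_id_atTop (n := 2)).def hc
    have h2 : ∀ᶠ x : ℝ in atTop, (Real.log x)^2 ≤ (Real.log p⁻¹)^2/16 * x := by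
      filter_upwards [h1, eventually_ge_atTop (0:ℝ)] with x hx hx0
      have hx' : ‖(Real.log x)^2‖ ≤ (Real.log p⁻¹)^2/16 * ‖id x‖ := hx
      rw [Real.norm_eq_abs, Real.norm_eq_abs, id, abs_of_nonneg hx0] at hx'
      calc (Real.log x)^2 ≤ |(Real.log x)^2| := le_abs_self _
        _ ≤ (Real.log p⁻¹)^2/16 * x := hx'
    filter_upwards [tendsto_natCast_atTop_atTop.eventually h2, hE2,
      hLtop.eventually_ge_atTop 0] with n hlog hr2 hL0
    have hsq : ((R n : ℕ) : ℝ)^2 ≤ (2 * Real.logb p⁻¹ n)^2 :=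
      pow_le_pow_left₀ (by positivity) hr2 2
    have hlb2 : (2 * Real.logb p⁻¹ n)^2 = 4 * (Real.log n)^2/(Real.log p⁻¹)^2 := by
      rw [Real.logb]
      field_simp
      ring
    have hreal : 4 * ((R n : ℕ) : ℝ)^2 ≤ (n:ℝ) := by
      have step : 4 * (Real.log (n:ℝ))^2/(Real.log p⁻¹)^2 ≤ (n:ℝ)/4 := by
        rw [div_le_div_iff₀ (by positivity) (by norm_num)]
        nlinarith [sq_nonneg (Real.log p⁻¹)]
      calc 4 * ((R n : ℕ) : ℝ)^2 ≤ 4 * (4 * (Real.log n)^2/(Real.log p⁻¹)^2) := by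
            rw [← hlb2]; linarith
        _ ≤ 4 * ((n:ℝ)/4) := by linarith
        _ = (n:ℝ) := by ring
    exact_mod_cast hreal
  -- E4
  have hE4 : ∀ᶠ n : ℕ in atTop,
      ((R n : ℕ) : ℝ) * (p⁻¹) ^ ((((R n : ℕ) : ℝ)-1)/2) ≤
        Real.exp 1 * (n:ℝ) * (p⁻¹) ^ (-(ε/2)) := by
    filter_upwards [hflr, hE2, hLtop.eventually_ge_atTop 1,
      eventually_ge_atTop 1] with n h hr2 h5 h6
    obtain ⟨h1, h2, -⟩ := h
    have hrpos : (0:ℝ) < (R n : ℕ) := by exact_mod_cast h1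
    have hnpos : (0:ℝ) < n := by exact_mod_cast h6
    have hLpos : 0 < Real.logb p⁻¹ n := lt_of_lt_of_le one_pos h5
    have hadd : Real.logb p⁻¹ (R n) + (((R n : ℕ) : ℝ)-1)/2 ≤
        Real.logb p⁻¹ (Real.exp 1) + Real.logb p⁻¹ n + (-(ε/2)) := by
      have hA : Real.logb p⁻¹ (R n) ≤
          Real.logb p⁻¹ 2 + Real.logb p⁻¹ (Real.logb p⁻¹ n) := by
        calc Real.logb p⁻¹ (R n) ≤ Real.logb p⁻¹ (2 * Real.logb p⁻¹ n) :=
              Real.logb_le_logb_of_le hq hrpos hr2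
          _ = Real.logb p⁻¹ 2 + Real.logb p⁻¹ (Real.logb p⁻¹ n) :=
              Real.logb_mul two_ne_zero (ne_of_gt hLpos)
      have hB : (((R n : ℕ) : ℝ)-1)/2 ≤ (zf p n - ε - 1)/2 := by linarith
      have hC : Real.logb p⁻¹ (Real.exp 1 / 2) =
          Real.logb p⁻¹ (Real.exp 1) - Real.logb p⁻¹ 2 :=
        Real.logb_div (Real.exp_ne_zero 1) two_ne_zero
      simp only [zf] at hB
      linarith
    have e1 : ((R n : ℕ) : ℝ) * (p⁻¹) ^ ((((R n : ℕ) : ℝ)-1)/2) =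
        (p⁻¹ : ℝ) ^ (Real.logb p⁻¹ (R n) + (((R n : ℕ) : ℝ)-1)/2) := by
      rw [Real.rpow_add hq0, Real.rpow_logb hq0 hq1 hrpos]
    have e2 : Real.exp 1 * (n:ℝ) * (p⁻¹) ^ (-(ε/2)) =
        (p⁻¹ : ℝ) ^ (Real.logb p⁻¹ (Real.exp 1) + Real.logb p⁻¹ n + (-(ε/2))) := by
      rw [Real.rpow_add hq0, Real.rpow_add hq0,
        Real.rpow_logb hq0 hq1 (Real.exp_pos 1), Real.rpow_logb hq0 hq1 hnpos]
    rw [e1, e2]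
    exact (Real.rpow_le_rpow_left_iff hq).mpr hadd
  -- the dominating sequence tends to 0
  have hc1 : 1 < (p⁻¹ : ℝ) ^ (ε/2 : ℝ) :=
    (Real.one_lt_rpow_iff_of_pos hq0).mpr (Or.inl ⟨hq, by linarith⟩)
  have hgten : Tendsto (fun k : ℕ =>
      2 * Real.exp 1 * (k:ℝ)^2 * ((p⁻¹:ℝ) ^ (-(ε/2) : ℝ))^k) atTop (nhds 0) := by
    have h0 := tendsto_pow_const_div_const_pow_of_one_lt 2 hc1
    have heq : (fun k : ℕ => 2 * Real.exp 1 * (k:ℝ)^2 * ((p⁻¹:ℝ) ^ (-(ε/2) : ℝ))^k)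
        = fun k : ℕ => 2 * Real.exp 1 * ((k:ℝ)^2 / ((p⁻¹:ℝ) ^ (ε/2 : ℝ))^k) := by
      funext k
      rw [show (-(ε/2) : ℝ) = -(ε/2) from rfl, Real.rpow_neg hq0.le, inv_pow]
      ring
    rw [heq]
    simpa using h0.const_mul (2 * Real.exp 1)
  have hfinal := hgten.comp hRtop
  apply tendsto_of_tendsto_of_tendsto_of_le_of_le' tendsto_const_nhds hfinal
  · filter_upwards with n
    positivity
  · filter_upwards [hflr, hE3, hE4] with n h h3 h4
    exact key_bound' p⁻¹ hq n (R n) h.1 h3 _ (by positivity) h4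

end
end
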